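/- arXiv:2011.02153 — 9 statements merged into one kernel-verified Lean document; each statement's English description precedes it below -/
import Mathlib

section
/- For any domain G ⊊ ℝⁿ and any points x, y, z ∈ G, the point pair function satisfies p_G(x,y) ≤ √2·(p_G(x,z) + p_G(z,y)); i.e., p_G is a quasi-metric with constant at most √2. -/
open Metric Set

variable {E : Type*} [NormedAddCommGroup E] [NormedSpace ℝ E]

/-- Distance to the boundary of `G`. -/
noncomputable def dG (G : Set E) (x : E) : ℝ := Metric.infDist x (frontier G)

/-- The point pair function `p_G`. -/
noncomputable def pG (G : Set E) (x y : E) : ℝ :=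
  dist x y / Real.sqrt (dist x y ^ 2 + 4 * dG G x * dG G y)

/-- The triangular ratio metric `s_G`. -/
noncomputable def sG (G : Set E) (x y : E) : ℝ :=
  dist x y / ⨅ z : frontier G, (dist x (z : E) + dist (z : E) y)

/-- The `j*_G` metric. -/
noncomputable def jG (G : Set E) (x y : E) : ℝ :=
  dist x y / (dist x y + 2 * min (dG G x) (dG G y))

/-- The set `X̃` of points `x̃` with `|x−x̃| = 2 d_G(x)` whose midpoint with `x` lies on `∂G`. -/
def Xt (G : Set E) (x : E) : Set E :=
  {x' | dist x x' = 2 * dG G x ∧ (2⁻¹ : ℝ) • (x + x') ∈ frontier G}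

/-- The quasi-metric `w_G` defined for convex domains. -/
noncomputable def wG (G : Set E) (x y : E) : ℝ :=
  dist x y / min (Metric.infDist x (Xt G y)) (Metric.infDist y (Xt G x))


lemma p_le_sqrt2_j (a dx dy : ℝ) (ha : 0 ≤ a) (hdx : 0 < dx) (hdy : 0 < dy) :
    a / Real.sqrt (a ^ 2 + 4 * dx * dy) ≤ Real.sqrt 2 * (a / (a + 2 * min dx dy)) := by
  have hm : 0 < min dx dy := lt_min hdx hdy
  have hm1 : min dx dy ≤ dx := min_le_left _ _
  have hm2 : min dx dy ≤ dy := min_le_right _ _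
  have hden : 0 < a + 2 * min dx dy := by linarith
  have hS : 0 < a ^ 2 + 4 * dx * dy := by nlinarith [sq_nonneg a]
  have hsq : 0 < Real.sqrt (a ^ 2 + 4 * dx * dy) := Real.sqrt_pos.2 hS
  have key : a + 2 * min dx dy ≤ Real.sqrt 2 * Real.sqrt (a ^ 2 + 4 * dx * dy) := by
    rw [← Real.sqrt_mul (by norm_num)]
    have h0 : a + 2 * min dx dy = Real.sqrt ((a + 2 * min dx dy) ^ 2) :=
      (Real.sqrt_sq hden.le).symm
    rw [h0]
    apply Real.sqrt_le_sqrt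
    nlinarith [sq_nonneg (a - 2 * min dx dy), mul_le_mul hm1 hm2 hm.le hdx.le]
  rw [div_le_iff₀ hsq]
  have : a / (a + 2 * min dx dy) * (a + 2 * min dx dy) ≤
      a / (a + 2 * min dx dy) * (Real.sqrt 2 * Real.sqrt (a ^ 2 + 4 * dx * dy)) :=
    mul_le_mul_of_nonneg_left key (div_nonneg ha hden.le)
  rw [div_mul_cancel₀ a hden.ne'] at this
  linarith [this]

lemma j_le_p (a dx dy : ℝ) (ha : 0 ≤ a) (hdx : 0 < dx) (hdy : 0 < dy)
    (h1 : dx ≤ dy + a) (h2 : dy ≤ dx + a) :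
    a / (a + 2 * min dx dy) ≤ a / Real.sqrt (a ^ 2 + 4 * dx * dy) := by
  have hm : 0 < min dx dy := lt_min hdx hdy
  have hS : 0 < a ^ 2 + 4 * dx * dy := by nlinarith [sq_nonneg a]
  have hsq : 0 < Real.sqrt (a ^ 2 + 4 * dx * dy) := Real.sqrt_pos.2 hS
  apply div_le_div_of_nonneg_left ha hsq
  have h0 : a + 2 * min dx dy = Real.sqrt ((a + 2 * min dx dy) ^ 2) :=
    (Real.sqrt_sq (by linarith)).symm
  rw [h0]
  apply Real.sqrt_le_sqrt
  rcases le_total dx dy with h | h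
  · rw [min_eq_left h]; nlinarith
  · rw [min_eq_right h]; nlinarith


lemma frac_splitA (b c D1 D2 D3 : ℝ) (hb : 0 ≤ b) (hc : 0 ≤ c)
    (hD1 : 0 < D1) (hD2 : 0 < D2) (hD3 : 0 < D3)
    (h21 : D2 ≤ D1) (h31 : D3 ≤ D1 + b) :
    (b + c) / (b + c + 2 * D1) ≤ b / (b + 2 * D2) + c / (c + 2 * D3) := by
  rw [div_add_div _ _ (by linarith : b + 2 * D2 ≠ 0) (by linarith : c + 2 * D3 ≠ 0),
    div_le_div_iff₀ (by linarith) (by positivity)]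
  nlinarith [mul_nonneg (mul_nonneg hb hc) (by linarith : (0:ℝ) ≤ b + c),
    mul_nonneg (mul_nonneg hb hc) (sub_nonneg.2 h21),
    mul_nonneg (mul_nonneg hb hD3.le) (sub_nonneg.2 h21),
    mul_nonneg (mul_nonneg hc hD2.le) (by linarith : (0:ℝ) ≤ D1 - D3 + b)]

lemma frac_splitB (b c D1 D2 D3 : ℝ) (hb : 0 ≤ b) (hc : 0 ≤ c)
    (hD1 : 0 < D1) (hD2 : 0 < D2) (hD3 : 0 < D3)
    (h31 : D3 ≤ D1) (h21 : D2 ≤ D1 + c) :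
    (b + c) / (b + c + 2 * D1) ≤ b / (b + 2 * D2) + c / (c + 2 * D3) := by
  rw [div_add_div _ _ (by linarith : b + 2 * D2 ≠ 0) (by linarith : c + 2 * D3 ≠ 0),
    div_le_div_iff₀ (by linarith) (by positivity)]
  nlinarith [mul_nonneg (mul_nonneg hb hc) (by linarith : (0:ℝ) ≤ b + c),
    mul_nonneg (mul_nonneg hb hc) (sub_nonneg.2 h31),
    mul_nonneg (mul_nonneg hc hD2.le) (sub_nonneg.2 h31),
    mul_nonneg (mul_nonneg hb hD3.le) (by linarith : (0:ℝ) ≤ D1 - D2 + c)]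

lemma jstar_tri (a b c dx dy dz : ℝ) (ha : 0 ≤ a) (hb : 0 ≤ b) (hc : 0 ≤ c)
    (habc : a ≤ b + c) (hdx : 0 < dx) (hdy : 0 < dy) (hdz : 0 < dz)
    (hzx : dz ≤ dx + b) (hzy : dz ≤ dy + c) :
    a / (a + 2 * min dx dy) ≤ b / (b + 2 * min dx dz) + c / (c + 2 * min dz dy) := by
  have hm1 : 0 < min dx dy := lt_min hdx hdy
  have step1 : a / (a + 2 * min dx dy) ≤ (b + c) / (b + c + 2 * min dx dy) := by
    rw [div_le_div_iff₀ (by linarith) (by linarith)]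
    nlinarith
  refine step1.trans ?_
  rcases le_total dx dy with h1 | h1 <;> rcases le_total dx dz with h2 | h2 <;>
    rcases le_total dz dy with h3 | h3
  · rw [min_eq_left h1, min_eq_left h2, min_eq_left h3]
    exact frac_splitA b c dx dx dz hb hc hdx hdx hdz le_rfl (by linarith)
  · rw [min_eq_left h1, min_eq_left h2, min_eq_right h3]
    exact frac_splitA b c dx dx dy hb hc hdx hdx hdy le_rfl (by linarith)
  · rw [min_eq_left h1, min_eq_right h2, min_eq_left h3]
    exact frac_splitA b c dx dz dz hb hc hdx hdz hdz h2 (by linarith)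
  · rw [min_eq_left h1, min_eq_right h2, min_eq_right h3]
    exact frac_splitA b c dx dz dy hb hc hdx hdz hdy h2 (by linarith)
  · rw [min_eq_right h1, min_eq_left h2, min_eq_left h3]
    exact frac_splitB b c dy dx dz hb hc hdy hdx hdz h3 (by linarith)
  · rw [min_eq_right h1, min_eq_left h2, min_eq_right h3]
    exact frac_splitB b c dy dx dy hb hc hdy hdx hdy le_rfl (by linarith)
  · rw [min_eq_right h1, min_eq_right h2, min_eq_left h3]
    exact frac_splitB b c dy dz dz hb hc hdy hdz hdz h3 (by linarith)
  · rw [min_eq_right h1, min_eq_right h2, min_eq_right h3]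
    exact frac_splitB b c dy dz dy hb hc hdy hdz hdy le_rfl (by linarith)


lemma dG_pos' {n : ℕ} {G : Set (EuclideanSpace ℝ (Fin n))} (hGopen : IsOpen G)
    (hGconn : IsConnected G) (hGne : G ≠ Set.univ) {x : EuclideanSpace ℝ (Fin n)}
    (hx : x ∈ G) : 0 < dG G x := by
  have hfne : (frontier G).Nonempty :=
    nonempty_frontier_iff.2 ⟨hGconn.nonempty, hGne⟩
  have hxf : x ∉ frontier G := by
    rw [hGopen.frontier_eq]
    exact fun h => h.2 hx
  exact (isClosed_frontier.notMem_iff_infDist_pos hfne).1 hxf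

/-- For any domain `G ⊊ ℝⁿ` and points `x, y, z ∈ G`, the point pair function
satisfies `p_G(x,y) ≤ √2 (p_G(x,z) + p_G(z,y))`. -/
theorem pG_quasi_sqrt_two (n : ℕ) (G : Set (EuclideanSpace ℝ (Fin n)))
    (hGopen : IsOpen G) (hGconn : IsConnected G) (hGne : G ≠ Set.univ)
    (x y z : EuclideanSpace ℝ (Fin n)) (hx : x ∈ G) (hy : y ∈ G) (hz : z ∈ G) :
    pG G x y ≤ Real.sqrt 2 * (pG G x z + pG G z y) := by
  have hdx := dG_pos' hGopen hGconn hGne hx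
  have hdy := dG_pos' hGopen hGconn hGne hy
  have hdz := dG_pos' hGopen hGconn hGne hz
  have lip : ∀ u v : EuclideanSpace ℝ (Fin n), dG G u ≤ dG G v + dist u v :=
    fun u v => Metric.infDist_le_infDist_add_dist
  have h1 : pG G x y ≤ Real.sqrt 2 * jG G x y :=
    p_le_sqrt2_j _ _ _ dist_nonneg hdx hdy
  have h2 : jG G x y ≤ jG G x z + jG G z y := by
    have := jstar_tri (dist x y) (dist x z) (dist z y) (dG G x) (dG G y) (dG G z)
      dist_nonneg dist_nonneg dist_nonneg (dist_triangle x z y) hdx hdy hdz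
      (by have := lip z x; rwa [dist_comm z x] at this) (lip z y)
    exact this
  have h3 : jG G x z ≤ pG G x z :=
    j_le_p _ _ _ dist_nonneg hdx hdz
      (by have := lip x z; linarith)
      (by have := lip z x; rw [dist_comm z x] at this; linarith)
  have h4 : jG G z y ≤ pG G z y :=
    j_le_p _ _ _ dist_nonneg hdz hdy
      (by have := lip z y; linarith)
      (by have := lip y z; rw [dist_comm y z] at this; linarith)
  have hs2 : (0:ℝ) ≤ Real.sqrt 2 := Real.sqrt_nonneg 2
  calc pG G x y ≤ Real.sqrt 2 * jG G x y := h1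
    _ ≤ Real.sqrt 2 * (jG G x z + jG G z y) := by nlinarith
    _ ≤ Real.sqrt 2 * (pG G x z + pG G z y) := by nlinarith
end

section
/- In the planar sector S_{π/2} = {x ∈ ℂ : 0 < arg x < π/2}, the points x = e^{πi/5}, y = e^{3πi/10}, z = (x+y)/2 violate the triangle inequality for the point pair function: p(x,y) > p(x,z) + p(z,y). Hence p_{S_{π/2}} is not a metric. -/
open Metric Set

variable {E : Type*} [NormedAddCommGroup E] [NormedSpace ℝ E]

/-- The open planar sector of angle `θ`. -/
def Sector (θ : ℝ) : Set ℂ :=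
  {z | ∃ r : ℝ, 0 < r ∧ ∃ φ : ℝ, 0 < φ ∧ φ < θ ∧ z = (r : ℂ) * Complex.exp (φ * Complex.I)}

/- ### Auxiliary lemmas -/

lemma sector_eq : Sector (Real.pi / 2) = {z : ℂ | 0 < z.re ∧ 0 < z.im} := by
  have hπ := Real.pi_pos
  ext w
  constructor
  · rintro ⟨r, hr, φ, hφ0, hφ2, rfl⟩
    have hcos : 0 < Real.cos φ :=
      Real.cos_pos_of_mem_Ioo ⟨by linarith, hφ2⟩
    have hsin : 0 < Real.sin φ := Real.sin_pos_of_pos_of_lt_pi hφ0 (by linarith)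
    constructor
    · simp only [Set.mem_setOf_eq, Complex.mul_re, Complex.ofReal_re, Complex.ofReal_im,
        Complex.exp_ofReal_mul_I_re, Complex.exp_ofReal_mul_I_im, zero_mul, sub_zero]
      positivity
    · simp only [Set.mem_setOf_eq, Complex.mul_im, Complex.ofReal_re, Complex.ofReal_im,
        Complex.exp_ofReal_mul_I_re, Complex.exp_ofReal_mul_I_im, zero_mul, add_zero]
      positivity
  · rintro ⟨h1, h2⟩
    have hw : w ≠ 0 := by
      intro h; rw [h] at h1; simp at h1
    have harg0 : 0 < w.arg := by
      rcases lt_or_eq_of_le (Complex.arg_nonneg_iff.2 h2.le) with h | h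
      · exact h
      · exact absurd (Complex.arg_eq_zero_iff.1 h.symm).2 (ne_of_gt h2)
    have harg2 : w.arg < Real.pi / 2 :=
      lt_of_le_of_lt (le_abs_self _) (Complex.abs_arg_lt_pi_div_two_iff.2 (Or.inl h1))
    exact ⟨‖w‖, norm_pos_iff.mpr hw, w.arg, harg0, harg2,
      (Complex.norm_mul_exp_arg_mul_I w).symm⟩

lemma quadrant_open : IsOpen {z : ℂ | 0 < z.re ∧ 0 < z.im} :=
  (isOpen_Ioi.preimage Complex.continuous_re).inter (isOpen_Ioi.preimage Complex.continuous_im)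

lemma inv_succ_tendsto :
    Filter.Tendsto (fun n : ℕ => ((((n : ℝ) + 1)⁻¹ : ℝ) : ℂ)) Filter.atTop (nhds ((0 : ℝ) : ℂ)) :=
  (Complex.continuous_ofReal.tendsto _).comp
    (tendsto_one_div_add_atTop_nhds_zero_nat.congr (fun n => by rw [one_div]))

lemma real_axis_mem_frontier {c : ℝ} (hc : 0 < c) :
    (c : ℂ) ∈ frontier {z : ℂ | 0 < z.re ∧ 0 < z.im} := by
  rw [frontier_eq_closure_inter_closure]
  constructor
  · rw [mem_closure_iff_seq_limit]
    refine ⟨fun n => (c : ℂ) + ((((n : ℝ) + 1)⁻¹ : ℝ) : ℂ) * Complex.I, fun n => ?_, ?_⟩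
    · constructor
      · simp [hc]
      · simp only [Set.mem_setOf_eq, Complex.add_im, Complex.ofReal_im, Complex.mul_im,
          Complex.ofReal_re, Complex.I_im, Complex.I_re, mul_zero, mul_one, zero_add, add_zero]
        positivity
    · have := (tendsto_const_nhds (x := (c : ℂ))).add
        (inv_succ_tendsto.mul (tendsto_const_nhds (x := Complex.I)))
      simpa using this
  · apply subset_closure
    simp

lemma imag_axis_mem_frontier {c : ℝ} (hc : 0 < c) :
    (c : ℂ) * Complex.I ∈ frontier {z : ℂ | 0 < z.re ∧ 0 < z.im} := by
  rw [frontier_eq_closure_inter_closure]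
  constructor
  · rw [mem_closure_iff_seq_limit]
    refine ⟨fun n => ((((n : ℝ) + 1)⁻¹ : ℝ) : ℂ) + (c : ℂ) * Complex.I, fun n => ?_, ?_⟩
    · constructor
      · simp only [Set.mem_setOf_eq, Complex.add_re, Complex.ofReal_re, Complex.mul_re,
          Complex.ofReal_im, Complex.I_re, Complex.I_im, mul_zero, zero_mul, sub_zero,
          mul_one, add_zero, zero_sub]
        norm_num
        positivity
      · simp [hc]
    · have := inv_succ_tendsto.add (tendsto_const_nhds (x := (c : ℂ) * Complex.I))
      simpa using this
  · apply subset_closure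
    simp [hc.le, not_lt.2 hc.le]

lemma dG_sector (w : ℂ) (h1 : 0 < w.re) (h2 : 0 < w.im) :
    dG (Sector (Real.pi / 2)) w = min w.re w.im := by
  rw [dG, sector_eq]
  set S := {z : ℂ | 0 < z.re ∧ 0 < z.im} with hS
  have hp1 : (w.re : ℂ) ∈ frontier S := real_axis_mem_frontier h1
  have hp2 : (w.im : ℂ) * Complex.I ∈ frontier S := imag_axis_mem_frontier h2
  apply le_antisymm
  · apply le_min
    · have hle := Metric.infDist_le_dist_of_mem (x := w) hp2
      have hd : dist w ((w.im : ℂ) * Complex.I) = |w.re| := by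
        rw [Complex.dist_eq]
        have e : w - (w.im : ℂ) * Complex.I = (w.re : ℂ) := by
          apply Complex.ext <;> simp
        rw [e, Complex.norm_real, Real.norm_eq_abs]
      rw [hd, abs_of_pos h1] at hle
      exact hle
    · have hle := Metric.infDist_le_dist_of_mem (x := w) hp1
      have hd : dist w ((w.re : ℂ)) = |w.im| := by
        rw [Complex.dist_eq]
        have e : w - (w.re : ℂ) = (w.im : ℂ) * Complex.I := by
          apply Complex.ext <;> simp
        rw [e]
        simp
      rw [hd, abs_of_pos h2] at hle
      exact hle
  · by_contra hlt
    push_neg at hlt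
    rw [Metric.infDist_lt_iff ⟨_, hp1⟩] at hlt
    obtain ⟨v, hv, hdv⟩ := hlt
    have hvnot : v ∉ S := by
      rw [quadrant_open.frontier_eq] at hv
      exact hv.2
    have hcase : v.re ≤ 0 ∨ v.im ≤ 0 := by
      by_contra hb
      push_neg at hb
      exact hvnot ⟨hb.1, hb.2⟩
    have hre : |(w - v).re| ≤ dist w v := by
      rw [Complex.dist_eq]; exact Complex.abs_re_le_norm _
    have him : |(w - v).im| ≤ dist w v := by
      rw [Complex.dist_eq]; exact Complex.abs_im_le_norm _
    rcases hcase with h | h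
    · have h1' : w.re ≤ |(w - v).re| := by
        rw [Complex.sub_re]
        calc w.re ≤ w.re - v.re := by linarith
        _ ≤ |w.re - v.re| := le_abs_self _
      have : min w.re w.im ≤ dist w v := le_trans (min_le_left _ _) (le_trans h1' hre)
      exact absurd hdv (not_lt.2 this)
    · have h1' : w.im ≤ |(w - v).im| := by
        rw [Complex.sub_im]
        calc w.im ≤ w.im - v.im := by linarith
        _ ≤ |w.im - v.im| := le_abs_self _
      have : min w.re w.im ≤ dist w v := le_trans (min_le_right _ _) (le_trans h1' him)
      exact absurd hdv (not_lt.2 this)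

lemma pG_ineq (D a b : ℝ) (hD : 0 < D) (ha : 0 < a)
    (key : 3 * D ^ 2 + 16 * a ^ 2 < 16 * a * b) :
    D / 2 / Real.sqrt ((D / 2) ^ 2 + 4 * a * b) + D / 2 / Real.sqrt ((D / 2) ^ 2 + 4 * b * a)
      < D / Real.sqrt (D ^ 2 + 4 * a * a) := by
  have hba : 4 * b * a = 4 * a * b := by ring
  rw [hba, ← add_div]
  have hE : D / 2 + D / 2 = D := by ring
  rw [hE]
  have h1 : (0 : ℝ) < D ^ 2 + 4 * a * a := by positivity
  have h2 : D ^ 2 + 4 * a * a < (D / 2) ^ 2 + 4 * a * b := by nlinarith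
  have hs1 : 0 < Real.sqrt (D ^ 2 + 4 * a * a) := Real.sqrt_pos.2 h1
  have hs2 : Real.sqrt (D ^ 2 + 4 * a * a) < Real.sqrt ((D / 2) ^ 2 + 4 * a * b) :=
    Real.sqrt_lt_sqrt h1.le h2
  exact div_lt_div_of_pos_left hD hs1 hs2

set_option maxHeartbeats 1600000 in
/-- In the sector `S_{π/2}`, the points `x = e^{πi/5}`, `y = e^{3πi/10}`, `z = (x+y)/2`
violate the triangle inequality for the point pair function. -/
theorem pG_sector_not_metric
    (x y z : ℂ)
    (hx : x = Complex.exp ((Real.pi / 5 : ℝ) * Complex.I))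
    (hy : y = Complex.exp ((3 * Real.pi / 10 : ℝ) * Complex.I))
    (hz : z = (x + y) / 2) :
    pG (Sector (Real.pi / 2)) x z + pG (Sector (Real.pi / 2)) z y
      < pG (Sector (Real.pi / 2)) x y := by
  have hπ := Real.pi_pos
  set c := Real.cos (Real.pi / 5) with hc
  set a := Real.sin (Real.pi / 5) with ha
  have h310 : (3 * Real.pi / 10 : ℝ) = Real.pi / 2 - Real.pi / 5 := by ring
  have hxre : x.re = c := by rw [hx, Complex.exp_ofReal_mul_I_re]
  have hxim : x.im = a := by rw [hx, Complex.exp_ofReal_mul_I_im]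
  have hyre : y.re = a := by
    rw [hy, Complex.exp_ofReal_mul_I_re, h310, Real.cos_pi_div_two_sub]
  have hyim : y.im = c := by
    rw [hy, Complex.exp_ofReal_mul_I_im, h310, Real.sin_pi_div_two_sub]
  have ha0 : 0 < a := Real.sin_pos_of_pos_of_lt_pi (by positivity) (by linarith)
  have hc0 : 0 < c := Real.cos_pos_of_mem_Ioo ⟨by linarith, by linarith⟩
  have hac : a < c := by
    have h1 : a = Real.cos (3 * Real.pi / 10) := by
      rw [h310, Real.cos_pi_div_two_sub]
    rw [h1, hc]
    exact Real.cos_lt_cos_of_nonneg_of_le_pi (by positivity) (by linarith) (by linarith)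
  have h2c : (2 : ℂ) = ((2 : ℝ) : ℂ) := by norm_num
  have hzre : z.re = (c + a) / 2 := by
    rw [hz, h2c, Complex.div_ofReal_re, Complex.add_re, hxre, hyre]
  have hzim : z.im = (c + a) / 2 := by
    rw [hz, h2c, Complex.div_ofReal_im, Complex.add_im, hxim, hyim]
    ring
  have hdx : dG (Sector (Real.pi / 2)) x = a := by
    rw [dG_sector x (by rw [hxre]; exact hc0) (by rw [hxim]; exact ha0), hxre, hxim]
    exact min_eq_right hac.le
  have hdy : dG (Sector (Real.pi / 2)) y = a := by
    rw [dG_sector y (by rw [hyre]; exact ha0) (by rw [hyim]; exact hc0), hyre, hyim]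
    exact min_eq_left hac.le
  have hb0 : (0 : ℝ) < (c + a) / 2 := by positivity
  have hdz : dG (Sector (Real.pi / 2)) z = (c + a) / 2 := by
    rw [dG_sector z (by rw [hzre]; exact hb0) (by rw [hzim]; exact hb0), hzre, hzim, min_self]
  have hxy : x ≠ y := by
    intro h
    rw [h] at hxim
    rw [hxim] at hyim
    exact (ne_of_lt hac) hyim
  have hD0 : 0 < dist x y := dist_pos.2 hxy
  have hDsq : dist x y ^ 2 = 2 * (c - a) ^ 2 := by
    rw [Complex.dist_eq, Complex.sq_norm, Complex.normSq_apply, Complex.sub_re, Complex.sub_im,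
      hxre, hxim, hyre, hyim]
    ring
  have hxz : dist x z = dist x y / 2 := by
    rw [hz, Complex.dist_eq, Complex.dist_eq]
    have e : x - (x + y) / 2 = (x - y) / 2 := by ring
    rw [e, norm_div, Complex.norm_two]
  have hzy : dist z y = dist x y / 2 := by
    rw [hz, Complex.dist_eq, Complex.dist_eq]
    have e : (x + y) / 2 - y = (x - y) / 2 := by ring
    rw [e, norm_div, Complex.norm_two]
  -- the key numerical inequality
  have h5 : Real.sqrt 5 ^ 2 = 5 := Real.sq_sqrt (by norm_num)
  have h5' : (2.2 : ℝ) < Real.sqrt 5 := by nlinarith [Real.sqrt_nonneg 5]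
  have hcv : c = (1 + Real.sqrt 5) / 4 := Real.cos_pi_div_five
  have hc2 : c ^ 2 = (3 + Real.sqrt 5) / 8 := by
    rw [hcv]; linear_combination h5 / 16
  have hc4 : c ^ 4 = (7 + 3 * Real.sqrt 5) / 32 := by
    have e : c ^ 4 = (c ^ 2) ^ 2 := by ring
    rw [e, hc2]; linear_combination h5 / 64
  have hpy : a ^ 2 + c ^ 2 = 1 := by rw [ha, hc]; exact Real.sin_sq_add_cos_sq _
  have hsq : (14 - 8 * c ^ 2) ^ 2 < (20 * a * c) ^ 2 := by nlinarith [hc2, hc4, hpy, h5, h5']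
  have hpos : (0 : ℝ) < 20 * a * c := by positivity
  have key2 : 14 - 8 * c ^ 2 < 20 * a * c := by
    by_contra hcon
    push_neg at hcon
    have := pow_le_pow_left₀ hpos.le hcon 2
    linarith [hsq]
  have key : 3 * dist x y ^ 2 + 16 * a ^ 2 < 16 * a * ((c + a) / 2) := by
    rw [hDsq]; nlinarith [key2, hpy]
  simp only [pG]
  rw [hxz, hzy, hdx, hdy, hdz]
  exact pG_ineq (dist x y) a ((c + a) / 2) hD0 ha0 key
end

section
/- In an open planar sector S_θ = {x ∈ ℂ : 0 < arg x < θ} with π ≤ θ < 2π, the point pair function p_{S_θ} satisfies the triangle inequality, and hence is a metric. -/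
open Metric Set

variable {E : Type*} [NormedAddCommGroup E] [NormedSpace ℝ E]

/-- real inner product on ℂ -/
private def inn (a b : ℂ) : ℝ := a.re * b.re + a.im * b.im

private lemma dist_sq_eq (a b : ℂ) :
    dist a b ^ 2 = (a.re - b.re) ^ 2 + (a.im - b.im) ^ 2 := by
  rw [Complex.dist_eq, Complex.sq_norm, Complex.normSq_apply, Complex.sub_re, Complex.sub_im]
  ring

private lemma inn_le_mul_abs (a b : ℂ) : inn a b ≤ ‖a‖ * ‖b‖ := by
  have h1 : (‖a‖ * ‖b‖) ^ 2
      = inn a b ^ 2 + (a.re * b.im - a.im * b.re) ^ 2 := by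
    rw [mul_pow, Complex.sq_norm, Complex.sq_norm, Complex.normSq_apply, Complex.normSq_apply, inn]
    ring
  nlinarith [mul_nonneg (norm_nonneg a) (norm_nonneg b),
    sq_nonneg (a.re * b.im - a.im * b.re),
    sq_nonneg (‖a‖ * ‖b‖ - inn a b)]

private lemma mono_step {c c' k : ℝ} (hc : 0 ≤ c) (hcc : c ≤ c') (hk : 0 < k) :
    c / Real.sqrt (c ^ 2 + k) ≤ c' / Real.sqrt (c' ^ 2 + k) := by
  have h1 : 0 < Real.sqrt (c ^ 2 + k) := Real.sqrt_pos.2 (by positivity)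
  have h2 : 0 < Real.sqrt (c' ^ 2 + k) := Real.sqrt_pos.2 (by positivity)
  rw [div_le_div_iff₀ h1 h2]
  have e1 : c * Real.sqrt (c' ^ 2 + k) = Real.sqrt (c ^ 2 * (c' ^ 2 + k)) := by
    rw [Real.sqrt_mul (sq_nonneg c), Real.sqrt_sq hc]
  have e2 : c' * Real.sqrt (c ^ 2 + k) = Real.sqrt (c' ^ 2 * (c ^ 2 + k)) := by
    rw [Real.sqrt_mul (sq_nonneg c'), Real.sqrt_sq (hc.trans hcc)]
  rw [e1, e2]
  apply Real.sqrt_le_sqrt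
  have h3 : c ^ 2 ≤ c' ^ 2 := by nlinarith
  nlinarith

private lemma alg_lemma {a b c dx dy dz : ℝ} (ha : 0 ≤ a) (hb : 0 ≤ b) (hc : 0 ≤ c)
    (hdx : 0 < dx) (hdy : 0 < dy) (hdz : 0 < dz)
    (h : 2 * c * dz ≤ a * Real.sqrt (b ^ 2 + 4 * dz * dy) + b * Real.sqrt (a ^ 2 + 4 * dx * dz)) :
    c / Real.sqrt (c ^ 2 + 4 * dx * dy)
      ≤ a / Real.sqrt (a ^ 2 + 4 * dx * dz) + b / Real.sqrt (b ^ 2 + 4 * dz * dy) := by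
  set QA := Real.sqrt (a ^ 2 + 4 * dx * dz) with hQAdef
  set QB := Real.sqrt (b ^ 2 + 4 * dz * dy) with hQBdef
  have hQA : 0 < QA := Real.sqrt_pos.2 (by positivity)
  have hQB : 0 < QB := Real.sqrt_pos.2 (by positivity)
  have hQA2 : QA ^ 2 = a ^ 2 + 4 * dx * dz := Real.sq_sqrt (by positivity)
  have hQB2 : QB ^ 2 = b ^ 2 + 4 * dz * dy := Real.sq_sqrt (by positivity)
  set c' := (a * QB + b * QA) / (2 * dz) with hc'def
  have hc'0 : 0 ≤ c' := by positivity
  have hcc' : c ≤ c' := by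
    rw [hc'def, le_div_iff₀ (by positivity)]
    linarith
  have key : (QA * QB + a * b) ^ 2 = (a * QB + b * QA) ^ 2 + 16 * dx * dy * dz ^ 2 := by
    linear_combination (QB ^ 2 - b ^ 2) * hQA2 + (4 * dx * dz) * hQB2
  have hden : Real.sqrt (c' ^ 2 + 4 * dx * dy) = (QA * QB + a * b) / (2 * dz) := by
    have h3 : c' ^ 2 + 4 * dx * dy = ((QA * QB + a * b) / (2 * dz)) ^ 2 := by
      rw [hc'def, div_pow, div_pow]
      rw [eq_div_iff (by positivity)]
      field_simp
      linear_combination (-(QB ^ 2 - b ^ 2)) * hQA2 - (4 * dx * dz) * hQB2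
    rw [h3, Real.sqrt_sq (by positivity)]
  have step1 : c / Real.sqrt (c ^ 2 + 4 * dx * dy) ≤ c' / Real.sqrt (c' ^ 2 + 4 * dx * dy) :=
    mono_step hc hcc' (by positivity)
  have step2 : c' / Real.sqrt (c' ^ 2 + 4 * dx * dy) = (a * QB + b * QA) / (QA * QB + a * b) := by
    rw [hden, hc'def]
    have hpos : (0:ℝ) < QA * QB + a * b := by positivity
    field_simp
  have step3 : (a * QB + b * QA) / (QA * QB + a * b) ≤ a / QA + b / QB := by
    rw [div_add_div _ _ (ne_of_gt hQA) (ne_of_gt hQB)]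
    rw [div_le_div_iff₀ (by positivity) (by positivity)]
    nlinarith [mul_nonneg (add_nonneg (mul_nonneg ha hQB.le) (mul_nonneg hb hQA.le)) (mul_nonneg ha hb)]
  calc c / Real.sqrt (c ^ 2 + 4 * dx * dy) ≤ c' / Real.sqrt (c' ^ 2 + 4 * dx * dy) := step1
    _ = (a * QB + b * QA) / (QA * QB + a * b) := step2
    _ ≤ a / QA + b / QB := step3

private def ray (c : ℂ) : Set ℂ := {w : ℂ | ∃ t : ℝ, 0 ≤ t ∧ w = (t : ℂ) * c}

private lemma sin_theta_nonpos {θ : ℝ} (hθ₁ : Real.pi ≤ θ) (hθ₂ : θ < 2 * Real.pi) :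
    Real.sin θ ≤ 0 := by
  have h1 : Real.sin (θ - Real.pi) = -Real.sin θ := Real.sin_sub_pi θ
  have h2 : 0 ≤ Real.sin (θ - Real.pi) :=
    Real.sin_nonneg_of_nonneg_of_le_pi (by linarith) (by linarith)
  linarith

private lemma exp_cancel {θ : ℝ} (z : ℂ) :
    z * Complex.exp (-(θ : ℂ) * Complex.I) * Complex.exp ((θ : ℂ) * Complex.I) = z := by
  rw [mul_assoc, ← Complex.exp_add]
  have : -(θ : ℂ) * Complex.I + (θ : ℂ) * Complex.I = 0 := by ring
  rw [this, Complex.exp_zero, mul_one]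

private lemma exp_cancel' {θ : ℝ} (z : ℂ) :
    z * Complex.exp ((θ : ℂ) * Complex.I) * Complex.exp (-(θ : ℂ) * Complex.I) = z := by
  rw [mul_assoc, ← Complex.exp_add]
  have : (θ : ℂ) * Complex.I + -(θ : ℂ) * Complex.I = 0 := by ring
  rw [this, Complex.exp_zero, mul_one]

private lemma im_ofReal_mul_exp (r x : ℝ) :
    ((r : ℂ) * Complex.exp ((x : ℂ) * Complex.I)).im = r * Real.sin x := by
  rw [Complex.mul_im, Complex.exp_ofReal_mul_I_im, Complex.exp_ofReal_mul_I_re]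
  simp

private lemma re_ofReal_mul_exp (r x : ℝ) :
    ((r : ℂ) * Complex.exp ((x : ℂ) * Complex.I)).re = r * Real.cos x := by
  rw [Complex.mul_re, Complex.exp_ofReal_mul_I_im, Complex.exp_ofReal_mul_I_re]
  simp

private lemma add_ofReal_mul_I_im (t a : ℝ) : ((t : ℂ) + (a : ℂ) * Complex.I).im = a := by
  simp

private lemma sub_ofReal_mul_I_im (t a : ℝ) : ((t : ℂ) - (a : ℂ) * Complex.I).im = -a := by
  simp

private lemma neg_theta_cast (θ : ℝ) : (-(θ : ℂ)) = ((-θ : ℝ) : ℂ) := by push_cast; ring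

private lemma mem_sector_iff {θ : ℝ} (hθ₁ : Real.pi ≤ θ) (hθ₂ : θ < 2 * Real.pi) (z : ℂ) :
    z ∈ Sector θ ↔ 0 < z.im ∨ (z * Complex.exp (-(θ : ℂ) * Complex.I)).im < 0 := by
  have hπ := Real.pi_pos
  constructor
  · rintro ⟨r, hr, φ, hφ0, hφθ, rfl⟩
    have him : ((r : ℂ) * Complex.exp ((φ : ℂ) * Complex.I)).im = r * Real.sin φ :=
      im_ofReal_mul_exp r φ
    by_cases hφπ : φ < Real.pi
    · left
      rw [him]
      exact mul_pos hr (Real.sin_pos_of_pos_of_lt_pi hφ0 hφπ)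
    · right
      have hmul : (r : ℂ) * Complex.exp ((φ : ℂ) * Complex.I) * Complex.exp (-(θ : ℂ) * Complex.I)
          = (r : ℂ) * Complex.exp ((↑(φ - θ) : ℂ) * Complex.I) := by
        rw [mul_assoc, ← Complex.exp_add]
        push_cast
        ring_nf
      rw [hmul]
      have him2 : ((r : ℂ) * Complex.exp ((↑(φ - θ) : ℂ) * Complex.I)).im
          = r * Real.sin (φ - θ) := im_ofReal_mul_exp r (φ - θ)
      rw [him2]
      have hs : Real.sin (φ - θ) < 0 :=
        Real.sin_neg_of_neg_of_neg_pi_lt (by linarith) (by push_neg at hφπ; linarith)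
      exact mul_neg_of_pos_of_neg hr hs
  · rintro (h | h)
    · have hz0 : z ≠ 0 := by
        intro h0
        rw [h0] at h
        simp at h
      have habs : 0 < ‖z‖ := norm_pos_iff.mpr hz0
      have hsin : 0 < Real.sin z.arg := by
        rw [Complex.sin_arg]
        positivity
      have harg0 : 0 < z.arg := by
        by_contra hc
        push_neg at hc
        have := Real.sin_nonpos_of_nonpos_of_neg_pi_le hc (Complex.neg_pi_lt_arg z).le
        linarith
      have hargπ : z.arg < Real.pi := by
        rcases lt_or_eq_of_le (Complex.arg_le_pi z) with h' | h'
        · exact h'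
        · rw [h'] at hsin
          simp at hsin
      exact ⟨‖z‖, habs, z.arg, harg0, lt_of_lt_of_le hargπ hθ₁,
        (Complex.norm_mul_exp_arg_mul_I z).symm⟩
    · set u := z * Complex.exp (-(θ : ℂ) * Complex.I) with hu
      have hu0 : u ≠ 0 := by
        intro h0
        rw [h0] at h
        simp at h
      have habs : 0 < ‖u‖ := norm_pos_iff.mpr hu0
      have hsin : Real.sin u.arg < 0 := by
        rw [Complex.sin_arg]
        exact div_neg_of_neg_of_pos h habs
      have harg0 : u.arg < 0 := by
        by_contra hc
        push_neg at hc
        have := Real.sin_nonneg_of_nonneg_of_le_pi hc (Complex.arg_le_pi u)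
        linarith
      refine ⟨‖u‖, habs, u.arg + θ, by linarith [Complex.neg_pi_lt_arg u], by linarith, ?_⟩
      have : (↑(u.arg + θ) : ℂ) * Complex.I = (u.arg : ℂ) * Complex.I + (θ : ℂ) * Complex.I := by
        push_cast
        ring
      rw [this, Complex.exp_add, ← mul_assoc, Complex.norm_mul_exp_arg_mul_I]
      rw [hu]
      exact (exp_cancel z).symm
private lemma sector_eq_s3 {θ : ℝ} (hθ₁ : Real.pi ≤ θ) (hθ₂ : θ < 2 * Real.pi) :
    Sector θ = {z : ℂ | 0 < z.im} ∪
      (fun z : ℂ => z * Complex.exp (-(θ : ℂ) * Complex.I)) ⁻¹' {w : ℂ | w.im < 0} :=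
  Set.ext fun z => (mem_sector_iff hθ₁ hθ₂ z)

private lemma isOpen_sector {θ : ℝ} (hθ₁ : Real.pi ≤ θ) (hθ₂ : θ < 2 * Real.pi) :
    IsOpen (Sector θ) := by
  rw [sector_eq_s3 hθ₁ hθ₂]
  exact (isOpen_lt continuous_const Complex.continuous_im).union
    ((isOpen_lt Complex.continuous_im continuous_const).preimage (continuous_mul_right _))

private lemma frontier_sector {θ : ℝ} (hθ₁ : Real.pi ≤ θ) (hθ₂ : θ < 2 * Real.pi) :
    frontier (Sector θ) = ray 1 ∪ ray (Complex.exp ((θ : ℝ) * Complex.I)) := by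
  have hπ := Real.pi_pos
  have hsinθ := sin_theta_nonpos hθ₁ hθ₂
  have hopen := isOpen_sector hθ₁ hθ₂
  have hcne : Complex.exp (-(θ : ℂ) * Complex.I) ≠ 0 := Complex.exp_ne_zero _
  -- θ = π characterization when sin θ = 0
  have hθπ : Real.sin θ = 0 → θ = Real.pi := by
    intro hs
    obtain ⟨n, hn⟩ := Real.sin_eq_zero_iff.mp hs
    have h1 : (1 : ℝ) ≤ (n : ℝ) := by nlinarith
    have h2 : (n : ℝ) < 2 := by nlinarith
    have hn1 : (1 : ℤ) ≤ n := by exact_mod_cast h1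
    have hn2 : n < 2 := by exact_mod_cast h2
    have hne1 : n = 1 := by omega
    rw [hne1] at hn
    simpa using hn.symm
  have hB : (fun z : ℂ => z * Complex.exp (-(θ : ℂ) * Complex.I))
      = ⇑(Homeomorph.mulRight₀ _ hcne) := rfl
  apply Set.Subset.antisymm
  · intro w hw
    have hwS : w ∉ Sector θ := fun hmem => ((hopen.frontier_eq ▸ hw).2 hmem)
    have hw2 : w ∈ frontier {z : ℂ | 0 < z.im} ∪ frontier
        ((fun z : ℂ => z * Complex.exp (-(θ : ℂ) * Complex.I)) ⁻¹' {w : ℂ | w.im < 0}) := by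
      have h3 := frontier_union_subset {z : ℂ | 0 < z.im}
        ((fun z : ℂ => z * Complex.exp (-(θ : ℂ) * Complex.I)) ⁻¹' {w : ℂ | w.im < 0})
      rw [← sector_eq_s3 hθ₁ hθ₂] at h3
      exact (h3 hw).imp (fun h => h.1) (fun h => h.2)
    rcases hw2 with h | h
    · rw [Complex.frontier_setOf_lt_im] at h
      have h' : w.im = 0 := h
      have hw' : w = (w.re : ℂ) := Complex.ext rfl (by simp [h'])
      rcases le_or_gt 0 w.re with hre | hre
      · exact Or.inl ⟨w.re, hre, by rw [mul_one]; exact hw'⟩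
      · rcases hsinθ.lt_or_eq with hslt | hseq
        · exfalso
          apply hwS
          rw [mem_sector_iff hθ₁ hθ₂]
          right
          rw [hw']
          have h6 : ((w.re : ℂ) * Complex.exp (-(θ : ℂ) * Complex.I)).im
              = w.re * Real.sin (-θ) := by
            rw [neg_theta_cast]
            exact im_ofReal_mul_exp w.re (-θ)
          rw [h6, Real.sin_neg]
          nlinarith
        · have hθeq := hθπ hseq
          right
          refine ⟨-w.re, by linarith, ?_⟩
          rw [hθeq, Complex.exp_pi_mul_I]
          nth_rewrite 1 [hw']
          push_cast
          ring
    · rw [hB, ← Homeomorph.preimage_frontier, Complex.frontier_setOf_im_lt] at h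
      have hu : (w * Complex.exp (-(θ : ℂ) * Complex.I)).im = 0 := h
      set u := w * Complex.exp (-(θ : ℂ) * Complex.I) with hudef
      have h5 : u = (u.re : ℂ) := Complex.ext rfl (by simp [hu])
      have h6 : u * Complex.exp ((θ : ℂ) * Complex.I) = w := by
        rw [hudef]; exact exp_cancel w
      have huw : w = (u.re : ℂ) * Complex.exp ((θ : ℂ) * Complex.I) := by
        rw [← h6]
        exact congrArg (· * Complex.exp ((θ : ℂ) * Complex.I)) h5
      rcases le_or_gt 0 u.re with hre | hre
      · exact Or.inr ⟨u.re, hre, huw⟩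
      · rcases hsinθ.lt_or_eq with hslt | hseq
        · exfalso
          apply hwS
          rw [mem_sector_iff hθ₁ hθ₂]
          left
          rw [huw]
          have h7 : ((u.re : ℂ) * Complex.exp ((θ : ℂ) * Complex.I)).im
              = u.re * Real.sin θ := im_ofReal_mul_exp u.re θ
          rw [h7]
          nlinarith
        · have hθeq := hθπ hseq
          left
          refine ⟨-u.re, by linarith, ?_⟩
          rw [huw, hθeq, Complex.exp_pi_mul_I]
          push_cast
          ring
  · rw [hopen.frontier_eq]
    rintro w (⟨t, ht, rfl⟩ | ⟨t, ht, rfl⟩)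
    · constructor
      · have h0 : Filter.Tendsto (fun n : ℕ => (1 / ((n : ℝ) + 1))) Filter.atTop (nhds 0) :=
          tendsto_one_div_add_atTop_nhds_zero_nat
        have h1 : Filter.Tendsto (fun n : ℕ => ((1 / ((n : ℝ) + 1) : ℝ) : ℂ)) Filter.atTop
            (nhds ((0 : ℝ) : ℂ)) := (Complex.continuous_ofReal.tendsto _).comp h0
        have h2 : Filter.Tendsto
            (fun n : ℕ => (t : ℂ) + ((1 / ((n : ℝ) + 1) : ℝ) : ℂ) * Complex.I)
            Filter.atTop (nhds ((t : ℂ) * 1)) := by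
          have ha : Filter.Tendsto
              (fun n : ℕ => ((1 / ((n : ℝ) + 1) : ℝ) : ℂ) * Complex.I)
              Filter.atTop (nhds (((0 : ℝ) : ℂ) * Complex.I)) := h1.mul tendsto_const_nhds
          have hb : Filter.Tendsto
              (fun n : ℕ => (t : ℂ) + ((1 / ((n : ℝ) + 1) : ℝ) : ℂ) * Complex.I)
              Filter.atTop (nhds ((t : ℂ) + ((0 : ℝ) : ℂ) * Complex.I)) :=
            Filter.Tendsto.add tendsto_const_nhds ha
          simpa using hb
        apply mem_closure_of_tendsto h2
        filter_upwards with n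
        rw [mem_sector_iff hθ₁ hθ₂]
        left
        rw [add_ofReal_mul_I_im t (1 / ((n : ℝ) + 1))]
        positivity
      · rw [mem_sector_iff hθ₁ hθ₂]
        rintro (h | h)
        · simp at h
        · rw [mul_one] at h
          have h6 : ((t : ℂ) * Complex.exp (-(θ : ℂ) * Complex.I)).im
              = t * Real.sin (-θ) := by
            rw [neg_theta_cast]
            exact im_ofReal_mul_exp t (-θ)
          rw [h6, Real.sin_neg] at h
          nlinarith
    · constructor
      · have h0 : Filter.Tendsto (fun n : ℕ => (1 / ((n : ℝ) + 1))) Filter.atTop (nhds 0) :=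
          tendsto_one_div_add_atTop_nhds_zero_nat
        have h1 : Filter.Tendsto (fun n : ℕ => ((1 / ((n : ℝ) + 1) : ℝ) : ℂ)) Filter.atTop
            (nhds ((0 : ℝ) : ℂ)) := (Complex.continuous_ofReal.tendsto _).comp h0
        have h2 : Filter.Tendsto
            (fun n : ℕ => ((t : ℂ) - ((1 / ((n : ℝ) + 1) : ℝ) : ℂ) * Complex.I)
              * Complex.exp ((θ : ℂ) * Complex.I))
            Filter.atTop (nhds ((t : ℂ) * Complex.exp ((θ : ℝ) * Complex.I))) := by
          have ha : Filter.Tendsto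
              (fun n : ℕ => ((1 / ((n : ℝ) + 1) : ℝ) : ℂ) * Complex.I)
              Filter.atTop (nhds (((0 : ℝ) : ℂ) * Complex.I)) := h1.mul tendsto_const_nhds
          have hb : Filter.Tendsto
              (fun n : ℕ => (t : ℂ) - ((1 / ((n : ℝ) + 1) : ℝ) : ℂ) * Complex.I)
              Filter.atTop (nhds ((t : ℂ) - ((0 : ℝ) : ℂ) * Complex.I)) :=
            Filter.Tendsto.sub tendsto_const_nhds ha
          have hc : Filter.Tendsto
              (fun n : ℕ => ((t : ℂ) - ((1 / ((n : ℝ) + 1) : ℝ) : ℂ) * Complex.I)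
                * Complex.exp ((θ : ℂ) * Complex.I))
              Filter.atTop (nhds (((t : ℂ) - ((0 : ℝ) : ℂ) * Complex.I)
                * Complex.exp ((θ : ℂ) * Complex.I))) :=
            Filter.Tendsto.mul hb tendsto_const_nhds
          simpa using hc
        apply mem_closure_of_tendsto h2
        filter_upwards with n
        rw [mem_sector_iff hθ₁ hθ₂]
        right
        rw [exp_cancel']
        rw [sub_ofReal_mul_I_im t (1 / ((n : ℝ) + 1))]
        have : (0:ℝ) < 1 / ((n : ℝ) + 1) := by positivity
        linarith
      · rw [mem_sector_iff hθ₁ hθ₂]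
        rintro (h | h)
        · have h7 : ((t : ℂ) * Complex.exp ((θ : ℂ) * Complex.I)).im
              = t * Real.sin θ := im_ofReal_mul_exp t θ
          rw [h7] at h
          nlinarith
        · rw [exp_cancel'] at h
          simp at h

private lemma mem_frontier_r0 {θ : ℝ} (hθ₁ : Real.pi ≤ θ) (hθ₂ : θ < 2 * Real.pi)
    {t : ℝ} (ht : 0 ≤ t) : (t : ℂ) ∈ frontier (Sector θ) := by
  rw [frontier_sector hθ₁ hθ₂]
  exact Or.inl ⟨t, ht, (mul_one _).symm⟩

private lemma mem_frontier_rθ {θ : ℝ} (hθ₁ : Real.pi ≤ θ) (hθ₂ : θ < 2 * Real.pi)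
    {t : ℝ} (ht : 0 ≤ t) : (t : ℂ) * Complex.exp ((θ : ℝ) * Complex.I) ∈ frontier (Sector θ) := by
  rw [frontier_sector hθ₁ hθ₂]
  exact Or.inr ⟨t, ht, rfl⟩

private lemma frontier_sector_nonempty {θ : ℝ} (hθ₁ : Real.pi ≤ θ) (hθ₂ : θ < 2 * Real.pi) :
    (frontier (Sector θ)).Nonempty :=
  ⟨0, by simpa using mem_frontier_r0 hθ₁ hθ₂ le_rfl⟩

private lemma infDist_frontier_pos {θ : ℝ} (hθ₁ : Real.pi ≤ θ) (hθ₂ : θ < 2 * Real.pi)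
    {z : ℂ} (hz : z ∈ Sector θ) : 0 < infDist z (frontier (Sector θ)) := by
  have h1 : z ∉ frontier (Sector θ) := by
    rw [(isOpen_sector hθ₁ hθ₂).frontier_eq]
    exact fun hc => hc.2 hz
  exact (IsClosed.notMem_iff_infDist_pos isClosed_frontier
    (frontier_sector_nonempty hθ₁ hθ₂)).mp h1

private lemma close_to_ray {θ : ℝ} (hθ₁ : Real.pi ≤ θ) (hθ₂ : θ < 2 * Real.pi)
    {z : ℂ} (hz : z ∈ Sector θ) (h1 : 0 < z.re) (h2 : z.im < 0) :
    ∃ q ∈ frontier (Sector θ), dist z q < -z.im := by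
  have hπ := Real.pi_pos
  obtain ⟨r, hr, φ, hφ0, hφθ, rfl⟩ := hz
  rw [re_ofReal_mul_exp] at h1
  rw [im_ofReal_mul_exp] at h2 ⊢
  have hcos : 0 < Real.cos φ := by
    by_contra hc
    push_neg at hc
    nlinarith
  have hsin : Real.sin φ < 0 := by nlinarith
  have hφgtπ : Real.pi < φ := by
    by_contra hc
    push_neg at hc
    have := Real.sin_nonneg_of_nonneg_of_le_pi hφ0.le hc
    linarith
  have hφgt : 3 * Real.pi / 2 < φ := by
    by_contra hc
    push_neg at hc
    have := Real.cos_nonpos_of_pi_div_two_le_of_le (x := φ) (by linarith) (by linarith)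
    linarith
  set ψ := θ - φ with hψdef
  have hψ0 : 0 < ψ := by simp [hψdef]; linarith
  have hψhalf : ψ < Real.pi / 2 := by
    have : φ < 2 * Real.pi := by linarith
    simp [hψdef]; linarith
  have hcosψ : 0 < Real.cos ψ :=
    Real.cos_pos_of_mem_Ioo ⟨by linarith, hψhalf⟩
  have hsinψ : 0 ≤ Real.sin ψ := Real.sin_nonneg_of_nonneg_of_le_pi hψ0.le (by linarith)
  refine ⟨((r * Real.cos ψ : ℝ) : ℂ) * Complex.exp ((θ : ℝ) * Complex.I),
    mem_frontier_rθ hθ₁ hθ₂ (by positivity), ?_⟩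
  have hzq : (r : ℂ) * Complex.exp ((φ : ℝ) * Complex.I)
      - ((r * Real.cos ψ : ℝ) : ℂ) * Complex.exp ((θ : ℝ) * Complex.I)
      = -Complex.I * ((r * Real.sin ψ : ℝ) : ℂ) * Complex.exp ((θ : ℝ) * Complex.I) := by
    have hφθψ : ((φ : ℝ) : ℂ) * Complex.I = (θ : ℂ) * Complex.I + ((-ψ : ℝ) : ℂ) * Complex.I := by
      push_cast [hψdef]
      ring
    rw [hφθψ, Complex.exp_add]
    have hexp : Complex.exp (((-ψ : ℝ) : ℂ) * Complex.I)
        = ((Real.cos ψ : ℝ) : ℂ) - ((Real.sin ψ : ℝ) : ℂ) * Complex.I := by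
      rw [Complex.exp_mul_I]
      rw [← Complex.ofReal_cos, ← Complex.ofReal_sin]
      rw [Real.cos_neg, Real.sin_neg]
      push_cast
      ring
    rw [hexp]
    push_cast
    ring
  have hdist : dist ((r : ℂ) * Complex.exp ((φ : ℝ) * Complex.I))
      (((r * Real.cos ψ : ℝ) : ℂ) * Complex.exp ((θ : ℝ) * Complex.I)) = r * Real.sin ψ := by
    rw [Complex.dist_eq, hzq]
    rw [norm_mul, norm_mul]
    rw [Complex.norm_exp_ofReal_mul_I, Complex.norm_real]
    simp [abs_of_nonneg (by positivity : (0:ℝ) ≤ r * Real.sin ψ), abs_of_pos hr, abs_of_nonneg hsinψ]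
  rw [hdist]
  have hkey : Real.sin ψ < Real.sin (2 * Real.pi - φ) := by
    apply Real.strictMonoOn_sin ⟨by linarith, by linarith⟩ ⟨by linarith, by linarith⟩
    simp [hψdef]; linarith
  have hsin2π : Real.sin (2 * Real.pi - φ) = -Real.sin φ := by
    rw [Real.sin_sub, Real.sin_two_pi, Real.cos_two_pi]
    ring
  rw [hsin2π] at hkey
  nlinarith

private lemma key_half {θ : ℝ} (hθ₁ : Real.pi ≤ θ) (hθ₂ : θ < 2 * Real.pi)
    {z : ℂ} (hz : z ∈ Sector θ) (t0 : ℝ) (ht0 : 0 ≤ t0)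
    (hmin : ∀ q ∈ frontier (Sector θ), dist z ((t0 : ℝ) : ℂ) ≤ dist z q) :
    ∀ q ∈ frontier (Sector θ), inn (q - ((t0 : ℝ) : ℂ)) (z - ((t0 : ℝ) : ℂ)) ≤ 0 := by
  have hsinθ := sin_theta_nonpos hθ₁ hθ₂
  rcases lt_or_ge 0 z.re with hre | hre
  · -- nearest foot is the orthogonal projection z.re
    have d1 : dist z ((t0 : ℝ) : ℂ) ^ 2 = (z.re - t0) ^ 2 + z.im ^ 2 := by
      rw [dist_sq_eq]; simp
    have d2 : dist z ((z.re : ℝ) : ℂ) ^ 2 = z.im ^ 2 := by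
      rw [dist_sq_eq]; simp
    have hm := hmin _ (mem_frontier_r0 hθ₁ hθ₂ hre.le)
    have hmsq := pow_le_pow_left₀ dist_nonneg hm 2
    rw [d1, d2] at hmsq
    have hsq : (z.re - t0) ^ 2 = 0 := le_antisymm (by linarith) (sq_nonneg _)
    have ht0re : t0 = z.re := by
      have h0 : z.re - t0 = 0 := by
        have := pow_eq_zero_iff (n := 2) (by norm_num) |>.mp hsq
        exact this
      linarith
    have hzim : 0 ≤ z.im := by
      by_contra hc
      push_neg at hc
      obtain ⟨q, hqF, hqd⟩ := close_to_ray hθ₁ hθ₂ hz hre hc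
      have hm2 := hmin q hqF
      have hd : dist z ((t0 : ℝ) : ℂ) = -z.im := by
        have : dist z ((t0 : ℝ) : ℂ) = Real.sqrt (dist z ((t0 : ℝ) : ℂ) ^ 2) :=
          (Real.sqrt_sq dist_nonneg).symm
        rw [this, d1, ht0re]
        simp
        rw [Real.sqrt_sq_eq_abs, abs_of_neg hc]
      linarith
    intro q hq
    rw [frontier_sector hθ₁ hθ₂] at hq
    rcases hq with ⟨t, ht, rfl⟩ | ⟨t, ht, rfl⟩
    · have e6 : (z - ((t0 : ℝ) : ℂ)).re = 0 := by simp [ht0re]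
      have e7 : ((t : ℂ) * 1 - ((t0 : ℝ) : ℂ)).im = 0 := by simp
      simp only [inn, e6, e7, mul_zero, zero_mul, add_zero]
      linarith
    · have e5 : ((t : ℂ) * Complex.exp ((θ : ℝ) * Complex.I) - ((t0 : ℝ) : ℂ)).im
          = t * Real.sin θ := by
        rw [Complex.sub_im, im_ofReal_mul_exp]
        simp
      have e6 : (z - ((t0 : ℝ) : ℂ)).re = 0 := by simp [ht0re]
      have e7 : (z - ((t0 : ℝ) : ℂ)).im = z.im := by simp
      simp only [inn, e5, e6, e7, mul_zero, zero_mul, zero_add]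
      nlinarith [mul_nonneg ht hzim]
  · -- corner case : t0 = 0
    have d1 : dist z ((t0 : ℝ) : ℂ) ^ 2 = (z.re - t0) ^ 2 + z.im ^ 2 := by
      rw [dist_sq_eq]; simp
    have d2 : dist z (((0 : ℝ) : ℂ)) ^ 2 = z.re ^ 2 + z.im ^ 2 := by
      rw [dist_sq_eq]; simp
    have hm := hmin _ (mem_frontier_r0 hθ₁ hθ₂ le_rfl)
    have hmsq := pow_le_pow_left₀ dist_nonneg hm 2
    rw [d1, d2] at hmsq
    have ht00 : t0 = 0 := by
      have h5 : t0 ≤ 0 := by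
        nlinarith [mul_nonpos_of_nonpos_of_nonneg hre ht0]
      linarith
    subst ht00
    set κ := Real.cos θ * z.re + Real.sin θ * z.im with hκ
    have hκle : κ ≤ 0 := by
      by_contra hc
      push_neg at hc
      have hm2 := hmin _ (mem_frontier_rθ hθ₁ hθ₂ hc.le)
      have d3 : dist z ((κ : ℂ) * Complex.exp ((θ : ℝ) * Complex.I)) ^ 2
          = (z.re - κ * Real.cos θ) ^ 2 + (z.im - κ * Real.sin θ) ^ 2 := by
        rw [dist_sq_eq, re_ofReal_mul_exp, im_ofReal_mul_exp]
      have hsq2 := pow_le_pow_left₀ dist_nonneg hm2 2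
      rw [d2, d3] at hsq2
      have hexpand : (z.re - κ * Real.cos θ) ^ 2 + (z.im - κ * Real.sin θ) ^ 2
          = z.re ^ 2 + z.im ^ 2 - 2 * κ * κ + κ ^ 2 * (Real.sin θ ^ 2 + Real.cos θ ^ 2) := by
        rw [hκ]
        ring
      rw [hexpand, Real.sin_sq_add_cos_sq] at hsq2
      nlinarith [mul_pos hc hc]
    intro q hq
    rw [frontier_sector hθ₁ hθ₂] at hq
    rcases hq with ⟨t, ht, rfl⟩ | ⟨t, ht, rfl⟩
    · have e5 : ((t : ℂ) * 1 - ((0 : ℝ) : ℂ)).re = t := by simp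
      have e5' : ((t : ℂ) * 1 - ((0 : ℝ) : ℂ)).im = 0 := by simp
      have e6 : (z - ((0 : ℝ) : ℂ)).re = z.re := by simp
      simp only [inn, e5, e5', e6, zero_mul, add_zero]
      exact mul_nonpos_of_nonneg_of_nonpos ht hre
    · have e5 : ((t : ℂ) * Complex.exp ((θ : ℝ) * Complex.I) - ((0 : ℝ) : ℂ)).im
          = t * Real.sin θ := by rw [Complex.sub_im, im_ofReal_mul_exp]; simp
      have e5' : ((t : ℂ) * Complex.exp ((θ : ℝ) * Complex.I) - ((0 : ℝ) : ℂ)).re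
          = t * Real.cos θ := by rw [Complex.sub_re, re_ofReal_mul_exp]; simp
      have e6 : (z - ((0 : ℝ) : ℂ)).re = z.re := by simp
      have e7 : (z - ((0 : ℝ) : ℂ)).im = z.im := by simp
      simp only [inn, e5, e5', e6, e7]
      have : t * Real.cos θ * z.re + t * Real.sin θ * z.im = t * κ := by rw [hκ]; ring
      rw [this]
      exact mul_nonpos_of_nonneg_of_nonpos ht hκle

private lemma conj_exp_ofReal (x : ℝ) :
    (starRingEnd ℂ) (Complex.exp ((x : ℝ) * Complex.I)) = Complex.exp ((↑(-x) : ℂ) * Complex.I) := by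
  rw [← Complex.exp_conj]
  congr 1
  rw [map_mul, Complex.conj_ofReal, Complex.conj_I]
  push_cast
  ring

private lemma sigma_sector {θ : ℝ} {w : ℂ} (hw : w ∈ Sector θ) :
    (starRingEnd ℂ) w * Complex.exp ((θ : ℝ) * Complex.I) ∈ Sector θ := by
  obtain ⟨r, hr, φ, hφ0, hφθ, rfl⟩ := hw
  refine ⟨r, hr, θ - φ, by linarith, by linarith, ?_⟩
  rw [map_mul, Complex.conj_ofReal, conj_exp_ofReal]
  rw [mul_assoc, ← Complex.exp_add]
  congr 2
  push_cast
  ring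

private lemma sigma_frontier {θ : ℝ} (hθ₁ : Real.pi ≤ θ) (hθ₂ : θ < 2 * Real.pi)
    {w : ℂ} (hw : w ∈ frontier (Sector θ)) :
    (starRingEnd ℂ) w * Complex.exp ((θ : ℝ) * Complex.I) ∈ frontier (Sector θ) := by
  rw [frontier_sector hθ₁ hθ₂] at hw ⊢
  rcases hw with ⟨t, ht, rfl⟩ | ⟨t, ht, rfl⟩
  · right
    exact ⟨t, ht, by rw [map_mul, Complex.conj_ofReal]; simp⟩
  · left
    refine ⟨t, ht, ?_⟩
    rw [map_mul, Complex.conj_ofReal, conj_exp_ofReal]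
    rw [mul_one]
    have : (↑(-θ) : ℂ) * Complex.I = -(θ:ℂ) * Complex.I := by push_cast; ring
    rw [this, exp_cancel]

private lemma sigma_sigma {θ : ℝ} (w : ℂ) :
    (starRingEnd ℂ) ((starRingEnd ℂ) w * Complex.exp ((θ : ℝ) * Complex.I))
      * Complex.exp ((θ : ℝ) * Complex.I) = w := by
  rw [map_mul, Complex.conj_conj, conj_exp_ofReal]
  have : (↑(-θ) : ℂ) * Complex.I = -(θ:ℂ) * Complex.I := by push_cast; ring
  rw [this, exp_cancel]

private lemma sigma_dist {θ : ℝ} (a b : ℂ) :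
    dist ((starRingEnd ℂ) a * Complex.exp ((θ : ℝ) * Complex.I))
      ((starRingEnd ℂ) b * Complex.exp ((θ : ℝ) * Complex.I)) = dist a b := by
  rw [Complex.dist_eq, Complex.dist_eq]
  rw [← sub_mul, ← map_sub]
  rw [norm_mul, Complex.norm_exp_ofReal_mul_I, Complex.norm_conj, mul_one]

private lemma sigma_inn {θ : ℝ} (a b : ℂ) :
    inn ((starRingEnd ℂ) a * Complex.exp ((θ : ℝ) * Complex.I))
      ((starRingEnd ℂ) b * Complex.exp ((θ : ℝ) * Complex.I)) = inn a b := by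
  have h := Real.sin_sq_add_cos_sq θ
  simp only [inn, Complex.mul_re, Complex.mul_im, Complex.conj_re, Complex.conj_im,
    Complex.exp_ofReal_mul_I_re, Complex.exp_ofReal_mul_I_im]
  linear_combination (a.re * b.re + a.im * b.im) * h

private lemma key {θ : ℝ} (hθ₁ : Real.pi ≤ θ) (hθ₂ : θ < 2 * Real.pi)
    {z : ℂ} (hz : z ∈ Sector θ) :
    ∃ p ∈ frontier (Sector θ), dist z p = infDist z (frontier (Sector θ)) ∧
      ∀ q ∈ frontier (Sector θ), inn (q - p) (z - p) ≤ 0 := by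
  have hne : (frontier (Sector θ)).Nonempty :=
    ⟨0, by
      rw [frontier_sector hθ₁ hθ₂]
      exact Or.inl ⟨0, le_rfl, by simp⟩⟩
  obtain ⟨p, hpF, hpd⟩ := isClosed_frontier.exists_infDist_eq_dist hne z
  have hmin : ∀ q ∈ frontier (Sector θ), dist z p ≤ dist z q := fun q hq => by
    rw [← hpd]; exact infDist_le_dist_of_mem hq
  refine ⟨p, hpF, hpd.symm, ?_⟩
  have hpF' := hpF
  rw [frontier_sector hθ₁ hθ₂] at hpF'
  rcases hpF' with ⟨t0, ht0, rfl⟩ | ⟨t0, ht0, rfl⟩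
  · have hmin' : ∀ q ∈ frontier (Sector θ), dist z ((t0 : ℝ) : ℂ) ≤ dist z q := by
      intro q hq
      have := hmin q hq
      rwa [mul_one] at this
    have hres := key_half hθ₁ hθ₂ hz t0 ht0 hmin'
    intro q hq
    have := hres q hq
    rwa [mul_one]
  · -- p on the θ-ray: transport via reflection
    have h10 : (starRingEnd ℂ) ((t0 : ℂ) * Complex.exp ((θ : ℝ) * Complex.I))
        * Complex.exp ((θ : ℝ) * Complex.I) = ((t0 : ℝ) : ℂ) := by
      rw [map_mul, Complex.conj_ofReal, conj_exp_ofReal]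
      have : (↑(-θ) : ℂ) * Complex.I = -(θ:ℂ) * Complex.I := by push_cast; ring
      rw [this, exp_cancel]
    have hmin' : ∀ q ∈ frontier (Sector θ),
        dist ((starRingEnd ℂ) z * Complex.exp ((θ : ℝ) * Complex.I)) ((t0 : ℝ) : ℂ)
          ≤ dist ((starRingEnd ℂ) z * Complex.exp ((θ : ℝ) * Complex.I)) q := by
      intro q hq
      calc dist ((starRingEnd ℂ) z * Complex.exp ((θ : ℝ) * Complex.I)) ((t0 : ℝ) : ℂ)
          = dist ((starRingEnd ℂ) z * Complex.exp ((θ : ℝ) * Complex.I))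
            ((starRingEnd ℂ) ((t0 : ℂ) * Complex.exp ((θ : ℝ) * Complex.I))
              * Complex.exp ((θ : ℝ) * Complex.I)) := by rw [h10]
        _ = dist z ((t0 : ℂ) * Complex.exp ((θ : ℝ) * Complex.I)) := sigma_dist _ _
        _ ≤ dist z ((starRingEnd ℂ) q * Complex.exp ((θ : ℝ) * Complex.I)) :=
            hmin _ (sigma_frontier hθ₁ hθ₂ hq)
        _ = dist ((starRingEnd ℂ) z * Complex.exp ((θ : ℝ) * Complex.I))
            ((starRingEnd ℂ) ((starRingEnd ℂ) q * Complex.exp ((θ : ℝ) * Complex.I))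
              * Complex.exp ((θ : ℝ) * Complex.I)) := (sigma_dist _ _).symm
        _ = dist ((starRingEnd ℂ) z * Complex.exp ((θ : ℝ) * Complex.I)) q := by
            rw [sigma_sigma]
    have hres := key_half hθ₁ hθ₂ (sigma_sector hz) t0 ht0 hmin'
    intro q hq
    have h11 := hres ((starRingEnd ℂ) q * Complex.exp ((θ : ℝ) * Complex.I))
      (sigma_frontier hθ₁ hθ₂ hq)
    rw [← h10] at h11
    have hsub : ∀ a b : ℂ,
        (starRingEnd ℂ) a * Complex.exp ((θ : ℝ) * Complex.I)
          - (starRingEnd ℂ) b * Complex.exp ((θ : ℝ) * Complex.I)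
        = (starRingEnd ℂ) (a - b) * Complex.exp ((θ : ℝ) * Complex.I) := by
      intro a b
      rw [map_sub, sub_mul]
    rw [hsub, hsub, sigma_inn] at h11
    exact h11

/-- In an open sector `S_θ` with `π ≤ θ < 2π`, the point pair function satisfies the
triangle inequality (and hence is a metric). -/
theorem pG_sector_metric (θ : ℝ) (hθ₁ : Real.pi ≤ θ) (hθ₂ : θ < 2 * Real.pi)
    (x y z : ℂ) (hx : x ∈ Sector θ) (hy : y ∈ Sector θ) (hz : z ∈ Sector θ) :
    pG (Sector θ) x y ≤ pG (Sector θ) x z + pG (Sector θ) z y := by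
  have hdx : 0 < dG (Sector θ) x := infDist_frontier_pos hθ₁ hθ₂ hx
  have hdy : 0 < dG (Sector θ) y := infDist_frontier_pos hθ₁ hθ₂ hy
  have hdz : 0 < dG (Sector θ) z := infDist_frontier_pos hθ₁ hθ₂ hz
  obtain ⟨p, hpF, hpd, hsupp⟩ := key hθ₁ hθ₂ hz
  have hpdz : dist z p = dG (Sector θ) z := hpd
  -- inner product bound for points of the sector
  have hInner : ∀ w : ℂ, w ∈ Sector θ →
      inn (w - p) (z - p) ≤ dG (Sector θ) w * dG (Sector θ) z := by
    intro w hw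
    obtain ⟨q, hqF, hqd⟩ := isClosed_frontier.exists_infDist_eq_dist
      (frontier_sector_nonempty hθ₁ hθ₂) w
    have hsplit : inn (w - p) (z - p) = inn (w - q) (z - p) + inn (q - p) (z - p) := by
      simp only [inn, Complex.sub_re, Complex.sub_im]
      ring
    have h1 : inn (w - q) (z - p) ≤ ‖w - q‖ * ‖z - p‖ :=
      inn_le_mul_abs _ _
    have h2 : ‖w - q‖ = dG (Sector θ) w := by
      rw [← Complex.dist_eq, ← hqd]; rfl
    have h3 : ‖z - p‖ = dG (Sector θ) z := by
      rw [← Complex.dist_eq]; exact hpdz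
    have h4 := hsupp q hqF
    rw [hsplit]
    rw [h2, h3] at h1
    linarith
  -- the reflected point
  set zs : ℂ := p + p - z with hzs
  have hrefl : dist z zs = 2 * dG (Sector θ) z := by
    rw [Complex.dist_eq]
    have : z - zs = 2 * (z - p) := by rw [hzs]; ring
    rw [this, norm_mul]
    have h2 : ‖(2:ℂ)‖ = 2 := by norm_num
    rw [h2, ← Complex.dist_eq, hpdz]
  have hball : ∀ w : ℂ, w ∈ Sector θ →
      dist w zs ≤ Real.sqrt (dist w z ^ 2 + 4 * dG (Sector θ) w * dG (Sector θ) z) := by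
    intro w hw
    have hiden : dist w zs ^ 2 = dist w z ^ 2 + 4 * inn (w - p) (z - p) := by
      rw [dist_sq_eq, dist_sq_eq, hzs]
      simp only [inn, Complex.sub_re, Complex.sub_im, Complex.add_re, Complex.add_im]
      ring
    have h5 : dist w zs ^ 2 ≤ dist w z ^ 2 + 4 * dG (Sector θ) w * dG (Sector θ) z := by
      have := hInner w hw
      rw [hiden]
      linarith
    calc dist w zs = Real.sqrt (dist w zs ^ 2) := (Real.sqrt_sq dist_nonneg).symm
      _ ≤ Real.sqrt (dist w z ^ 2 + 4 * dG (Sector θ) w * dG (Sector θ) z) :=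
        Real.sqrt_le_sqrt h5
  -- Ptolemy inequality
  have hptol : dist x y * dist z zs ≤ dist x z * dist y zs + dist z y * dist x zs := by
    rw [Complex.dist_eq, Complex.dist_eq, Complex.dist_eq, Complex.dist_eq, Complex.dist_eq,
      Complex.dist_eq]
    have hiden : (x - y) * (z - zs) = (x - z) * (y - zs) + (z - y) * (x - zs) := by ring
    calc ‖x - y‖ * ‖z - zs‖
        = ‖(x - y) * (z - zs)‖ := (norm_mul _ _).symm
      _ = ‖(x - z) * (y - zs) + (z - y) * (x - zs)‖ := by rw [hiden]
      _ ≤ ‖(x - z) * (y - zs)‖ + ‖(z - y) * (x - zs)‖ :=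
          norm_add_le _ _
      _ = ‖x - z‖ * ‖y - zs‖
          + ‖z - y‖ * ‖x - zs‖ := by rw [norm_mul, norm_mul]
  -- the final star inequality
  have hstar : 2 * dist x y * dG (Sector θ) z
      ≤ dist x z * Real.sqrt (dist z y ^ 2 + 4 * dG (Sector θ) z * dG (Sector θ) y)
        + dist z y * Real.sqrt (dist x z ^ 2 + 4 * dG (Sector θ) x * dG (Sector θ) z) := by
    have hy' : dist y zs ≤ Real.sqrt (dist z y ^ 2 + 4 * dG (Sector θ) z * dG (Sector θ) y) := by
      have := hball y hy
      rw [dist_comm y z] at this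
      calc dist y zs ≤ Real.sqrt (dist z y ^ 2 + 4 * dG (Sector θ) y * dG (Sector θ) z) := this
        _ = Real.sqrt (dist z y ^ 2 + 4 * dG (Sector θ) z * dG (Sector θ) y) := by ring_nf
    have hx' : dist x zs ≤ Real.sqrt (dist x z ^ 2 + 4 * dG (Sector θ) x * dG (Sector θ) z) :=
      hball x hx
    have e1 : 2 * dist x y * dG (Sector θ) z = dist x y * dist z zs := by
      rw [hrefl]; ring
    rw [e1]
    calc dist x y * dist z zs ≤ dist x z * dist y zs + dist z y * dist x zs := hptol
      _ ≤ dist x z * Real.sqrt (dist z y ^ 2 + 4 * dG (Sector θ) z * dG (Sector θ) y)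
          + dist z y * Real.sqrt (dist x z ^ 2 + 4 * dG (Sector θ) x * dG (Sector θ) z) := by
        gcongr
  have halg := alg_lemma (dist_nonneg (x := x) (y := z)) (dist_nonneg (x := z) (y := y))
    (dist_nonneg (x := x) (y := y)) hdx hdy hdz hstar
  simpa [pG] using halg
end

section
/- For every angle 0 < θ < 2π, the point pair function on the sector S_θ is invariant under the Möbius transformation f(x) = x/|x|²: for all x, y ∈ S_θ, p_{S_θ}(f(x), f(y)) = p_{S_θ}(x,y). -/
open Metric Set

variable {E : Type*} [NormedAddCommGroup E] [NormedSpace ℝ E]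

open Pointwise in
private lemma sector_smul_mem' {θ c : ℝ} (hc : 0 < c) {z : ℂ} (hz : z ∈ Sector θ) :
    c • z ∈ Sector θ := by
  obtain ⟨r, hr, φ, hφ1, hφ2, rfl⟩ := hz
  exact ⟨c * r, by positivity, φ, hφ1, hφ2, by push_cast [Complex.real_smul]; ring⟩

open Pointwise in
private lemma sector_smul' {θ c : ℝ} (hc : 0 < c) : c • Sector θ = Sector θ := by
  apply subset_antisymm
  · rintro _ ⟨z, hz, rfl⟩
    exact sector_smul_mem' hc hz
  · intro z hz
    exact ⟨c⁻¹ • z, sector_smul_mem' (by positivity) hz, by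
      simp only [smul_smul, mul_inv_cancel₀ hc.ne', one_smul]⟩

open Pointwise in
private lemma frontier_sector_smul' {θ c : ℝ} (hc : 0 < c) :
    c • frontier (Sector θ) = frontier (Sector θ) := by
  have h := (Homeomorph.smul (Units.mk0 c hc.ne') (α := ℂ)).image_frontier (Sector θ)
  change (fun a => c • a) '' frontier (Sector θ) = frontier ((fun a => c • a) '' Sector θ) at h
  rw [show c • frontier (Sector θ) = (fun a => c • a) '' frontier (Sector θ) from rfl, h,
    show (fun a => c • a) '' Sector θ = c • Sector θ from rfl, sector_smul' hc]

private lemma dG_sector_smul' {θ c : ℝ} (hc : 0 < c) (x : ℂ) :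
    dG (Sector θ) (c • x) = c * dG (Sector θ) x := by
  unfold dG
  conv_lhs => rw [← frontier_sector_smul' (θ := θ) hc]
  rw [infDist_smul₀ hc.ne' _ x, Real.norm_of_nonneg hc.le]

private lemma sector_ne_zero' {θ : ℝ} {z : ℂ} (hz : z ∈ Sector θ) : z ≠ 0 := by
  obtain ⟨r, hr, φ, _, _, rfl⟩ := hz
  exact mul_ne_zero (by exact_mod_cast hr.ne') (Complex.exp_ne_zero _)

private lemma inv_repr' {x : ℂ} (hx : x ≠ 0) :
    x / ((‖x‖ : ℂ) ^ 2) = ((‖x‖) ^ 2)⁻¹ • x := by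
  rw [Complex.real_smul]
  push_cast
  ring

private lemma dist_inversion' (x y : ℂ) (hx : x ≠ 0) (hy : y ≠ 0) :
    dist (x / ((‖x‖ : ℂ) ^ 2)) (y / ((‖y‖ : ℂ) ^ 2))
      = dist x y / (‖x‖ * ‖y‖) := by
  have hcx : (starRingEnd ℂ) x ≠ 0 := by simpa using hx
  have hcy : (starRingEnd ℂ) y ≠ 0 := by simpa using hy
  have h1 : x / ((‖x‖ : ℂ) ^ 2) = ((starRingEnd ℂ) x)⁻¹ := by
    rw [show ((‖x‖ : ℂ) ^ 2) = x * (starRingEnd ℂ) x by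
      rw [Complex.mul_conj]; norm_cast; exact (Complex.sq_norm x).symm ▸ rfl]
    field_simp
  have h2 : y / ((‖y‖ : ℂ) ^ 2) = ((starRingEnd ℂ) y)⁻¹ := by
    rw [show ((‖y‖ : ℂ) ^ 2) = y * (starRingEnd ℂ) y by
      rw [Complex.mul_conj]; norm_cast; exact (Complex.sq_norm y).symm ▸ rfl]
    field_simp
  rw [h1, h2, Complex.dist_eq, Complex.dist_eq,
    inv_sub_inv hcx hcy, norm_div, ← map_sub, norm_mul,
    Complex.norm_conj, Complex.norm_conj, Complex.norm_conj,
    norm_sub_rev y x]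



/-- For `0 < θ < 2π`, the point pair function on `S_θ` is invariant under
`f(x) = x / |x|²`. -/
theorem pG_sector_inversion_invariant (θ : ℝ) (hθ₁ : 0 < θ) (hθ₂ : θ < 2 * Real.pi)
    (x y : ℂ) (hx : x ∈ Sector θ) (hy : y ∈ Sector θ) :
    pG (Sector θ) (x / ((‖x‖ : ℂ) ^ 2)) (y / ((‖y‖ : ℂ) ^ 2))
      = pG (Sector θ) x y := by
  unfold pG
  have hx0 := sector_ne_zero' hx
  have hy0 := sector_ne_zero' hy
  have hax : 0 < ‖x‖ := by simpa using hx0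
  have hay : 0 < ‖y‖ := by simpa using hy0
  set ax := ‖x‖ with hax'
  set ay := ‖y‖ with hay'
  rw [dist_inversion' x y hx0 hy0, inv_repr' hx0, inv_repr' hy0,
    dG_sector_smul' (by positivity) x, dG_sector_smul' (by positivity) y]
  set d := dist x y with hd
  set a := dG (Sector θ) x
  set b := dG (Sector θ) y
  have hkey : (d / (ax * ay)) ^ 2 + 4 * ((ax ^ 2)⁻¹ * a) * ((ay ^ 2)⁻¹ * b)
      = ((ax * ay)⁻¹) ^ 2 * (d ^ 2 + 4 * a * b) := by
    field_simp
  rw [hkey, Real.sqrt_mul (sq_nonneg _), Real.sqrt_sq (by positivity),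
    div_eq_inv_mul d (ax * ay)]
  exact mul_div_mul_left _ _ (by positivity)
end

section
/- If G ⊊ ℝⁿ is a domain such that s_G(x,y) ≥ p_G(x,y) for all x, y ∈ G, then the complement ℝⁿ∖G is a convex (hence connected) set. -/
open Metric Set

variable {E : Type*} [NormedAddCommGroup E] [NormedSpace ℝ E]

open Filter Topology
open scoped RealInnerProductSpace

variable {F : Type*} [NormedAddCommGroup F] [InnerProductSpace ℝ F]

private lemma arith_par {N R c : ℝ} (hp : N * N + c * c = 2 * (R * R + R * R)) :
    N ^ 2 = 4 * R ^ 2 - c ^ 2 := by nlinarith [hp]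

private lemma arith_key {R c Ee : ℝ} (hc : 0 < c) (hR : 0 < R)
    (hE2 : Ee ^ 2 = 4 * R ^ 2 - c ^ 2) (hEnn : 0 ≤ Ee) (hEle : Ee ≤ 2 * R) :
    (c / 4) ^ 2 + (9 / 4) * R ^ 2 < (2 * R - Ee / 4) ^ 2 := by
  have h1 : (2 * R - Ee) * (2 * R + Ee) = c ^ 2 := by linear_combination -1 * hE2
  have h2 : 2 * R + Ee ≤ 4 * R := by linarith
  have h3 : 0 ≤ 2 * R - Ee := by linarith
  have key : c ^ 2 ≤ 4 * R * (2 * R - Ee) := by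
    calc c ^ 2 = (2 * R - Ee) * (2 * R + Ee) := h1.symm
    _ ≤ (2 * R - Ee) * (4 * R) := mul_le_mul_of_nonneg_left h2 h3
    _ = 4 * R * (2 * R - Ee) := by ring
  nlinarith [key, hc, hR]

set_option maxHeartbeats 1000000 in
lemma two_contact_violation {G : Set F} {m z₁ z₂ : F}
    (hz₁ : z₁ ∈ frontier G) (hz₂ : z₂ ∈ frontier G) (hne : z₁ ≠ z₂)
    (hd₁ : dist m z₁ = Metric.infDist m Gᶜ) (hd₂ : dist m z₂ = Metric.infDist m Gᶜ)
    (hdG : dG G m = Metric.infDist m Gᶜ) (hRpos : 0 < Metric.infDist m Gᶜ) :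
    ∃ x ∈ G, ∃ y ∈ G, sG G x y < pG G x y := by
  set R : ℝ := Metric.infDist m Gᶜ with hR
  set c : ℝ := dist z₁ z₂ with hcdef
  have hc : 0 < c := dist_pos.2 hne
  have hcR : c ≤ 2 * R := by
    have := dist_triangle z₁ m z₂
    rw [dist_comm z₁ m] at this
    calc c ≤ dist m z₁ + dist m z₂ := by rw [hcdef]; linarith [dist_triangle z₁ m z₂, dist_comm z₁ m ▸ (rfl : dist z₁ m = dist z₁ m)]
    _ = 2 * R := by rw [hd₁, hd₂]; ring
  set x : F := m + (4⁻¹ : ℝ) • (z₁ - m) with hxdef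
  set y : F := m + (4⁻¹ : ℝ) • (z₂ - m) with hydef
  -- basic distances
  have hnz₁ : ‖z₁ - m‖ = R := by rw [← hd₁, dist_comm, dist_eq_norm]
  have hnz₂ : ‖z₂ - m‖ = R := by rw [← hd₂, dist_comm, dist_eq_norm]
  have hxy : dist x y = c / 4 := by
    rw [dist_eq_norm]
    have : x - y = (4⁻¹ : ℝ) • (z₁ - z₂) := by
      simp only [hxdef, hydef, smul_sub]; abel
    rw [this, norm_smul, hcdef, dist_eq_norm]
    simp; ring
  have hxz₁ : dist x z₁ = 3 / 4 * R := by
    rw [dist_eq_norm]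
    have : x - z₁ = (3 / 4 : ℝ) • (m - z₁) := by
      rw [hxdef]; module
    rw [this, norm_smul]
    rw [show ‖m - z₁‖ = R by rw [← hnz₁, norm_sub_rev]]
    simp [abs_of_nonneg]
  have hyz₂ : dist y z₂ = 3 / 4 * R := by
    rw [dist_eq_norm]
    have : y - z₂ = (3 / 4 : ℝ) • (m - z₂) := by
      rw [hydef]; module
    rw [this, norm_smul]
    rw [show ‖m - z₂‖ = R by rw [← hnz₂, norm_sub_rev]]
    simp [abs_of_nonneg]
  have hxm : dist x m = R / 4 := by
    rw [dist_eq_norm]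
    have : x - m = (4⁻¹ : ℝ) • (z₁ - m) := by rw [hxdef]; abel
    rw [this, norm_smul, hnz₁]; simp; ring
  have hym : dist y m = R / 4 := by
    rw [dist_eq_norm]
    have : y - m = (4⁻¹ : ℝ) • (z₂ - m) := by rw [hydef]; abel
    rw [this, norm_smul, hnz₂]; simp; ring
  have hxG : x ∈ G := by
    by_contra hx
    have : R ≤ dist m x := hR ▸ Metric.infDist_le_dist_of_mem (by exact hx)
    rw [dist_comm, hxm] at this; linarith
  have hyG : y ∈ G := by
    by_contra hy
    have : R ≤ dist m y := hR ▸ Metric.infDist_le_dist_of_mem (by exact hy)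
    rw [dist_comm, hym] at this; linarith
  -- infimum lower bound
  have hfrne : (frontier G).Nonempty := ⟨z₁, hz₁⟩
  haveI : Nonempty (frontier G) := hfrne.to_subtype
  set Ee : ℝ := Real.sqrt (4*R^2 - c^2) with hEdef
  have hE2 : Ee^2 = 4*R^2 - c^2 := Real.sq_sqrt (by nlinarith [hc, hcR, hRpos])
  have hEnn : 0 ≤ Ee := Real.sqrt_nonneg _
  have hEle : Ee ≤ 2*R := by
    have h1 : (4*R^2 - c^2) ≤ (2*R)^2 := by nlinarith [hc]
    calc Ee ≤ Real.sqrt ((2*R)^2) := Real.sqrt_le_sqrt h1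
    _ = 2*R := Real.sqrt_sq (by linarith)
  set w : F := m + (8⁻¹ : ℝ) • ((z₁ - m) + (z₂ - m)) with hwdef
  have hmw : dist m w = Ee / 8 := by
    rw [dist_eq_norm]
    have h1 : m - w = (-(8⁻¹) : ℝ) • ((z₁ - m) + (z₂ - m)) := by rw [hwdef]; module
    have hpar : ‖(z₁ - m) + (z₂ - m)‖^2 = 4*R^2 - c^2 := by
      have hp := parallelogram_law_with_norm ℝ (z₁ - m) (z₂ - m)
      have h2 : (z₁ - m) - (z₂ - m) = z₁ - z₂ := by abel
      have h3 : ‖z₁ - z₂‖ = c := by rw [hcdef, dist_eq_norm]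
      rw [h2, hnz₁, hnz₂, h3] at hp
      exact arith_par (by linarith [hp])
    have h4 : ‖(z₁-m)+(z₂-m)‖ = Ee := by
      rw [hEdef, ← hpar]
      exact (Real.sqrt_sq (norm_nonneg _)).symm
    rw [h1, norm_smul, h4]; simp; ring
  set I₀ : ℝ := 2*R - Ee/4 with hI₀def
  have hI₀pos : 0 < I₀ := by rw [hI₀def]; linarith
  have hinf : I₀ ≤ ⨅ z : frontier G, (dist x (z : F) + dist (z : F) y) := by
    apply le_ciInf
    intro z
    have hz : (z : F) ∈ frontier G := z.2
    have hRz : R ≤ dist m (z : F) := by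
      have := Metric.infDist_le_dist_of_mem (s := frontier G) (x := m) hz
      rw [dG, hR] at hdG
      linarith [hdG ▸ this]
    have hsum : 2 * dist w (z : F) ≤ dist x (z : F) + dist (z : F) y := by
      have hxy2 : x + y - 2 • (z : F) = (x - z) + (y - z) := by module
      have h5 : ‖(x - (z:F)) + (y - (z:F))‖ ≤ ‖x - (z:F)‖ + ‖y - (z:F)‖ := norm_add_le _ _
      have h6 : (x - (z:F)) + (y - (z:F)) = (2:ℝ) • (w - (z:F)) := by
        rw [hwdef, hxdef, hydef]; module
      rw [h6, norm_smul] at h5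
      rw [dist_eq_norm, dist_eq_norm, dist_eq_norm (z:F) y, norm_sub_rev (z:F) y]
      simpa using h5
    have htri : dist m (z : F) - dist m w ≤ dist w (z:F) := by
      have := dist_triangle m w (z : F); linarith
    rw [hmw] at htri
    have hWz : R - Ee/8 ≤ dist w (z:F) := by linarith
    calc I₀ = 2 * (R - Ee/8) := by rw [hI₀def]; ring
    _ ≤ 2 * dist w (z:F) := by linarith
    _ ≤ dist x (z:F) + dist (z:F) y := hsum
  -- upper bound for s
  have hiInfpos : 0 < ⨅ z : frontier G, (dist x (z : F) + dist (z : F) y) := lt_of_lt_of_le hI₀pos hinf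
  have hsle : sG G x y ≤ (c/4) / I₀ := by
    rw [sG, hxy]
    exact div_le_div_of_nonneg_left (by linarith) hI₀pos hinf
  -- lower bound for p
  have hdx : dG G x ≤ 3/4 * R := by
    rw [dG]
    calc Metric.infDist x (frontier G) ≤ dist x z₁ := Metric.infDist_le_dist_of_mem hz₁
    _ = 3/4 * R := hxz₁
  have hdy : dG G y ≤ 3/4 * R := by
    rw [dG]
    calc Metric.infDist y (frontier G) ≤ dist y z₂ := Metric.infDist_le_dist_of_mem hz₂
    _ = 3/4 * R := hyz₂
  have hdx0 : 0 ≤ dG G x := Metric.infDist_nonneg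
  have hdy0 : 0 ≤ dG G y := Metric.infDist_nonneg
  set D : ℝ := Real.sqrt ((c/4)^2 + (9/4)*R^2) with hDdef
  have hc16 : 0 < (c/4)^2 := by positivity
  have hR94 : 0 ≤ (9/4)*R^2 := by positivity
  have hDpos : 0 < D := Real.sqrt_pos.2 (by linarith)
  have hD2 : D^2 = (c/4)^2 + (9/4)*R^2 := Real.sq_sqrt (by linarith)
  have hprod : dG G x * dG G y ≤ (3/4*R) * (3/4*R) :=
    mul_le_mul hdx hdy hdy0 (by linarith)
  have hprod0 : 0 ≤ dG G x * dG G y := mul_nonneg hdx0 hdy0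
  have hWle : (c/4)^2 + 4 * dG G x * dG G y ≤ (c/4)^2 + (9/4)*R^2 := by
    nlinarith [hprod]
  have hWpos : 0 < (c/4)^2 + 4 * dG G x * dG G y := by
    nlinarith [hprod0]
  have hsqrtpos : 0 < Real.sqrt ((c/4)^2 + 4 * dG G x * dG G y) := Real.sqrt_pos.2 hWpos
  have hsqrtle : Real.sqrt ((c/4)^2 + 4 * dG G x * dG G y) ≤ D := by
    rw [hDdef]; exact Real.sqrt_le_sqrt hWle
  have hple : (c/4) / D ≤ pG G x y := by
    rw [pG, hxy]
    exact div_le_div_of_nonneg_left (by linarith) hsqrtpos hsqrtle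
  -- strict comparison
  have hDI : D < I₀ := by
    have hsq : D^2 < I₀^2 := by
      rw [hD2, hI₀def]
      exact arith_key hc hRpos hE2 hEnn hEle
    exact lt_of_pow_lt_pow_left₀ 2 (le_of_lt hI₀pos) hsq
  have hmid : (c/4) / I₀ < (c/4) / D := div_lt_div_of_pos_left (by linarith) hDpos hDI
  exact ⟨x, hxG, y, hyG, lt_of_le_of_lt hsle (lt_of_lt_of_le hmid hple)⟩

lemma nearest_frontier {G : Set F} {x w : F} (hx : x ∈ G) (hw : w ∈ Gᶜ)
    (hd : dist x w = Metric.infDist x Gᶜ) : w ∈ frontier G := by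
  have hxw : x ≠ w := fun h => hw (h ▸ hx)
  have hD : 0 < dist x w := dist_pos.2 hxw
  rw [frontier_eq_closure_inter_closure]
  refine ⟨?_, subset_closure hw⟩
  rw [Metric.mem_closure_iff]
  intro ε hε
  set τ : ℝ := min (1/2) (ε / (2 * dist x w)) with hτdef
  have hτpos : 0 < τ := lt_min (by norm_num) (by positivity)
  have hτle : τ ≤ 1/2 := min_le_left _ _
  have hτε : τ * dist x w ≤ ε / 2 := by
    have : τ ≤ ε / (2 * dist x w) := min_le_right _ _
    calc τ * dist x w ≤ (ε / (2 * dist x w)) * dist x w := by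
          exact mul_le_mul_of_nonneg_right this (le_of_lt hD)
    _ = ε / 2 := by field_simp
  refine ⟨x + (1 - τ) • (w - x), ?_, ?_⟩
  · -- in G
    by_contra hg
    have hgc : x + (1 - τ) • (w - x) ∈ Gᶜ := hg
    have h1 : dist x (x + (1 - τ) • (w - x)) = (1 - τ) * dist x w := by
      rw [dist_eq_norm]
      have : x - (x + (1 - τ) • (w - x)) = (1 - τ) • (x - w) := by module
      rw [this, norm_smul, Real.norm_eq_abs, abs_of_nonneg (by linarith : (0:ℝ) ≤ 1 - τ),
        ← dist_eq_norm]
    have h2 : Metric.infDist x Gᶜ ≤ (1 - τ) * dist x w := h1 ▸ Metric.infDist_le_dist_of_mem hgc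
    rw [← hd] at h2
    nlinarith
  · -- close to w
    have : dist w (x + (1 - τ) • (w - x)) = τ * dist x w := by
      rw [dist_eq_norm]
      have : w - (x + (1 - τ) • (w - x)) = τ • (w - x) := by module
      rw [this, norm_smul, Real.norm_eq_abs, abs_of_nonneg (le_of_lt hτpos), ← dist_eq_norm,
        dist_comm w x]
    rw [this]
    linarith

variable [ProperSpace F]

set_option maxHeartbeats 1000000 in
lemma exists_two_nearest {K : Set F} (hK : IsClosed K) {p q m₀ : F} {a b : ℝ}
    (hp : p ∈ K) (hq : q ∈ K) (ha : 0 ≤ a) (hb : 0 ≤ b) (hab : a + b = 1)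
    (hmdef : m₀ = a • p + b • q) (hm₀ : m₀ ∉ K) :
    ∃ x : F, ∃ w₁ ∈ K, ∃ w₂ ∈ K,
      w₁ ≠ w₂ ∧ dist x w₁ = Metric.infDist x K ∧ dist x w₂ = Metric.infDist x K := by
  by_contra hcon
  push_neg at hcon
  have hKne : K.Nonempty := ⟨p, hp⟩
  have hnex : ∀ x : F, ∃ z ∈ K, Metric.infDist x K = dist x z := fun x =>
    hK.exists_infDist_eq_dist hKne x
  choose P hPmem hPdist using hnex
  have huniq : ∀ x : F, ∀ w ∈ K, dist x w = Metric.infDist x K → w = P x := by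
    intro x w hw hdw
    by_contra hne
    exact (hcon x w hw (P x) (hPmem x) hne hdw) (hPdist x).symm
  -- continuity of P
  have hPcont : ∀ x : F, ContinuousAt P x := by
    intro x
    rw [Metric.continuousAt_iff]
    by_contra hc
    push_neg at hc
    obtain ⟨ε, hε, hbad⟩ := hc
    have hsel : ∀ k : ℕ, ∃ y : F, dist y x < 1 / (k + 1) ∧ ε ≤ dist (P y) (P x) := by
      intro k
      obtain ⟨y, hy1, hy2⟩ := hbad (1 / (k + 1)) (by positivity)
      exact ⟨y, hy1, hy2⟩
    choose y hy1 hy2 using hsel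
    have hyx : Tendsto y atTop (𝓝 x) := by
      rw [tendsto_iff_dist_tendsto_zero]
      apply squeeze_zero (fun k => dist_nonneg) (fun k => le_of_lt (hy1 k))
      exact tendsto_one_div_add_atTop_nhds_zero_nat
    have hyb : ∀ k, dist (y k) x ≤ 1 := fun k => le_of_lt ((hy1 k).trans_le (by
      rw [div_le_one (by positivity)]; exact le_add_of_nonneg_left (Nat.cast_nonneg k)))
    set M : ℝ := Metric.infDist x K + 2
    have hball : ∀ k, P (y k) ∈ closedBall x M := by
      intro k
      rw [mem_closedBall]
      have h1 : dist (y k) (P (y k)) = Metric.infDist (y k) K := (hPdist (y k)).symm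
      have h2 : Metric.infDist (y k) K ≤ Metric.infDist x K + dist (y k) x :=
        Metric.infDist_le_infDist_add_dist
      have h3 : dist (P (y k)) x ≤ dist (P (y k)) (y k) + dist (y k) x := dist_triangle _ _ _
      rw [dist_comm (P (y k)) (y k)] at h3
      have := hyb k
      simp only [M]
      linarith
    obtain ⟨w, hwmem, φ, hφmono, hφtend⟩ :=
      (isCompact_closedBall x M).tendsto_subseq hball
    have hyφ : Tendsto (fun k => y (φ k)) atTop (𝓝 x) := hyx.comp hφmono.tendsto_atTop
    have hwK : w ∈ K := hK.mem_of_tendsto hφtend (Eventually.of_forall (fun k => hPmem _))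
    have hdlim : Tendsto (fun k => dist (y (φ k)) (P (y (φ k)))) atTop (𝓝 (dist x w)) :=
      hyφ.dist hφtend
    have hinflim : Tendsto (fun k => Metric.infDist (y (φ k)) K) atTop
        (𝓝 (Metric.infDist x K)) :=
      ((Metric.continuous_infDist_pt K).tendsto x).comp hyφ
    have hdw : dist x w = Metric.infDist x K := by
      apply tendsto_nhds_unique _ hinflim
      convert hdlim using 2 with k
      exact (hPdist (y (φ k)))
    have hwPx : w = P x := huniq x w hwK hdw
    have h3 : Tendsto (fun k => dist (P (y (φ k))) (P x)) atTop (𝓝 (dist w (P x))) :=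
      hφtend.dist tendsto_const_nhds
    rw [hwPx, dist_self] at h3
    have : ε ≤ 0 := ge_of_tendsto h3 (Eventually.of_forall (fun k => hy2 (φ k)))
    linarith
  -- convex-analytic part
  set dd : F → ℝ := fun z => Metric.infDist z K with hdd
  clear_value dd
  set φf : F → ℝ := fun z => (‖z‖^2 - dd z^2)/2 with hφf
  clear_value φf
  have hminor : ∀ (z k : F), k ∈ K → ⟪z, k⟫ - ‖k‖^2/2 ≤ φf z := by
    intro z k hk
    have h1 : dd z ≤ dist z k := by rw [hdd]; exact Metric.infDist_le_dist_of_mem hk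
    have h0 : (0:ℝ) ≤ dd z := by rw [hdd]; exact Metric.infDist_nonneg
    have h2 : dd z^2 ≤ dist z k^2 := pow_le_pow_left₀ h0 h1 2
    have h3 : dist z k^2 = ‖z‖^2 - 2*⟪z,k⟫ + ‖k‖^2 := by
      rw [dist_eq_norm, @norm_sub_sq_real]
    simp only [hφf]
    linarith [h2, h3]
  have hφeq : ∀ z : F, φf z = ⟪z, P z⟫ - ‖P z‖^2/2 := by
    intro z
    have h3 : dist z (P z)^2 = ‖z‖^2 - 2*⟪z, P z⟫ + ‖P z‖^2 := by
      rw [dist_eq_norm, @norm_sub_sq_real]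
    simp only [hφf, hdd]
    rw [hPdist z, h3]
    ring
  have hδpos0 : 0 < dd m₀ := by
    rw [hdd]; exact (hK.notMem_iff_infDist_pos hKne).1 hm₀
  set δ : ℝ := dd m₀ with hδ
  clear_value δ
  have hδpos : 0 < δ := hδ ▸ hδpos0
  set c₀ : ℝ := a*‖p‖^2/2 + b*‖q‖^2/2 with hc₀
  clear_value c₀
  have hc₀nn : 0 ≤ c₀ := hc₀ ▸ (by positivity)
  set A : ℝ := 2*(|φf m₀| + ‖m₀‖^2 + c₀) + 1 with hA
  clear_value A
  have hApos : 0 < A := by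
    rw [hA]
    have := abs_nonneg (φf m₀)
    have := sq_nonneg ‖m₀‖
    linarith
  set ε : ℝ := min 1 (δ^2/(2*A)) with hε
  clear_value ε
  have hquot : 0 < δ^2/(2*A) := div_pos (pow_pos hδpos 2) (by linarith)
  have hεpos : 0 < ε := hε ▸ lt_min one_pos hquot
  have hε1 : ε ≤ 1 := hε ▸ min_le_left _ _
  have hεA : ε ≤ δ^2/(2*A) := hε ▸ min_le_right _ _
  set θ : F → ℝ := fun z => φf z - ⟪m₀, z⟫ + ε*‖z‖^2/2 with hθ
  clear_value θ
  have hlow : ∀ z : F, ε*‖z‖^2/2 - c₀ ≤ θ z := by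
    intro z
    have h1 := hminor z p hp
    have h2 := hminor z q hq
    have h3 : ⟪m₀, z⟫ = a*⟪z,p⟫ + b*⟪z,q⟫ := by
      rw [hmdef, inner_add_left, real_inner_smul_left, real_inner_smul_left,
        real_inner_comm p z, real_inner_comm q z]
    have h4 : a*(⟪z,p⟫ - ‖p‖^2/2) ≤ a*φf z := mul_le_mul_of_nonneg_left h1 ha
    have h5 : b*(⟪z,q⟫ - ‖q‖^2/2) ≤ b*φf z := mul_le_mul_of_nonneg_left h2 hb
    have h6 : a*φf z + b*φf z = φf z := by linear_combination (φf z) * hab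
    simp only [hθ]
    rw [hc₀]
    linarith [h3, h4, h5, h6]
  have hθcont : Continuous θ := by
    simp only [hθ, hφf, hdd]
    apply Continuous.add
    · apply Continuous.sub
      · exact ((continuous_norm.pow 2).sub ((Metric.continuous_infDist_pt K).pow 2)).div_const 2
      · exact continuous_const.inner continuous_id
    · exact (continuous_const.mul (continuous_norm.pow 2)).div_const 2
  -- existence of a global minimizer
  set T : ℝ := |θ m₀| + c₀ + 1 with hT
  clear_value T
  have hTpos : 0 < T := by
    rw [hT]; have := abs_nonneg (θ m₀); linarith
  set ρ : ℝ := max 1 (max ‖m₀‖ (2*T/ε)) with hρ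
  clear_value ρ
  have hρ1 : (1:ℝ) ≤ ρ := hρ ▸ le_max_left _ _
  have hρm : ‖m₀‖ ≤ ρ := hρ ▸ le_trans (le_max_left _ _) (le_max_right _ _)
  have hρ2 : 2*T/ε ≤ ρ := hρ ▸ le_trans (le_max_right _ _) (le_max_right _ _)
  have hρ2' : 2*T ≤ ε*ρ := by
    rw [div_le_iff₀ hεpos] at hρ2; linarith
  have hm₀mem : m₀ ∈ closedBall (0:F) ρ := by
    simpa [mem_closedBall, dist_zero_right] using hρm
  obtain ⟨xb, hxbmem, hxbmin⟩ := (isCompact_closedBall (0:F) ρ).exists_isMinOn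
    ⟨m₀, hm₀mem⟩ hθcont.continuousOn
  have hminm₀ : θ xb ≤ θ m₀ := hxbmin hm₀mem
  have hglobal : ∀ z : F, θ xb ≤ θ z := by
    intro z
    by_cases hz : z ∈ closedBall (0:F) ρ
    · exact hxbmin hz
    · have hzρ : ρ < ‖z‖ := by
        simpa [mem_closedBall, dist_zero_right, not_le] using hz
      have hρpos : (0:ℝ) < ρ := lt_of_lt_of_le one_pos hρ1
      have hρz : ρ^2 ≤ ‖z‖^2 := pow_le_pow_left₀ (le_of_lt hρpos) (le_of_lt hzρ) 2
      have h1 : ε*ρ^2/2 - c₀ ≤ ε*‖z‖^2/2 - c₀ := by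
        have := mul_le_mul_of_nonneg_left hρz (le_of_lt hεpos)
        linarith
      have h2 : θ m₀ < ε*ρ^2/2 - c₀ := by
        have h7 : ε*ρ*1 ≤ ε*ρ*ρ := mul_le_mul_of_nonneg_left hρ1 (by positivity)
        have h8 := le_abs_self (θ m₀)
        rw [hT] at hρ2'
        linarith [hρ2', h7, h8]
      linarith [hlow z]
  have hlocmin : IsLocalMin θ xb := Filter.Eventually.of_forall hglobal
  -- derivative of θ at xb
  set v : F := P xb - m₀ + ε • xb with hv
  clear_value v
  have hderiv : HasFDerivAt θ (innerSL ℝ v) xb := by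
    rw [hasFDerivAt_iff_isLittleO_nhds_zero, Asymptotics.isLittleO_iff]
    intro C hC
    have htd : Tendsto (fun h : F => P (xb + h)) (𝓝 0) (𝓝 (P xb)) := by
      have h1 : Tendsto (fun h : F => xb + h) (𝓝 0) (𝓝 xb) := by
        have hcont : Continuous (fun h : F => xb + h) := by continuity
        simpa using hcont.tendsto (0:F)
      have := Filter.Tendsto.comp (hPcont xb) h1
      exact this
    have hev1 : ∀ᶠ h : F in 𝓝 0, dist (P (xb + h)) (P xb) < C/2 :=
      (Metric.tendsto_nhds.mp htd) (C/2) (half_pos hC)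
    have hev2 : ∀ᶠ h : F in 𝓝 0, ‖h‖ < C/ε := by
      have := Metric.ball_mem_nhds (0:F) (show 0 < C/ε by positivity)
      filter_upwards [this] with h hh
      simpa [mem_ball_zero_iff] using hh
    filter_upwards [hev1, hev2] with h h1 h2
    have hφlow : φf xb + ⟪h, P xb⟫ ≤ φf (xb+h) := by
      have := hminor (xb+h) (P xb) (hPmem xb)
      rw [inner_add_left] at this
      rw [hφeq xb]
      linarith
    have hφup : φf (xb+h) ≤ φf xb + ⟪h, P (xb+h)⟫ := by
      have := hminor xb (P (xb+h)) (hPmem (xb+h))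
      rw [hφeq (xb+h), inner_add_left]
      linarith
    have hnorm : ‖xb+h‖^2 = ‖xb‖^2 + 2*⟪xb,h⟫ + ‖h‖^2 := by
      rw [@norm_add_sq_real]
    have hvin : ⟪v, h⟫ = ⟪P xb, h⟫ - ⟪m₀, h⟫ + ε*⟪xb, h⟫ := by
      rw [hv, inner_add_left, inner_sub_left, real_inner_smul_left]
    have hinm : ⟪m₀, xb + h⟫ = ⟪m₀, xb⟫ + ⟪m₀, h⟫ := inner_add_right _ _ _
    set e : ℝ := θ (xb + h) - θ xb - (innerSL ℝ v) h with he
    have heval : (innerSL ℝ v) h = ⟪v, h⟫ := rfl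
    have hee : e = (φf (xb+h) - φf xb - ⟪h, P xb⟫) + ε*‖h‖^2/2 := by
      rw [he, heval, hvin]
      simp only [hθ]
      rw [hnorm, hinm, real_inner_comm h (P xb)]
      ring
    have helow : ε*‖h‖^2/2 ≤ e := by rw [hee]; linarith [hφlow]
    have heup : e ≤ ⟪h, P (xb+h) - P xb⟫ + ε*‖h‖^2/2 := by
      rw [hee, inner_sub_right]
      linarith [hφup]
    have hcs : ⟪h, P (xb+h) - P xb⟫ ≤ ‖h‖ * ‖P (xb+h) - P xb‖ := real_inner_le_norm _ _
    have hdn : ‖P (xb+h) - P xb‖ = dist (P (xb+h)) (P xb) := (dist_eq_norm _ _).symm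
    have henn : 0 ≤ e := le_trans (by positivity) helow
    have hB : e ≤ C * ‖h‖ := by
      have hh0 : 0 ≤ ‖h‖ := norm_nonneg h
      have hb1 : ‖h‖ * dist (P (xb+h)) (P xb) ≤ ‖h‖ * (C/2) :=
        mul_le_mul_of_nonneg_left (le_of_lt h1) hh0
      have hb2 : ε*‖h‖^2/2 ≤ (C/2) * ‖h‖ := by
        have h9 : ‖h‖*‖h‖ ≤ (C/ε)*‖h‖ := mul_le_mul_of_nonneg_right (le_of_lt h2) hh0
        have h10 : ε*(‖h‖*‖h‖) ≤ ε*((C/ε)*‖h‖) := mul_le_mul_of_nonneg_left h9 (le_of_lt hεpos)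
        have h11 : ε*((C/ε)*‖h‖) = C*‖h‖ := by field_simp
        linarith [h10, h11]
      calc e ≤ ⟪h, P (xb+h) - P xb⟫ + ε*‖h‖^2/2 := heup
      _ ≤ ‖h‖ * (C/2) + (C/2) * ‖h‖ := by
          have h12 : ⟪h, P (xb+h) - P xb⟫ ≤ ‖h‖ * (C/2) := by
            rw [hdn] at hcs
            linarith [le_trans hcs hb1]
          linarith [hb2]
      _ = C * ‖h‖ := by ring
    calc ‖θ (xb + h) - θ xb - (innerSL ℝ v) h‖ = |e| := by rw [he, Real.norm_eq_abs]
    _ = e := abs_of_nonneg henn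
    _ ≤ C * ‖h‖ := hB
  have hfzero : innerSL ℝ v = 0 := hlocmin.hasFDerivAt_eq_zero hderiv
  have hv0 : v = 0 := by
    have h1 : ⟪v, v⟫ = 0 := by
      have := congrArg (fun (f : F →L[ℝ] ℝ) => f v) hfzero
      simpa using this
    exact inner_self_eq_zero.1 h1
  have hPxb : m₀ - P xb = ε • xb := by
    rw [hv] at hv0
    have : m₀ - P xb - ε • xb = -(P xb - m₀ + ε • xb) := by module
    rw [← sub_eq_zero, this, hv0, neg_zero]
  -- final contradiction
  have hxb2 : ε*‖xb‖^2 ≤ 2*(θ m₀ + c₀) := by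
    have := hlow xb
    linarith [hminm₀]
  have hθm₀ : 2*(θ m₀ + c₀) ≤ A := by
    have h1 : θ m₀ = φf m₀ - ‖m₀‖^2 + ε*‖m₀‖^2/2 := by
      simp only [hθ]
      rw [real_inner_self_eq_norm_sq]
    have h2 := le_abs_self (φf m₀)
    have h3 : 0 ≤ ‖m₀‖^2 := by positivity
    have h4 : ε*‖m₀‖^2 ≤ 1*‖m₀‖^2 := mul_le_mul_of_nonneg_right hε1 h3
    rw [hA]
    linarith [h1, h2, h4]
  have hδle : δ ≤ ε * ‖xb‖ := by
    have h1 : δ ≤ dist m₀ (P xb) := by rw [hδ, hdd]; exact Metric.infDist_le_dist_of_mem (hPmem xb)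
    have h2 : dist m₀ (P xb) = ε * ‖xb‖ := by
      rw [dist_eq_norm, hPxb, norm_smul, Real.norm_eq_abs, abs_of_nonneg (le_of_lt hεpos)]
    linarith
  have hfin : δ^2 ≤ δ^2/2 := by
    have h1 : δ^2 ≤ (ε*‖xb‖)^2 := pow_le_pow_left₀ (le_of_lt hδpos) hδle 2
    have h2 : (ε*‖xb‖)^2 = ε * (ε*‖xb‖^2) := by ring
    have h3 : ε * (ε*‖xb‖^2) ≤ ε * A := by
      apply mul_le_mul_of_nonneg_left _ (le_of_lt hεpos)
      linarith [hxb2, hθm₀]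
    have h4 : ε * A ≤ (δ^2/(2*A)) * A := mul_le_mul_of_nonneg_right hεA (le_of_lt hApos)
    have h5 : (δ^2/(2*A)) * A = δ^2/2 := by field_simp
    linarith
  have hδ2 : 0 < δ*δ := mul_pos hδpos hδpos
  nlinarith [hfin, hδ2]

/-- If `G ⊊ ℝⁿ` is a domain with `s_G(x,y) ≥ p_G(x,y)` for all `x, y ∈ G`, then the
complement `ℝⁿ ∖ G` is convex (hence connected). -/
theorem complement_convex_of_p_le_s (n : ℕ) (G : Set (EuclideanSpace ℝ (Fin n)))
    (hGopen : IsOpen G) (hGconn : IsConnected G) (hGne : G ≠ Set.univ)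
    (h : ∀ x ∈ G, ∀ y ∈ G, pG G x y ≤ sG G x y) :
    Convex ℝ Gᶜ ∧ IsConnected Gᶜ := by
  have hK : IsClosed Gᶜ := hGopen.isClosed_compl
  have hKne : Gᶜ.Nonempty := by rw [Set.nonempty_compl]; exact hGne
  have hconv : Convex ℝ Gᶜ := by
    intro p hp q hq a b ha hb hab
    by_contra hm₀
    obtain ⟨x, w₁, hw₁, w₂, hw₂, hne, hd₁, hd₂⟩ :=
      exists_two_nearest hK hp hq ha hb hab rfl hm₀
    have hxG : x ∈ G := by
      by_contra hxc
      have hxK : x ∈ Gᶜ := hxc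
      have h0 : Metric.infDist x Gᶜ = 0 := Metric.infDist_zero_of_mem hxK
      rw [h0] at hd₁ hd₂
      exact hne ((dist_eq_zero.1 hd₁).symm.trans (dist_eq_zero.1 hd₂))
    have hfr₁ : w₁ ∈ frontier G := nearest_frontier hxG hw₁ hd₁
    have hfr₂ : w₂ ∈ frontier G := nearest_frontier hxG hw₂ hd₂
    have hdGx : dG G x = Metric.infDist x Gᶜ := by
      apply le_antisymm
      · rw [dG, ← hd₁]; exact Metric.infDist_le_dist_of_mem hfr₁
      · rw [dG]
        have hsub : frontier G ⊆ closure Gᶜ := by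
          rw [frontier_eq_closure_inter_closure]; exact Set.inter_subset_right
        have h2 := Metric.infDist_le_infDist_of_subset hsub ⟨w₁, hfr₁⟩ (x := x)
        rwa [Metric.infDist_closure] at h2
    have hRpos : 0 < Metric.infDist x Gᶜ := by
      rw [← hd₁]
      exact dist_pos.2 (fun hxw => hw₁ (hxw ▸ hxG))
    obtain ⟨xx, hxx, yy, hyy, hlt⟩ :=
      two_contact_violation hfr₁ hfr₂ hne hd₁ hd₂ hdGx hRpos
    exact absurd (h xx hxx yy hyy) (not_le.2 hlt)
  exact ⟨hconv, hconv.isConnected hKne⟩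
end

section
/- If G ⊊ ℝⁿ is a domain such that s_G(x,y) = p_G(x,y) for all x, y ∈ G, then G is a half-space. -/
open Metric Set

variable {E : Type*} [NormedAddCommGroup E] [NormedSpace ℝ E]

section Helpers

/-- A preconnected set meeting both `t` and its complement meets the frontier of `t`. -/
lemma frontier_inter_aux {α : Type*} [TopologicalSpace α] {s t : Set α}
    (hs : IsPreconnected s) (h1 : (s ∩ t).Nonempty) (h2 : (s \ t).Nonempty) :
    (s ∩ frontier t).Nonempty := by
  by_contra hfr
  rw [Set.not_nonempty_iff_eq_empty] at hfr
  have hsub : s ⊆ interior t ∪ (closure t)ᶜ := by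
    intro x hx
    by_cases hxc : x ∈ closure t
    · by_cases hxi : x ∈ interior t
      · exact Or.inl hxi
      · exact absurd (Set.eq_empty_iff_forall_notMem.mp hfr x ⟨hx, hxc, hxi⟩) not_false
    · exact Or.inr hxc
  have hdisj : Disjoint (interior t) (closure t)ᶜ :=
    disjoint_compl_right.mono_left interior_subset_closure
  have hne : (s ∩ interior t).Nonempty := by
    obtain ⟨x, hxs, hxt⟩ := h1
    rcases hsub hxs with hxi | hxc
    · exact ⟨x, hxs, hxi⟩
    · exact absurd (subset_closure hxt) hxc
  have := hs.subset_left_of_subset_union isOpen_interior isClosed_closure.isOpen_compl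
    hdisj hsub hne
  obtain ⟨y, hys, hyt⟩ := h2
  exact hyt (interior_subset (this hys))

variable {F : Type*} [NormedAddCommGroup F] [InnerProductSpace ℝ F]

local notation "⟪" x ", " y "⟫" => @inner ℝ _ _ x y

/-- The ball of radius `infDist x (frontier G)` around `x ∈ G` lies in `G`. -/
lemma ball_infDist_subset' {G : Set F} {x : F} (hx : x ∈ G) :
    ball x (infDist x (frontier G)) ⊆ G := by
  intro y hy
  by_contra hyG
  obtain ⟨ζ, hζs, hζf⟩ := frontier_inter_aux (convex_segment x y).isPreconnected
    ⟨x, left_mem_segment ℝ x y, hx⟩ ⟨y, right_mem_segment ℝ x y, hyG⟩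
  have hd := dist_add_dist_of_mem_segment hζs
  have h1 : infDist x (frontier G) ≤ dist x ζ := infDist_le_dist_of_mem hζf
  have h2 : dist y x < infDist x (frontier G) := mem_ball.mp hy
  rw [dist_comm y x] at h2
  have : dist x ζ ≤ dist x y := by
    have := dist_nonneg (x := ζ) (y := y); linarith
  linarith

set_option maxHeartbeats 1000000 in
/-- Key quantitative bound: any frontier point on the `z₁`-side is far from `p`, `q`. -/
lemma per_z {G : Set F} (hGopen : IsOpen G) (hGconv : Convex ℝ G)
    {z₁ w e p q z : F} {g κ ε c : ℝ}
    (hz₁ : z₁ ∈ frontier G) (hw : w ∈ G) (he : ‖e‖ = 1)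
    (hg : 0 < g) (hwz : w = z₁ + g • e)
    (hκ0 : 0 < κ) (hκ1 : κ ≤ 1) (hκg : κ * g ≤ infDist w (frontier G))
    (hε : 0 < ε) (hc : 0 < c)
    (hp : p = z₁ + ε • e) (hq : q = p + c • e)
    (hz : z ∈ frontier G) (hξ : ⟪e, z - p⟫ ≤ g - ε) :
    Real.sqrt (c ^ 2 + 2 * κ ^ 2 * ε * c) ≤ dist p z + dist z q := by
  have hzG : z ∉ G := by rw [hGopen.frontier_eq] at hz; exact hz.2
  set ξ : ℝ := ⟪e, z - p⟫ with hξdef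
  set r : F := z - p - ξ • e with hrdef
  have he2 : ⟪e, e⟫ = 1 := by
    rw [real_inner_self_eq_norm_sq, he]; norm_num
  have hre : ⟪e, r⟫ = 0 := by
    rw [hrdef, inner_sub_right, real_inner_smul_right, he2]; ring
  have hre' : ⟪r, e⟫ = 0 := by rw [real_inner_comm]; exact hre
  set ρ : ℝ := ‖r‖ with hρdef
  have hρ0 : 0 ≤ ρ := norm_nonneg r
  have hrr : ⟪r, r⟫ = ρ ^ 2 := real_inner_self_eq_norm_sq r
  have hzdec : z = p + ξ • e + r := by rw [hrdef]; abel
  -- cone claim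
  have hcone : κ * (ξ + ε) ≤ ρ := by
    by_contra hlt
    push_neg at hlt
    have hξε : 0 < ξ + ε := by
      by_contra hcon
      push_neg at hcon
      have : κ * (ξ + ε) ≤ 0 := mul_nonpos_of_nonneg_of_nonpos hκ0.le hcon
      linarith
    set lam : ℝ := (ξ + ε) / g with hlamdef
    have hlam0 : 0 < lam := div_pos hξε hg
    have hlam1 : lam ≤ 1 := by rw [div_le_one hg]; linarith
    have hlamg : lam * g = ξ + ε := div_mul_cancel₀ _ hg.ne'
    set m' : F := w + lam⁻¹ • r with hm'def
    have hm'G : m' ∈ G := by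
      apply ball_infDist_subset' hw
      rw [mem_ball, dist_eq_norm]
      have h1 : m' - w = lam⁻¹ • r := by rw [hm'def]; abel
      rw [h1, norm_smul, norm_inv, Real.norm_eq_abs, abs_of_pos hlam0]
      have h2 : lam⁻¹ * ρ < lam⁻¹ * (κ * (ξ + ε)) :=
        mul_lt_mul_of_pos_left hlt (inv_pos.2 hlam0)
      have h3 : lam⁻¹ * (κ * (ξ + ε)) = κ * g := by
        rw [hlamdef]; field_simp
      linarith
    have hcombo : lam • m' + (1 - lam) • z₁ = z := by
      have h1 : lam • lam⁻¹ • r = r := by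
        rw [smul_smul, mul_inv_cancel₀ hlam0.ne', one_smul]
      rw [hm'def, hwz, hzdec, hp, smul_add, smul_add, h1, smul_smul, hlamg,
        sub_smul, one_smul, add_smul]
      abel
    have hzG' : z ∈ G := by
      rw [← hGopen.interior_eq] at hm'G ⊢
      rw [← hcombo]
      exact hGconv.combo_interior_closure_mem_interior hm'G
        (frontier_subset_closure hz₁) hlam0 (by linarith) (by ring)
    exact hzG hzG'
  -- main bound
  rcases eq_or_lt_of_le hρ0 with hρz | hρpos
  · -- colinear case : r = 0, ξ ≤ -ε
    have hr0 : r = 0 := by rw [← norm_eq_zero, ← hρdef, ← hρz]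
    have hξneg : ξ ≤ -ε := by
      by_contra hcon
      push_neg at hcon
      have : 0 < κ * (ξ + ε) := mul_pos hκ0 (by linarith)
      linarith
    have hd1 : dist p z = -ξ := by
      rw [dist_eq_norm', hzdec, hr0]
      have h1 : p + ξ • e + 0 - p = ξ • e := by abel
      rw [h1, norm_smul, he, Real.norm_eq_abs, abs_of_nonpos (by linarith : ξ ≤ 0)]
      ring
    have hd2 : dist z q = c - ξ := by
      rw [dist_eq_norm', hq, hzdec, hr0]
      have h1 : p + c • e - (p + ξ • e + 0) = (c - ξ) • e := by
        rw [sub_smul]; abel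
      rw [h1, norm_smul, he, Real.norm_eq_abs, abs_of_pos (by linarith), mul_one]
    have hκsq : κ ^ 2 ≤ 1 := by nlinarith
    have hsq : c ^ 2 + 2 * κ ^ 2 * ε * c ≤ (c + 2 * ε) ^ 2 := by
      nlinarith [mul_nonneg (mul_nonneg hε.le hc.le) (sub_nonneg.2 hκsq)]
    calc Real.sqrt (c ^ 2 + 2 * κ ^ 2 * ε * c) ≤ Real.sqrt ((c + 2 * ε) ^ 2) :=
          Real.sqrt_le_sqrt hsq
      _ = c + 2 * ε := Real.sqrt_sq (by positivity)
      _ ≤ dist p z + dist z q := by rw [hd1, hd2]; linarith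
  · -- generic case: reflection across the tangent cone line
    obtain ⟨N, hNdef⟩ : ∃ N : F, N = ρ⁻¹ • r - κ • e := ⟨_, rfl⟩
    have hNe : ⟪e, N⟫ = -κ := by
      rw [hNdef, inner_sub_right, real_inner_smul_right, real_inner_smul_right,
        hre, he2]
      ring
    have hrN : ⟪r, N⟫ = ρ := by
      rw [hNdef, inner_sub_right, real_inner_smul_right, real_inner_smul_right,
        hrr, hre']
      field_simp
      ring
    have hNN : ⟪N, N⟫ = 1 + κ ^ 2 := by
      simp only [hNdef, inner_sub_left, inner_sub_right, real_inner_smul_left,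
        real_inner_smul_right, hrr, hre, hre', he2]
      field_simp
      ring
    have hzpN : ⟪z - p, N⟫ = ρ - κ * ξ := by
      have hzp : z - p = ξ • e + r := by rw [hzdec]; abel
      rw [hzp, inner_add_left, real_inner_smul_left, hNe, hrN]
      ring
    obtain ⟨β, hβdef⟩ : ∃ β : ℝ, β = 2 * κ * ε / (1 + κ ^ 2) := ⟨_, rfl⟩
    have h1κ : (0:ℝ) < 1 + κ ^ 2 := by positivity
    have hβ0 : 0 < β := by rw [hβdef]; positivity
    have hβκ : β * (1 + κ ^ 2) = 2 * κ * ε := by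
      rw [hβdef]; field_simp
    obtain ⟨p', hp'def⟩ : ∃ p' : F, p' = p + β • N := ⟨_, rfl⟩
    have hexp : ∀ x y : F, ‖x - y‖ ^ 2 = ‖x‖ ^ 2 - 2 * ⟪x, y⟫ + ⟪y, y⟫ := by
      intro x y; rw [norm_sub_sq_real, real_inner_self_eq_norm_sq]
    -- |z - p'| ≤ |z - p|
    have hkey1 : ‖z - p'‖ ≤ ‖z - p‖ := by
      have hdec : z - p' = (z - p) - β • N := by rw [hp'def]; abel
      have hsq : ‖z - p'‖ ^ 2 ≤ ‖z - p‖ ^ 2 := by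
        rw [hdec, hexp, real_inner_smul_right, real_inner_smul_left,
          real_inner_smul_right, hzpN, hNN]
        have hmargin : 0 ≤ β * ((ρ - κ * ξ) - κ * ε) := by
          apply mul_nonneg hβ0.le; linarith
        nlinarith [hβκ]
      have h1 := Real.sqrt_le_sqrt hsq
      rwa [Real.sqrt_sq (norm_nonneg _), Real.sqrt_sq (norm_nonneg _)] at h1
    -- √(c² + 2κ²εc) ≤ |q - p'|
    have hkey2 : Real.sqrt (c ^ 2 + 2 * κ ^ 2 * ε * c) ≤ ‖q - p'‖ := by
      have hdec : q - p' = c • e - β • N := by rw [hq, hp'def]; abel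
      have hsq : c ^ 2 + 2 * κ ^ 2 * ε * c ≤ ‖q - p'‖ ^ 2 := by
        rw [hdec, hexp, real_inner_smul_left, real_inner_smul_right,
          real_inner_smul_left, real_inner_smul_right, hNe, hNN,
          norm_smul, he, Real.norm_eq_abs, abs_of_pos hc, mul_one]
        have hββ : 0 ≤ β * (β * (1 + κ ^ 2)) := by positivity
        have hκsq : κ ^ 2 ≤ 1 := by nlinarith
        have hβκ2 : β * κ * (1 + κ ^ 2) = 2 * κ ^ 2 * ε := by
          rw [hβdef]; field_simp
        have h6 : κ ^ 2 * ε ≤ β * κ := by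
          nlinarith [hβκ2,
            mul_nonneg (mul_nonneg (sq_nonneg κ) hε.le) (sub_nonneg.2 hκsq)]
        have hmore : 2 * κ ^ 2 * ε * c ≤ 2 * (c * (β * κ)) := by
          nlinarith [mul_le_mul_of_nonneg_left h6 (by positivity : (0:ℝ) ≤ 2 * c)]
        nlinarith [hββ, hmore]
      have h1 := Real.sqrt_le_sqrt hsq
      rwa [Real.sqrt_sq (norm_nonneg _)] at h1
    calc Real.sqrt (c ^ 2 + 2 * κ ^ 2 * ε * c) ≤ ‖q - p'‖ := hkey2
      _ ≤ ‖q - z‖ + ‖z - p'‖ := norm_sub_le_norm_sub_add_norm_sub q z p'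
      _ ≤ ‖q - z‖ + ‖z - p‖ := by linarith
      _ = dist p z + dist z q := by
          rw [dist_eq_norm', dist_eq_norm, norm_sub_rev q z]; ring

end Helpers

set_option maxHeartbeats 4000000 in
/-- If `G ⊊ ℝⁿ` is a domain with `s_G(x,y) = p_G(x,y)` for all `x, y ∈ G`, then `G` is
a half-space. -/
theorem halfspace_of_s_eq_p (n : ℕ) (G : Set (EuclideanSpace ℝ (Fin n)))
    (hGopen : IsOpen G) (hGconn : IsConnected G) (hGne : G ≠ Set.univ)
    (h : ∀ x ∈ G, ∀ y ∈ G, sG G x y = pG G x y) :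
    ∃ (a : EuclideanSpace ℝ (Fin n)) (b : ℝ), a ≠ 0 ∧
      G = {x : EuclideanSpace ℝ (Fin n) | b < (inner ℝ a x : ℝ)} := by
  classical
  have hne : G.Nonempty := hGconn.nonempty
  have hfr : (frontier G).Nonempty := nonempty_frontier_iff.mpr ⟨hne, hGne⟩
  haveI : Nonempty (frontier G) := hfr.to_subtype
  have hfrG : ∀ {v : EuclideanSpace ℝ (Fin n)}, v ∈ frontier G → v ∉ G := by
    intro v hv; rw [hGopen.frontier_eq] at hv; exact hv.2
  have dpos : ∀ {x : EuclideanSpace ℝ (Fin n)}, x ∈ G → 0 < infDist x (frontier G) := by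
    intro x hx
    exact (isClosed_frontier.notMem_iff_infDist_pos hfr).mp (fun hxf => hfrG hxf hx)
  have bdd : ∀ x y : EuclideanSpace ℝ (Fin n), BddBelow (Set.range fun z : frontier G => dist x (z : EuclideanSpace ℝ (Fin n)) + dist (z : EuclideanSpace ℝ (Fin n)) y) := by
    intro x y
    refine ⟨0, ?_⟩
    rintro _ ⟨z, rfl⟩
    positivity
  have Ieq : ∀ {x y : EuclideanSpace ℝ (Fin n)}, x ∈ G → y ∈ G → x ≠ y →
      (⨅ z : frontier G, (dist x (z : EuclideanSpace ℝ (Fin n)) + dist (z : EuclideanSpace ℝ (Fin n)) y)) =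
        Real.sqrt (dist x y ^ 2 + 4 * infDist x (frontier G) * infDist y (frontier G)) := by
    intro x y hx hy hxy
    have hdxy : 0 < dist x y := dist_pos.2 hxy
    have hdx := dpos hx
    have hdy := dpos hy
    have hE : 0 < Real.sqrt (dist x y ^ 2 + 4 * infDist x (frontier G) * infDist y (frontier G)) := by
      apply Real.sqrt_pos.2; nlinarith
    have hI : 0 < ⨅ z : frontier G, (dist x (z : EuclideanSpace ℝ (Fin n)) + dist (z : EuclideanSpace ℝ (Fin n)) y) := by
      refine lt_of_lt_of_le (by linarith : (0:ℝ) < infDist x (frontier G) + infDist y (frontier G)) (le_ciInf ?_)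
      rintro ⟨z, hz⟩
      have h1 : infDist x (frontier G) ≤ dist x z := infDist_le_dist_of_mem hz
      have h2 : infDist y (frontier G) ≤ dist z y := by
        rw [dist_comm]; exact infDist_le_dist_of_mem hz
      exact add_le_add h1 h2
    have heq := h x hx y hy
    unfold sG pG dG at heq
    rw [div_eq_div_iff hI.ne' hE.ne'] at heq
    exact (mul_left_cancel₀ hdxy.ne' heq).symm
  -- Step A : G is convex
  have hGconv : Convex ℝ G := by
    rw [convex_iff_segment_subset]
    intro x hx y hy ww hww
    by_contra hwG
    have hxy : x ≠ y := by
      rintro rfl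
      rw [segment_same] at hww
      exact hwG (mem_singleton_iff.mp hww ▸ hx)
    obtain ⟨ζ, hζs, hζf⟩ := frontier_inter_aux (convex_segment x ww).isPreconnected
      ⟨x, left_mem_segment ℝ x ww, hx⟩ ⟨ww, right_mem_segment ℝ x ww, hwG⟩
    have hsub : segment ℝ x ww ⊆ segment ℝ x y :=
      (convex_segment x y).segment_subset (left_mem_segment ℝ x y) hww
    have hd := dist_add_dist_of_mem_segment (hsub hζs)
    have hle : (⨅ z : frontier G, (dist x (z : EuclideanSpace ℝ (Fin n)) + dist (z : EuclideanSpace ℝ (Fin n)) y)) ≤ dist x y :=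
      (ciInf_le (bdd x y) (⟨ζ, hζf⟩ : frontier G)).trans_eq hd
    rw [Ieq hx hy hxy] at hle
    have h2 : dist x y < Real.sqrt (dist x y ^ 2 + 4 * infDist x (frontier G) * infDist y (frontier G)) := by
      rw [show dist x y = Real.sqrt (dist x y ^ 2) from (Real.sqrt_sq dist_nonneg).symm]
      apply Real.sqrt_lt_sqrt (by positivity)
      rw [Real.sq_sqrt (sq_nonneg _)]
      nlinarith [dpos hx, dpos hy]
    linarith
  -- Step B : Gᶜ is convex
  have hGcconv : Convex ℝ Gᶜ := by
    rw [convex_iff_segment_subset]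
    intro a ha b hb w hw
    by_contra hwc
    rw [Set.mem_compl_iff, not_not] at hwc
    -- frontier points on both sides
    obtain ⟨z₁, hz₁s, hz₁f⟩ := frontier_inter_aux (convex_segment w a).isPreconnected
      ⟨w, left_mem_segment ℝ w a, hwc⟩ ⟨a, right_mem_segment ℝ w a, ha⟩
    obtain ⟨z₂, hz₂s, hz₂f⟩ := frontier_inter_aux (convex_segment w b).isPreconnected
      ⟨w, left_mem_segment ℝ w b, hwc⟩ ⟨b, right_mem_segment ℝ w b, hb⟩
    rw [segment_eq_image'] at hz₁s hz₂s hw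
    obtain ⟨s, ⟨hs0, hs1⟩, hz₁e0⟩ := hz₁s
    obtain ⟨t, ⟨ht0, ht1⟩, hz₂e0⟩ := hz₂s
    obtain ⟨τ, ⟨hτ0, hτ1⟩, hwe0⟩ := hw
    have hwe : a + τ • (b - a) = w := hwe0
    have hz₁e : w + s • (a - w) = z₁ := hz₁e0
    have hz₂e : w + t • (b - w) = z₂ := hz₂e0
    clear hwe0 hz₁e0 hz₂e0
    -- basic nondegeneracies
    have hD : b - a ≠ 0 := by
      intro hD0
      rw [hD0, smul_zero, add_zero] at hwe
      exact ha (by rw [hwe]; exact hwc)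
    have hτ0' : 0 < τ := by
      rcases hτ0.lt_or_eq with h' | h'
      · exact h'
      · exfalso; rw [← h', zero_smul, add_zero] at hwe
        exact ha (by rw [hwe]; exact hwc)
    have hτ1' : τ < 1 := by
      rcases hτ1.lt_or_eq with h' | h'
      · exact h'
      · exfalso
        rw [h', one_smul] at hwe
        have hbww : b = w := by rw [← hwe]; abel
        exact hb (by rw [hbww]; exact hwc)
    have hs0' : 0 < s := by
      rcases hs0.lt_or_eq with h' | h'
      · exact h'
      · exfalso
        rw [← h', zero_smul, add_zero] at hz₁e
        exact hfrG hz₁f (by rw [← hz₁e]; exact hwc)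
    have ht0' : 0 < t := by
      rcases ht0.lt_or_eq with h' | h'
      · exact h'
      · exfalso
        rw [← h', zero_smul, add_zero] at hz₂e
        exact hfrG hz₂f (by rw [← hz₂e]; exact hwc)
    obtain ⟨D, hDdef⟩ : ∃ D : EuclideanSpace ℝ (Fin n), D = b - a := ⟨_, rfl⟩
    have hDn : 0 < ‖D‖ := by rw [hDdef]; exact norm_pos_iff.2 hD
    obtain ⟨e, hedef⟩ : ∃ e : EuclideanSpace ℝ (Fin n), e = ‖D‖⁻¹ • D := ⟨_, rfl⟩
    have he : ‖e‖ = 1 := by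
      rw [hedef, norm_smul, norm_inv, Real.norm_eq_abs, abs_of_pos hDn,
        inv_mul_cancel₀ hDn.ne']
    have he2 : (inner ℝ e e : ℝ) = 1 := by
      rw [real_inner_self_eq_norm_sq, he]; norm_num
    have haw : a - w = (-τ) • D := by
      rw [hDdef, ← hwe, neg_smul]; abel
    have hbw : b - w = (1 - τ) • D := by
      rw [hDdef, ← hwe, sub_smul, one_smul]; abel
    obtain ⟨g, hgdef⟩ : ∃ g : ℝ, g = s * τ * ‖D‖ := ⟨_, rfl⟩
    have hg : 0 < g := by rw [hgdef]; positivity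
    have hge : g • e = (s * τ) • D := by
      rw [hgdef, hedef, smul_smul]
      congr 1
      field_simp
    have hwz₁ : w = z₁ + g • e := by
      rw [hge, ← hz₁e, haw, smul_smul,
        show s * -τ = -(s * τ) from by ring, neg_smul]
      abel
    obtain ⟨g', hg'def⟩ : ∃ g' : ℝ, g' = t * (1 - τ) * ‖D‖ := ⟨_, rfl⟩
    have hg' : 0 < g' := by
      have h1τ : 0 < 1 - τ := by linarith
      rw [hg'def]; positivity
    have hg'e : g' • e = (t * (1 - τ)) • D := by
      rw [hg'def, hedef, smul_smul]
      congr 1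
      field_simp
    have hz₂w : z₂ = w + g' • e := by
      rw [hg'e, ← hz₂e, hbw, smul_smul]
    -- parameters
    obtain ⟨δ, hδdef⟩ : ∃ δ : ℝ, δ = infDist w (frontier G) := ⟨_, rfl⟩
    have hδ0 : 0 < δ := by rw [hδdef]; exact dpos hwc
    have hδg : δ ≤ g := by
      have h1 : w - z₁ = g • e := by rw [hwz₁]; abel
      have h2 : dist w z₁ = g := by
        rw [dist_eq_norm, h1, norm_smul, he, Real.norm_eq_abs, abs_of_pos hg, mul_one]
      rw [hδdef]
      exact (infDist_le_dist_of_mem hz₁f).trans_eq h2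
    have hδg' : δ ≤ g' := by
      have h1 : z₂ - w = g' • e := by rw [hz₂w]; abel
      have h2 : dist w z₂ = g' := by
        rw [dist_eq_norm', h1, norm_smul, he, Real.norm_eq_abs, abs_of_pos hg', mul_one]
      rw [hδdef]
      exact (infDist_le_dist_of_mem hz₂f).trans_eq h2
    obtain ⟨L, hLdef⟩ : ∃ L : ℝ, L = g + g' := ⟨_, rfl⟩
    have hL : 0 < L := by rw [hLdef]; positivity
    have hδL : δ ≤ L := by rw [hLdef]; linarith
    obtain ⟨κ, hκdef⟩ : ∃ κ : ℝ, κ = δ / L := ⟨_, rfl⟩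
    have hκ0 : 0 < κ := by rw [hκdef]; exact div_pos hδ0 hL
    have hκ1 : κ ≤ 1 := by rw [hκdef, div_le_one hL]; linarith
    have hκsq : κ ^ 2 ≤ 1 := by nlinarith
    obtain ⟨ε, hεdef⟩ : ∃ ε : ℝ, ε = κ ^ 2 * L / 16 := ⟨_, rfl⟩
    have hε : 0 < ε := by rw [hεdef]; positivity
    have hε16 : κ ^ 2 * L = 16 * ε := by rw [hεdef]; ring
    have hεδ : ε ≤ δ / 16 := by
      have h1 : κ ^ 2 * L = δ * (δ / L) := by rw [hκdef]; field_simp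
      have h2 : δ / L ≤ 1 := by rw [div_le_one hL]; exact hδL
      have h3 : δ * (δ / L) ≤ δ * 1 := by
        apply mul_le_mul_of_nonneg_left h2 hδ0.le
      rw [hεdef]
      rw [h1]
      linarith
    have hεg : ε < g := by linarith
    have hεg' : ε < g' := by linarith
    obtain ⟨c, hcdef⟩ : ∃ c : ℝ, c = L - 2 * ε := ⟨_, rfl⟩
    have hc : 0 < c := by
      have : ε ≤ L / 16 := by linarith
      rw [hcdef]; linarith
    obtain ⟨p, hpdef⟩ : ∃ p : EuclideanSpace ℝ (Fin n), p = z₁ + ε • e := ⟨_, rfl⟩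
    obtain ⟨q, hqdef⟩ : ∃ q : EuclideanSpace ℝ (Fin n), q = z₁ + (ε + c) • e := ⟨_, rfl⟩
    have hqp : q = p + c • e := by rw [hpdef, hqdef, add_smul]; abel
    have hq2 : q = z₂ + (-ε) • e := by
      rw [hqdef, hz₂w, hwz₁,
        show ε + c = g + (g' + -ε) from by rw [hcdef, hLdef]; ring,
        add_smul, add_smul, neg_smul]
      abel
    have hpG : p ∈ G := by
      have hcombo : (ε / g) • w + (1 - ε / g) • z₁ = p := by
        rw [hpdef, hwz₁, smul_add, smul_smul,
          show ε / g * g = ε from div_mul_cancel₀ _ hg.ne', sub_smul, one_smul]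
        abel
      rw [← hGopen.interior_eq, ← hcombo]
      exact hGconv.combo_interior_closure_mem_interior
        (by rw [hGopen.interior_eq]; exact hwc) (frontier_subset_closure hz₁f)
        (by positivity) (by rw [sub_nonneg, div_le_one hg]; exact hεg.le) (by ring)
    have hqG : q ∈ G := by
      have hcombo : (ε / g') • w + (1 - ε / g') • z₂ = q := by
        rw [hq2, hz₂w, smul_add, smul_smul,
          show (1 - ε / g') * g' = g' - ε from by field_simp, sub_smul, one_smul,
          neg_smul, sub_smul]
        abel
      rw [← hGopen.interior_eq, ← hcombo]
      exact hGconv.combo_interior_closure_mem_interior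
        (by rw [hGopen.interior_eq]; exact hwc) (frontier_subset_closure hz₂f)
        (by positivity) (by rw [sub_nonneg, div_le_one hg']; exact hεg'.le) (by ring)
    have hdp_le : infDist p (frontier G) ≤ ε := by
      have h1 : p - z₁ = ε • e := by rw [hpdef]; abel
      have h2 : dist p z₁ = ε := by
        rw [dist_eq_norm, h1, norm_smul, he, Real.norm_eq_abs, abs_of_pos hε, mul_one]
      exact (infDist_le_dist_of_mem hz₁f).trans_eq h2
    have hdq_le : infDist q (frontier G) ≤ ε := by
      have h1 : q - z₂ = (-ε) • e := by rw [hq2]; abel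
      have h2 : dist q z₂ = ε := by
        rw [dist_eq_norm, h1, norm_smul, he, Real.norm_eq_abs, abs_of_neg
          (by linarith : -ε < 0), mul_one]
        ring
      exact (infDist_le_dist_of_mem hz₂f).trans_eq h2
    have hdistpq : dist p q = c := by
      have h1 : q - p = c • e := by rw [hqp]; abel
      rw [dist_eq_norm', h1, norm_smul, he, Real.norm_eq_abs, abs_of_pos hc, mul_one]
    have hpq : p ≠ q := by rw [← dist_pos, hdistpq]; exact hc
    have hIeq := Ieq hpG hqG hpq
    rw [hdistpq] at hIeq
    -- lower bound for every frontier point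
    have hlow : ∀ z : frontier G, Real.sqrt (c ^ 2 + 2 * κ ^ 2 * ε * c) ≤
        dist p (z : EuclideanSpace ℝ (Fin n)) + dist (z : EuclideanSpace ℝ (Fin n)) q := by
      rintro ⟨z, hzf⟩
      show Real.sqrt (c ^ 2 + 2 * κ ^ 2 * ε * c) ≤ dist p z + dist z q
      by_cases hside : (inner ℝ e (z - p) : ℝ) ≤ g - ε
      · exact per_z hGopen hGconv hz₁f hwc he hg hwz₁ hκ0 hκ1
          (by rw [← hδdef, hκdef, div_mul_eq_mul_div, div_le_iff₀ hL]; nlinarith) hε hc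
          hpdef hqp hzf hside
      · push_neg at hside
        have hinner : (inner ℝ (-e) (z - q) : ℝ) = -(inner ℝ e (z - p) : ℝ) + c := by
          have hzq : z - q = (z - p) - c • e := by rw [hqp]; abel
          rw [hzq, inner_neg_left, inner_sub_right, real_inner_smul_right, he2]
          ring
        have h2 := per_z (e := -e) (g := g') (p := q) (q := p) hGopen hGconv hz₂f hwc
          (by rw [norm_neg]; exact he) hg'
          (by rw [hz₂w, smul_neg]; abel)
          hκ0 hκ1
          (by rw [← hδdef, hκdef, div_mul_eq_mul_div, div_le_iff₀ hL]; nlinarith) hε hc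
          (by rw [hq2, smul_neg, neg_smul])
          (by rw [hqp, smul_neg]; abel)
          hzf
          (by rw [hinner]; linarith)
        rw [dist_comm q z, dist_comm z p] at h2
        linarith
    have hIlow := le_ciInf hlow
    rw [hIeq] at hIlow
    -- contradiction
    have hdp0 := dpos hpG
    have hdq0 := dpos hqG
    have hprod : infDist p (frontier G) * infDist q (frontier G) ≤ ε ^ 2 := by
      have := mul_le_mul hdp_le hdq_le hdq0.le hε.le
      nlinarith
    have hκc : κ ^ 2 * c = 16 * ε - 2 * (κ ^ 2) * ε := by
      rw [hcdef]; linear_combination hε16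
    have hgap : 4 * infDist p (frontier G) * infDist q (frontier G)
        < 2 * κ ^ 2 * ε * c := by
      have h28 : 28 * ε ^ 2 ≤ 2 * κ ^ 2 * ε * c := by nlinarith
      nlinarith
    have hlt : Real.sqrt (c ^ 2 + 4 * infDist p (frontier G) * infDist q (frontier G))
        < Real.sqrt (c ^ 2 + 2 * κ ^ 2 * ε * c) := by
      apply Real.sqrt_lt_sqrt (by positivity)
      linarith
    linarith
  -- Step C : separation
  obtain ⟨f, u, hfu, hfu'⟩ := geometric_hahn_banach_open hGconv hGopen hGcconv
    disjoint_compl_right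
  have hGeq : G = {x : EuclideanSpace ℝ (Fin n) | f x < u} := by
    apply subset_antisymm
    · intro x hx; exact hfu x hx
    · intro x hx
      by_contra hxG
      exact absurd (hfu' x hxG) (not_le.2 hx)
  obtain ⟨x₀, hx₀⟩ := hne
  obtain ⟨y₀, hy₀⟩ := (Set.ne_univ_iff_exists_notMem G).mp hGne
  have hf0 : f ≠ 0 := by
    intro hf
    have h1 := hfu x₀ hx₀
    have h2 := hfu' y₀ hy₀
    rw [hf] at h1 h2
    simp at h1 h2
    linarith
  set v : EuclideanSpace ℝ (Fin n) := (InnerProductSpace.toDual ℝ (EuclideanSpace ℝ (Fin n))).symm f with hvdef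
  have hv : ∀ x : EuclideanSpace ℝ (Fin n), (inner ℝ v x : ℝ) = f x := by
    intro x; rw [hvdef]; exact InnerProductSpace.toDual_symm_apply
  have hvne : v ≠ 0 := by
    intro hv0
    apply hf0
    have := (InnerProductSpace.toDual ℝ (EuclideanSpace ℝ (Fin n))).symm.injective (a₁ := f) (a₂ := 0)
    apply this
    rw [← hvdef, hv0, map_zero]
  refine ⟨-v, -u, neg_ne_zero.2 hvne, ?_⟩
  rw [hGeq]
  ext x
  simp only [Set.mem_setOf_eq, inner_neg_left, hv x]
  constructor
  · intro h1; linarith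
  · intro h1; linarith
end

section
/- In the convex square-like domain G = {z ∈ ℂ : −1 < Re z < 1, 0 < Im z < 1}, with x = 1/2 + k + i/2, y = −1/2 + i/2, z = −1/2 − k + i/2 for 0 < k < 1/3, one has w_G(x,y) = (1+k)/√(1+(1+k)²), w_G(x,z) = (1+2k)/2, w_G(z,y) = k/(1−k), and the quotient w_G(x,y)/(w_G(x,z)+w_G(z,y)) tends to √2 as k → 0⁺; hence w_G is not a metric and the quasi-metric constant √2 is sharp for arbitrary convex domains. -/
open Metric Set

variable {E : Type*} [NormedAddCommGroup E] [NormedSpace ℝ E]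

/-- The convex domain `{z : −1 < Re z < 1, 0 < Im z < 1}`. -/
def Sq : Set ℂ := {z | -1 < z.re ∧ z.re < 1 ∧ 0 < z.im ∧ z.im < 1}

set_option maxHeartbeats 1000000

lemma equivCLM_apply (z : ℂ) : Complex.equivRealProdCLM.toHomeomorph z = (z.re, z.im) := rfl

lemma Sq_eq : Sq = Complex.equivRealProdCLM.toHomeomorph ⁻¹' (Ioo (-1) 1 ×ˢ Ioo 0 1) := by
  ext z
  simp [Sq, equivCLM_apply, Set.mem_prod]
  tauto

lemma frontier_Sq : frontier Sq =
    {z : ℂ | (-1 ≤ z.re ∧ z.re ≤ 1 ∧ 0 ≤ z.im ∧ z.im ≤ 1) ∧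
      (z.re = -1 ∨ z.re = 1 ∨ z.im = 0 ∨ z.im = 1)} := by
  rw [Sq_eq, ← Homeomorph.preimage_frontier, frontier_prod_eq]
  ext z
  simp only [Set.mem_preimage, equivCLM_apply, Set.mem_union, Set.mem_prod,
    closure_Ioo (by norm_num : (-1:ℝ) ≠ 1), closure_Ioo (by norm_num : (0:ℝ) ≠ 1),
    frontier_Ioo (by norm_num : (-1:ℝ) < 1), frontier_Ioo (by norm_num : (0:ℝ) < 1),
    Set.mem_Icc, Set.mem_insert_iff, Set.mem_singleton_iff, Set.mem_setOf_eq]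
  constructor
  · rintro (⟨⟨h1,h2⟩, h3|h3⟩|⟨h1|h1, h2,h3⟩) <;>
      refine ⟨⟨?_,?_,?_,?_⟩, ?_⟩ <;> simp_all <;> norm_num
  · rintro ⟨⟨h1,h2,h3,h4⟩, h5|h5|h5|h5⟩ <;> simp_all <;> tauto

lemma re_le_dist (z w : ℂ) : |z.re - w.re| ≤ dist z w := by
  have := Complex.abs_re_le_norm (z - w)
  rwa [Complex.sub_re, ← Complex.dist_eq] at this

lemma im_le_dist (z w : ℂ) : |z.im - w.im| ≤ dist z w := by
  have := Complex.abs_im_le_norm (z - w)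
  rwa [Complex.sub_im, ← Complex.dist_eq] at this

lemma dist_re_im (z w : ℂ) (c : ℝ) (hc : 0 ≤ c)
    (h : (z.re - w.re)^2 + (z.im - w.im)^2 = c^2) : dist z w = c := by
  rw [Complex.dist_eq_re_im, h, Real.sqrt_sq hc]

lemma my_le_infDist {s : Set ℂ} {x : ℂ} {d : ℝ} (hs : s.Nonempty)
    (h : ∀ y ∈ s, d ≤ dist x y) : d ≤ Metric.infDist x s := by
  haveI := hs.to_subtype
  rw [Metric.infDist_eq_iInf]
  exact le_ciInf (fun y => h y y.2)

lemma frontier_Sq_nonempty : (frontier Sq).Nonempty := by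
  rw [frontier_Sq]; exact ⟨(1:ℝ), by constructor <;> simp⟩

lemma dG_horiz (a : ℝ) (h1 : -1 < a) (h2 : a < 1) :
    dG Sq (↑a + Complex.I/2) = min (min (1-a) (1+a)) (1/2) := by
  have hre : (↑a + Complex.I/2 : ℂ).re = a := by simp
  have him : (↑a + Complex.I/2 : ℂ).im = 1/2 := by simp [Complex.div_im]
  apply le_antisymm
  · refine le_min (le_min ?_ ?_) ?_
    · have hm : ((1:ℝ) + Complex.I/2 : ℂ) ∈ frontier Sq := by
        rw [frontier_Sq]
        refine ⟨?_, Or.inr (Or.inl (by simp))⟩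
        simp [Complex.div_im]; norm_num
      refine (Metric.infDist_le_dist_of_mem hm).trans_eq ?_
      apply dist_re_im _ _ _ (by linarith)
      simp [Complex.div_im]; ring
    · have hm : ((-1:ℝ) + Complex.I/2 : ℂ) ∈ frontier Sq := by
        rw [frontier_Sq]
        refine ⟨?_, Or.inl (by simp)⟩
        simp [Complex.div_im]; norm_num
      refine (Metric.infDist_le_dist_of_mem hm).trans_eq ?_
      apply dist_re_im _ _ _ (by linarith)
      simp [Complex.div_im]; ring
    · have hm : ((a:ℝ) : ℂ) ∈ frontier Sq := by
        rw [frontier_Sq]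
        refine ⟨?_, Or.inr (Or.inr (Or.inl (by simp)))⟩
        simp; constructor <;> linarith
      refine (Metric.infDist_le_dist_of_mem hm).trans_eq ?_
      apply dist_re_im _ _ _ (by norm_num)
      simp [Complex.div_im]
  · apply my_le_infDist frontier_Sq_nonempty
    intro w hw
    rw [frontier_Sq] at hw
    obtain ⟨⟨b1, b2, b3, b4⟩, hc⟩ := hw
    rcases hc with h | h | h | h
    · calc min (min (1-a) (1+a)) (1/2) ≤ 1 + a := (min_le_left _ _).trans (min_le_right _ _)
        _ ≤ |(↑a + Complex.I/2 : ℂ).re - w.re| := by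
            rw [hre, h, abs_of_nonneg (by linarith)]; linarith
        _ ≤ _ := re_le_dist _ _
    · calc min (min (1-a) (1+a)) (1/2) ≤ 1 - a := (min_le_left _ _).trans (min_le_left _ _)
        _ ≤ |(↑a + Complex.I/2 : ℂ).re - w.re| := by
            rw [hre, h, abs_of_nonpos (by linarith), neg_sub]
        _ ≤ _ := re_le_dist _ _
    · calc min (min (1-a) (1+a)) (1/2) ≤ 1/2 := min_le_right _ _
        _ ≤ |(↑a + Complex.I/2 : ℂ).im - w.im| := by rw [him, h, le_abs]; norm_num
        _ ≤ _ := im_le_dist _ _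
    · calc min (min (1-a) (1+a)) (1/2) ≤ 1/2 := min_le_right _ _
        _ ≤ |(↑a + Complex.I/2 : ℂ).im - w.im| := by rw [him, h, le_abs]; norm_num
        _ ≤ _ := im_le_dist _ _

lemma sq_dist_eq (z w : ℂ) (c : ℝ) (h : dist z w = c) :
    (z.re - w.re)^2 + (z.im - w.im)^2 = c^2 := by
  rw [← Real.sq_sqrt (by positivity : (0:ℝ) ≤ (z.re - w.re)^2 + (z.im - w.im)^2),
    ← Complex.dist_eq_re_im, h]

lemma dG_x (k : ℝ) (hk0 : 0 < k) (hk3 : k < 1/3) :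
    dG Sq (((1/2+k : ℝ):ℂ) + Complex.I/2) = 1/2 - k := by
  rw [dG_horiz _ (by linarith) (by linarith),
    show (1:ℝ)-(1/2+k) = 1/2-k by ring,
    min_eq_left ((min_le_left _ _).trans (by linarith)), min_eq_left (by linarith)]

lemma Xt_x (k : ℝ) (hk0 : 0 < k) (hk3 : k < 1/3) :
    Xt Sq (((1/2+k : ℝ):ℂ) + Complex.I/2) = {((3/2-k : ℝ):ℂ) + Complex.I/2} := by
  have hre : (((1/2+k : ℝ):ℂ) + Complex.I/2).re = 1/2+k := by simp
  have him : (((1/2+k : ℝ):ℂ) + Complex.I/2).im = 1/2 := by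
    simp [Complex.div_im]
  ext w
  simp only [Xt, Set.mem_setOf_eq, Set.mem_singleton_iff, dG_x k hk0 hk3, frontier_Sq]
  constructor
  · rintro ⟨hd, ⟨b1, b2, b3, b4⟩, hc⟩
    have hsq := sq_dist_eq _ _ _ hd
    rw [hre, him] at hsq
    simp only [Complex.smul_re, Complex.smul_im, Complex.add_re, Complex.add_im,
      smul_eq_mul, hre, him] at hc b1 b2 b3 b4
    have hwre : w.re = 3/2 - k := by
      rcases hc with h | h | h | h
      · nlinarith
      · nlinarith
      · nlinarith
      · nlinarith
    rw [hwre] at hsq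
    have h0 : (1/2 - w.im)^2 = 0 := by linear_combination hsq
    have hwim : w.im = 1/2 := by
      have := sq_eq_zero_iff.mp h0
      linarith
    apply Complex.ext
    · simp [hwre]
    · simp [hwim, Complex.div_im]
  · rintro rfl
    refine ⟨?_, ?_⟩
    · apply dist_re_im _ _ _ (by linarith)
      rw [hre, him]
      simp [Complex.div_im]
      ring
    · refine ⟨?_, ?_⟩
      · refine ⟨?_, ?_, ?_, ?_⟩ <;>
          simp [Complex.smul_re, Complex.smul_im, Complex.div_im, smul_eq_mul] <;> linarith
      · right; left
        simp only [Complex.smul_re, Complex.add_re, smul_eq_mul, hre]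
        simp
        ring

lemma dG_z (k : ℝ) (hk0 : 0 < k) (hk3 : k < 1/3) :
    dG Sq (((-1/2-k : ℝ):ℂ) + Complex.I/2) = 1/2 - k := by
  rw [dG_horiz _ (by linarith) (by linarith),
    show (1:ℝ)+(-1/2-k) = 1/2-k by ring,
    min_eq_left ((min_le_right _ _).trans (by linarith)), min_eq_right (by linarith)]

lemma dG_y : dG Sq (((-1/2 : ℝ):ℂ) + Complex.I/2) = 1/2 := by
  rw [dG_horiz _ (by norm_num) (by norm_num)]
  norm_num

lemma Xt_z (k : ℝ) (hk0 : 0 < k) (hk3 : k < 1/3) :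
    Xt Sq (((-1/2-k : ℝ):ℂ) + Complex.I/2) = {((-3/2+k : ℝ):ℂ) + Complex.I/2} := by
  have hre : (((-1/2-k : ℝ):ℂ) + Complex.I/2).re = -1/2-k := by simp
  have him : (((-1/2-k : ℝ):ℂ) + Complex.I/2).im = 1/2 := by simp [Complex.div_im]
  ext w
  simp only [Xt, Set.mem_setOf_eq, Set.mem_singleton_iff, dG_z k hk0 hk3, frontier_Sq]
  constructor
  · rintro ⟨hd, ⟨b1, b2, b3, b4⟩, hc⟩
    have hsq := sq_dist_eq _ _ _ hd
    rw [hre, him] at hsq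
    simp only [Complex.smul_re, Complex.smul_im, Complex.add_re, Complex.add_im,
      smul_eq_mul, hre, him] at hc b1 b2 b3 b4
    have hwre : w.re = -3/2 + k := by
      rcases hc with h | h | h | h
      · nlinarith
      · nlinarith
      · nlinarith
      · nlinarith
    rw [hwre] at hsq
    have h0 : (1/2 - w.im)^2 = 0 := by linear_combination hsq
    have hwim : w.im = 1/2 := by
      have := sq_eq_zero_iff.mp h0
      linarith
    apply Complex.ext
    · simp [hwre]
    · simp [hwim, Complex.div_im]
  · rintro rfl
    refine ⟨?_, ?_⟩
    · apply dist_re_im _ _ _ (by linarith)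
      rw [hre, him]
      simp [Complex.div_im]
      ring
    · refine ⟨?_, ?_⟩
      · refine ⟨?_, ?_, ?_, ?_⟩ <;>
          simp [Complex.smul_re, Complex.smul_im, Complex.div_im, smul_eq_mul] <;> linarith
      · left
        simp only [Complex.smul_re, Complex.add_re, smul_eq_mul, hre]
        simp
        ring

lemma Xt_y :
    Xt Sq (((-1/2 : ℝ):ℂ) + Complex.I/2) =
      {((-3/2 : ℝ):ℂ) + Complex.I/2, ((-1/2 : ℝ):ℂ) + ((-1/2 : ℝ):ℂ)*Complex.I,
        ((-1/2 : ℝ):ℂ) + ((3/2 : ℝ):ℂ)*Complex.I} := by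
  have hre : (((-1/2 : ℝ):ℂ) + Complex.I/2).re = -1/2 := by simp
  have him : (((-1/2 : ℝ):ℂ) + Complex.I/2).im = 1/2 := by simp [Complex.div_im]
  ext w
  simp only [Xt, Set.mem_setOf_eq, Set.mem_insert_iff, Set.mem_singleton_iff, dG_y, frontier_Sq]
  constructor
  · rintro ⟨hd, ⟨b1, b2, b3, b4⟩, hc⟩
    have hsq := sq_dist_eq _ _ _ hd
    rw [hre, him] at hsq
    simp only [Complex.smul_re, Complex.smul_im, Complex.add_re, Complex.add_im,
      smul_eq_mul, hre, him] at hc b1 b2 b3 b4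
    rcases hc with h | h | h | h
    · left
      have hwre : w.re = -3/2 := by linarith
      rw [hwre] at hsq
      have h0 : (1/2 - w.im)^2 = 0 := by linear_combination hsq
      have hwim : w.im = 1/2 := by
        have := sq_eq_zero_iff.mp h0; linarith
      apply Complex.ext
      · simp [hwre]
      · simp [hwim, Complex.div_im]
    · exfalso
      have hwre : w.re = 5/2 := by linarith
      nlinarith
    · right; left
      have hwim : w.im = -1/2 := by linarith
      rw [hwim] at hsq
      have h0 : (-1/2 - w.re)^2 = 0 := by linear_combination hsq
      have hwre : w.re = -1/2 := by
        have := sq_eq_zero_iff.mp h0; linarith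
      apply Complex.ext
      · simp [hwre]
      · simp [hwim]
    · right; right
      have hwim : w.im = 3/2 := by linarith
      rw [hwim] at hsq
      have h0 : (-1/2 - w.re)^2 = 0 := by linear_combination hsq
      have hwre : w.re = -1/2 := by
        have := sq_eq_zero_iff.mp h0; linarith
      apply Complex.ext
      · simp [hwre]
      · simp [hwim]
  · rintro (rfl | rfl | rfl)
    · refine ⟨?_, ⟨?_, ?_, ?_, ?_⟩, ?_⟩
      · apply dist_re_im _ _ _ (by norm_num)
        rw [hre, him, show ((((-3/2 : ℝ):ℂ) + Complex.I/2 : ℂ)).re = -3/2 by simp,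
          show ((((-3/2 : ℝ):ℂ) + Complex.I/2 : ℂ)).im = 1/2 by simp [Complex.div_im]]
        norm_num
      · simp [Complex.smul_re, smul_eq_mul]; linarith
      · simp [Complex.smul_re, smul_eq_mul]; linarith
      · simp [Complex.smul_im, Complex.div_im, smul_eq_mul]
      · simp [Complex.smul_im, Complex.div_im, smul_eq_mul]; linarith
      · left
        simp only [Complex.smul_re, Complex.add_re, smul_eq_mul, hre]
        simp; ring
    · refine ⟨?_, ⟨?_, ?_, ?_, ?_⟩, ?_⟩
      · apply dist_re_im _ _ _ (by norm_num)
        rw [hre, him, show ((((-1/2 : ℝ):ℂ) + ((-1/2 : ℝ):ℂ)*Complex.I : ℂ)).re = -1/2 by simp,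
          show ((((-1/2 : ℝ):ℂ) + ((-1/2 : ℝ):ℂ)*Complex.I : ℂ)).im = -1/2 by simp]
        norm_num
      · simp [Complex.smul_re, smul_eq_mul]; linarith
      · simp [Complex.smul_re, smul_eq_mul]; linarith
      · simp [Complex.smul_im, Complex.div_im, Complex.mul_im, smul_eq_mul]; linarith
      · simp [Complex.smul_im, Complex.div_im, Complex.mul_im, smul_eq_mul]; linarith
      · right; right; left
        simp only [Complex.smul_im, Complex.add_im, smul_eq_mul, him]
        simp [Complex.mul_im]
        ring
    · refine ⟨?_, ⟨?_, ?_, ?_, ?_⟩, ?_⟩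
      · apply dist_re_im _ _ _ (by norm_num)
        rw [hre, him, show ((((-1/2 : ℝ):ℂ) + ((3/2 : ℝ):ℂ)*Complex.I : ℂ)).re = -1/2 by simp,
          show ((((-1/2 : ℝ):ℂ) + ((3/2 : ℝ):ℂ)*Complex.I : ℂ)).im = 3/2 by simp]
        norm_num
      · simp [Complex.smul_re, smul_eq_mul]; linarith
      · simp [Complex.smul_re, smul_eq_mul]; linarith
      · simp [Complex.smul_im, Complex.div_im, Complex.mul_im, smul_eq_mul]; linarith
      · simp [Complex.smul_im, Complex.div_im, Complex.mul_im, smul_eq_mul]; linarith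
      · right; right; right
        simp only [Complex.smul_im, Complex.add_im, smul_eq_mul, him]
        simp [Complex.mul_im]
        ring

lemma sqrt_le_of (a b : ℝ) (hb : 0 ≤ b) (h : a ≤ b^2) : Real.sqrt a ≤ b := by
  rw [← Real.sqrt_sq hb]; exact Real.sqrt_le_sqrt h

lemma le_sqrt_of (a b : ℝ) (ha : 0 ≤ a) (h : a^2 ≤ b) : a ≤ Real.sqrt b := by
  rw [← Real.sqrt_sq ha]; exact Real.sqrt_le_sqrt h

lemma dist_horiz (a b t : ℝ) (h : a ≤ b) :
    dist ((a:ℂ) + (t:ℂ)*Complex.I) ((b:ℂ) + (t:ℂ)*Complex.I) = b - a := by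
  apply dist_re_im _ _ _ (by linarith)
  simp [Complex.mul_im]
  ring

lemma wxy (k : ℝ) (hk0 : 0 < k) (hk3 : k < 1/3) :
    wG Sq (((1/2+k : ℝ):ℂ) + Complex.I/2) (((-1/2 : ℝ):ℂ) + Complex.I/2)
      = (1 + k) / Real.sqrt (1 + (1 + k)^2) := by
  have hd : dist (((1/2+k : ℝ):ℂ) + Complex.I/2) (((-1/2 : ℝ):ℂ) + Complex.I/2) = 1 + k := by
    apply dist_re_im _ _ _ (by linarith)
    simp [Complex.div_im]
    ring
  have h1 : Metric.infDist (((-1/2 : ℝ):ℂ) + Complex.I/2)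
      (Xt Sq (((1/2+k : ℝ):ℂ) + Complex.I/2)) = 2 - k := by
    rw [Xt_x k hk0 hk3, Metric.infDist_singleton]
    apply dist_re_im _ _ _ (by linarith)
    simp [Complex.div_im]
    ring
  have h2 : Metric.infDist (((1/2+k : ℝ):ℂ) + Complex.I/2)
      (Xt Sq (((-1/2 : ℝ):ℂ) + Complex.I/2)) = Real.sqrt (1 + (1+k)^2) := by
    rw [Xt_y]
    apply le_antisymm
    · refine (Metric.infDist_le_dist_of_mem (by right; right; rfl)).trans_eq ?_
      rw [Complex.dist_eq_re_im]
      congr 1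
      simp [Complex.div_im, Complex.mul_im]
      ring
    · apply my_le_infDist ⟨_, Or.inl rfl⟩
      rintro y (rfl | rfl | rfl)
      · have : dist (((1/2+k : ℝ):ℂ) + Complex.I/2) (((-3/2 : ℝ):ℂ) + Complex.I/2) = 2 + k := by
          apply dist_re_im _ _ _ (by linarith)
          simp [Complex.div_im]
          ring
        rw [this]
        apply sqrt_le_of _ _ (by linarith)
        nlinarith
      · apply le_of_eq
        rw [Complex.dist_eq_re_im]
        congr 1
        simp [Complex.div_im, Complex.mul_im]
        ring
      · apply le_of_eq
        rw [Complex.dist_eq_re_im]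
        congr 1
        simp [Complex.div_im, Complex.mul_im]
        ring
  rw [wG, hd, h1, h2, min_eq_left]
  apply sqrt_le_of _ _ (by linarith)
  nlinarith

lemma wxz (k : ℝ) (hk0 : 0 < k) (hk3 : k < 1/3) :
    wG Sq (((1/2+k : ℝ):ℂ) + Complex.I/2) (((-1/2-k : ℝ):ℂ) + Complex.I/2)
      = (1 + 2*k) / 2 := by
  have hd : dist (((1/2+k : ℝ):ℂ) + Complex.I/2) (((-1/2-k : ℝ):ℂ) + Complex.I/2) = 1 + 2*k := by
    apply dist_re_im _ _ _ (by linarith)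
    simp [Complex.div_im]
    ring
  have h1 : Metric.infDist (((1/2+k : ℝ):ℂ) + Complex.I/2)
      (Xt Sq (((-1/2-k : ℝ):ℂ) + Complex.I/2)) = 2 := by
    rw [Xt_z k hk0 hk3, Metric.infDist_singleton]
    apply dist_re_im _ _ _ (by norm_num)
    simp [Complex.div_im]
    ring
  have h2 : Metric.infDist (((-1/2-k : ℝ):ℂ) + Complex.I/2)
      (Xt Sq (((1/2+k : ℝ):ℂ) + Complex.I/2)) = 2 := by
    rw [Xt_x k hk0 hk3, Metric.infDist_singleton]
    apply dist_re_im _ _ _ (by norm_num)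
    simp [Complex.div_im]
    ring
  rw [wG, hd, h1, h2, min_self]

lemma wzy (k : ℝ) (hk0 : 0 < k) (hk3 : k < 1/3) :
    wG Sq (((-1/2-k : ℝ):ℂ) + Complex.I/2) (((-1/2 : ℝ):ℂ) + Complex.I/2)
      = k / (1 - k) := by
  have hd : dist (((-1/2-k : ℝ):ℂ) + Complex.I/2) (((-1/2 : ℝ):ℂ) + Complex.I/2) = k := by
    apply dist_re_im _ _ _ (by linarith)
    simp [Complex.div_im]
  have h1 : Metric.infDist (((-1/2 : ℝ):ℂ) + Complex.I/2)
      (Xt Sq (((-1/2-k : ℝ):ℂ) + Complex.I/2)) = 1 - k := by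
    rw [Xt_z k hk0 hk3, Metric.infDist_singleton]
    apply dist_re_im _ _ _ (by linarith)
    simp [Complex.div_im]
    ring
  have h2 : Metric.infDist (((-1/2-k : ℝ):ℂ) + Complex.I/2)
      (Xt Sq (((-1/2 : ℝ):ℂ) + Complex.I/2)) = 1 - k := by
    rw [Xt_y]
    apply le_antisymm
    · refine (Metric.infDist_le_dist_of_mem (by left; rfl)).trans_eq ?_
      apply dist_re_im _ _ _ (by linarith)
      simp [Complex.div_im]
      ring
    · apply my_le_infDist ⟨_, Or.inl rfl⟩
      rintro y (rfl | rfl | rfl)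
      · apply le_of_eq
        symm
        apply dist_re_im _ _ _ (by linarith)
        simp [Complex.div_im]
        ring
      · have : dist (((-1/2-k : ℝ):ℂ) + Complex.I/2)
            (((-1/2 : ℝ):ℂ) + ((-1/2 : ℝ):ℂ)*Complex.I) = Real.sqrt (k^2 + 1) := by
          rw [Complex.dist_eq_re_im,
            show ((((-1/2 : ℝ):ℂ) + ((-1/2 : ℝ):ℂ)*Complex.I : ℂ)).re = -1/2 by simp,
            show ((((-1/2 : ℝ):ℂ) + ((-1/2 : ℝ):ℂ)*Complex.I : ℂ)).im = -1/2 by simp,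
            show ((((-1/2-k : ℝ):ℂ) + Complex.I/2 : ℂ)).re = -1/2-k by simp,
            show ((((-1/2-k : ℝ):ℂ) + Complex.I/2 : ℂ)).im = 1/2 by simp [Complex.div_im]]
          congr 1
          ring
        rw [this]
        apply le_sqrt_of _ _ (by linarith)
        nlinarith
      · have : dist (((-1/2-k : ℝ):ℂ) + Complex.I/2)
            (((-1/2 : ℝ):ℂ) + ((3/2 : ℝ):ℂ)*Complex.I) = Real.sqrt (k^2 + 1) := by
          rw [Complex.dist_eq_re_im,
            show ((((-1/2 : ℝ):ℂ) + ((3/2 : ℝ):ℂ)*Complex.I : ℂ)).re = -1/2 by simp,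
            show ((((-1/2 : ℝ):ℂ) + ((3/2 : ℝ):ℂ)*Complex.I : ℂ)).im = 3/2 by simp,
            show ((((-1/2-k : ℝ):ℂ) + Complex.I/2 : ℂ)).re = -1/2-k by simp,
            show ((((-1/2-k : ℝ):ℂ) + Complex.I/2 : ℂ)).im = 1/2 by simp [Complex.div_im]]
          congr 1
          ring
        rw [this]
        apply le_sqrt_of _ _ (by linarith)
        nlinarith
  rw [wG, hd, h1, h2, min_self]

lemma pt1 (k : ℝ) : (1/2 + (k:ℂ) + Complex.I/2 : ℂ) = ((1/2+k : ℝ):ℂ) + Complex.I/2 := by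
  push_cast; ring
lemma pt2 : (-(1/2) + Complex.I/2 : ℂ) = ((-1/2 : ℝ):ℂ) + Complex.I/2 := by
  push_cast; ring
lemma pt3 (k : ℝ) : (-(1/2) - (k:ℂ) + Complex.I/2 : ℂ) = ((-1/2-k : ℝ):ℂ) + Complex.I/2 := by
  push_cast; ring


/-- In the domain `Sq`, for `x = 1/2 + k + i/2`, `y = −1/2 + i/2`, `z = −1/2 − k + i/2`
with `0 < k < 1/3`, the values of `w` are as stated, and the quotient
`w(x,y)/(w(x,z)+w(z,y))` tends to `√2` as `k → 0⁺`; hence `w` is not a metric and the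
constant `√2` is sharp for arbitrary convex domains. -/
theorem w_not_metric_square :
    (∀ k : ℝ, 0 < k → k < 1/3 →
      wG Sq (1/2 + (k : ℂ) + Complex.I/2) (-(1/2) + Complex.I/2)
          = (1 + k) / Real.sqrt (1 + (1 + k)^2) ∧
      wG Sq (1/2 + (k : ℂ) + Complex.I/2) (-(1/2) - (k : ℂ) + Complex.I/2)
          = (1 + 2*k) / 2 ∧
      wG Sq (-(1/2) - (k : ℂ) + Complex.I/2) (-(1/2) + Complex.I/2)
          = k / (1 - k)) ∧
    Filter.Tendsto (fun k : ℝ =>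
        wG Sq (1/2 + (k : ℂ) + Complex.I/2) (-(1/2) + Complex.I/2) /
          (wG Sq (1/2 + (k : ℂ) + Complex.I/2) (-(1/2) - (k : ℂ) + Complex.I/2) +
            wG Sq (-(1/2) - (k : ℂ) + Complex.I/2) (-(1/2) + Complex.I/2)))
      (nhdsWithin 0 (Set.Ioi 0)) (nhds (Real.sqrt 2)) := by
  constructor
  · intro k hk0 hk3
    rw [pt1, pt2, pt3]
    exact ⟨wxy k hk0 hk3, wxz k hk0 hk3, wzy k hk0 hk3⟩
  · set g : ℝ → ℝ := fun k =>
      ((1+k)/Real.sqrt (1+(1+k)^2)) / ((1+2*k)/2 + k/(1-k)) with hg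
    have hcongr : g =ᶠ[nhdsWithin 0 (Set.Ioi 0)] (fun k : ℝ =>
        wG Sq (1/2 + (k : ℂ) + Complex.I/2) (-(1/2) + Complex.I/2) /
          (wG Sq (1/2 + (k : ℂ) + Complex.I/2) (-(1/2) - (k : ℂ) + Complex.I/2) +
            wG Sq (-(1/2) - (k : ℂ) + Complex.I/2) (-(1/2) + Complex.I/2))) := by
      filter_upwards [Ioo_mem_nhdsGT_of_mem
        (show (0:ℝ) ∈ Set.Ico (0:ℝ) (1/3) by norm_num)] with k hk
      obtain ⟨hk0, hk3⟩ := hk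
      rw [pt1, pt2, pt3, wxy k hk0 hk3, wxz k hk0 hk3, wzy k hk0 hk3]
    have hsne : Real.sqrt (1+(1+(0:ℝ))^2) ≠ 0 := by
      rw [show (1:ℝ)+(1+(0:ℝ))^2 = 2 by norm_num]
      positivity
    have c2 : ContinuousAt (fun k:ℝ => (1+k)/Real.sqrt (1+(1+k)^2)) 0 := by
      apply ContinuousAt.div
      · fun_prop
      · exact (Real.continuous_sqrt.comp (by continuity)).continuousAt
      · exact hsne
    have c3 : ContinuousAt (fun k:ℝ => (1+2*k)/2 + k/(1-k)) 0 := by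
      apply ContinuousAt.add
      · fun_prop
      · apply ContinuousAt.div
        · fun_prop
        · fun_prop
        · norm_num
    have c4 : ContinuousAt g 0 := by
      apply ContinuousAt.div c2 c3
      norm_num
    have hg0 : g 0 = Real.sqrt 2 := by
      rw [hg]
      simp only
      rw [show (1:ℝ)+(1+(0:ℝ))^2 = 2 by norm_num]
      have h2 := Real.sq_sqrt (show (0:ℝ) ≤ 2 by norm_num)
      have hpos : 0 < Real.sqrt 2 := Real.sqrt_pos.mpr (by norm_num)
      field_simp
      rw [h2]; ring
    have := c4.tendsto.mono_left (nhdsWithin_le_nhds (s := Set.Ioi (0:ℝ)))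
    rw [hg0] at this
    exact this.congr' hcongr
end

section
/- For any convex domain G ⊊ ℝⁿ and all x, y ∈ G, j*_G(x,y) ≤ w_G(x,y). -/
open Metric Set

variable {E : Type*} [NormedAddCommGroup E] [NormedSpace ℝ E]

/-- The ball around `x ∈ G` of radius `dG G x` is contained in `G`. -/
lemma ball_dG_subset (G : Set E) (hGopen : IsOpen G) {x : E} (hx : x ∈ G) :
    ball x (dG G x) ⊆ G := by
  rcases le_or_gt (dG G x) 0 with h | h
  · simp [ball_eq_empty.2 h]
  · have hsub : ball x (dG G x) ⊆ interior G ∪ interior Gᶜ := by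
      intro p hp
      have hpf : p ∉ frontier G := Metric.ball_infDist_subset_compl hp
      rw [frontier, mem_diff, not_and_or, not_not] at hpf
      rcases hpf with h1 | h1
      · right; rwa [interior_compl, mem_compl_iff]
      · left; exact h1
    have := (convex_ball x _).isPreconnected.subset_left_of_subset_union
      isOpen_interior isOpen_interior ?_ hsub ⟨x, mem_ball_self h, by rwa [hGopen.interior_eq]⟩
    · intro p hp; rw [← hGopen.interior_eq]; exact this hp
    · rw [interior_compl]
      exact disjoint_compl_right.mono_left (interior_subset.trans subset_closure)

/-- For a convex open `G` and `x ∈ G`, points of `Xt G x` lie outside `closure G`. -/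
lemma Xt_subset_compl_closure (G : Set E) (hGopen : IsOpen G) (hGconv : Convex ℝ G)
    {x : E} (hx : x ∈ G) : Xt G x ⊆ (closure G)ᶜ := by
  intro p hp
  rcases hp with ⟨-, hm⟩
  intro hpc
  have hxint : x ∈ interior G := by rwa [hGopen.interior_eq]
  have hmem : (2⁻¹ : ℝ) • x + (2⁻¹ : ℝ) • p ∈ interior G :=
    hGconv.combo_interior_closure_mem_interior hxint hpc (by norm_num) (by norm_num) (by norm_num)
  have heq : (2⁻¹ : ℝ) • (x + p) = (2⁻¹ : ℝ) • x + (2⁻¹ : ℝ) • p := smul_add _ _ _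
  rw [heq] at hm
  exact hm.2 hmem

/-- For any convex domain `G ⊊ ℝⁿ` and all `x, y ∈ G`, `j*_G(x,y) ≤ w_G(x,y)`. -/
theorem j_le_w_convex (n : ℕ) (G : Set (EuclideanSpace ℝ (Fin n)))
    (hGopen : IsOpen G) (hGconv : Convex ℝ G) (hGnonempty : G.Nonempty)
    (hGne : G ≠ Set.univ)
    (x y : EuclideanSpace ℝ (Fin n)) (hx : x ∈ G) (hy : y ∈ G) :
    jG G x y ≤ wG G x y := by
  have hF : (frontier G).Nonempty := nonempty_frontier_iff.2 ⟨hGnonempty, hGne⟩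
  have hdpos : ∀ u ∈ G, 0 < dG G u := by
    intro u hu
    rw [dG, ← isClosed_frontier.notMem_iff_infDist_pos hF]
    intro hf
    exact (hGopen.inter_frontier_eq ▸ (mem_inter hu hf) : u ∈ (∅ : Set _))
  -- construct a point of `Xt G u` for `u ∈ G`
  have hXt : ∀ u ∈ G, ∃ p ∈ Xt G u, dist u p = 2 * dG G u := by
    intro u hu
    obtain ⟨z, hz, hdz⟩ := isClosed_frontier.exists_infDist_eq_dist hF u
    refine ⟨z + (z - u), ⟨?_, ?_⟩, ?_⟩
    · have h1 : u - (z + (z - u)) = (2 : ℝ) • (u - z) := by module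
      rw [dist_eq_norm, h1, norm_smul, dG, hdz, dist_eq_norm]
      norm_num
    · have h2 : (2⁻¹ : ℝ) • (u + (z + (z - u))) = z := by module
      rw [h2]; exact hz
    · have h1 : u - (z + (z - u)) = (2 : ℝ) • (u - z) := by module
      rw [dist_eq_norm, h1, norm_smul, dG, hdz, dist_eq_norm]
      norm_num
  -- lower bound on infDist to Xt
  have hlow : ∀ u ∈ G, ∀ v ∈ G, dG G v ≤ Metric.infDist v (Xt G u) := by
    intro u hu v hv
    obtain ⟨p, hp, -⟩ := hXt u hu
    by_contra hlt
    push_neg at hlt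
    obtain ⟨q, hq, hdq⟩ := (Metric.infDist_lt_iff ⟨p, hp⟩).1 hlt
    have hqc : q ∉ closure G := Xt_subset_compl_closure G hGopen hGconv hu hq
    exact hqc (subset_closure (ball_dG_subset G hGopen hv (by rwa [mem_ball, dist_comm])))
  -- upper bound on infDist to Xt
  have hup : ∀ u ∈ G, ∀ v : EuclideanSpace ℝ (Fin n),
      Metric.infDist v (Xt G u) ≤ dist v u + 2 * dG G u := by
    intro u hu v
    obtain ⟨p, hp, hd⟩ := hXt u hu
    calc Metric.infDist v (Xt G u) ≤ dist v p := Metric.infDist_le_dist_of_mem hp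
      _ ≤ dist v u + dist u p := dist_triangle _ _ _
      _ = dist v u + 2 * dG G u := by rw [hd]
  set A := Metric.infDist x (Xt G y)
  set B := Metric.infDist y (Xt G x)
  have hAB : 0 < min A B :=
    lt_min (lt_of_lt_of_le (hdpos x hx) (hlow y hy x hx))
      (lt_of_lt_of_le (hdpos y hy) (hlow x hx y hy))
  have hle : min A B ≤ dist x y + 2 * min (dG G x) (dG G y) := by
    rcases le_total (dG G x) (dG G y) with h | h
    · calc min A B ≤ B := min_le_right _ _
        _ ≤ dist y x + 2 * dG G x := hup x hx y
        _ = dist x y + 2 * min (dG G x) (dG G y) := by rw [dist_comm, min_eq_left h]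
    · calc min A B ≤ A := min_le_left _ _
        _ ≤ dist x y + 2 * dG G y := hup y hy x
        _ = dist x y + 2 * min (dG G x) (dG G y) := by rw [min_eq_right h]
  rw [jG, wG]
  exact div_le_div_of_nonneg_left dist_nonneg hAB hle
end

section
/- For any convex domain G ⊊ ℝⁿ and all x, y ∈ G, w_G(x,y) ≤ s_G(x,y) ≤ √2·w_G(x,y). -/
open Metric Set

variable {E : Type*} [NormedAddCommGroup E] [NormedSpace ℝ E]

section Aux

open RealInnerProductSpace

variable {F : Type*} [NormedAddCommGroup F] [InnerProductSpace ℝ F]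

/-- A segment from a point of an open set `G` to a point outside `G` meets the frontier. -/
lemma segment_meets_frontier {G : Set F} (hG : IsOpen G) {x p : F}
    (hx : x ∈ G) (hp : p ∉ G) : ∃ z ∈ frontier G, z ∈ segment ℝ x p := by
  by_cases hpc : p ∈ closure G
  · exact ⟨p, ⟨hpc, by rwa [hG.interior_eq]⟩, right_mem_segment _ _ _⟩
  · by_contra h
    push_neg at h
    have hpre : IsPreconnected (segment ℝ x p) := (convex_segment x p).isPreconnected
    have hsub : segment ℝ x p ⊆ G ∪ (closure G)ᶜ := by
      intro w hw
      by_cases hwc : w ∈ closure G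
      · by_cases hwG : w ∈ G
        · exact Or.inl hwG
        · exact absurd hw (h w ⟨hwc, by rwa [hG.interior_eq]⟩)
      · exact Or.inr hwc
    obtain ⟨w, -, hw1, hw2⟩ := hpre G (closure G)ᶜ hG isClosed_closure.isOpen_compl hsub
      ⟨x, left_mem_segment _ _ _, hx⟩ ⟨p, right_mem_segment _ _ _, hpc⟩
    exact hw2 (subset_closure hw1)

/-- Distance to the frontier is at most the distance to any point outside `G`. -/
lemma infDist_frontier_le {G : Set F} (hG : IsOpen G) {x p : F}
    (hx : x ∈ G) (hp : p ∉ G) : Metric.infDist x (frontier G) ≤ dist x p := by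
  obtain ⟨z, hz, hzseg⟩ := segment_meets_frontier hG hx hp
  have h1 : dist x z + dist z p = dist x p := dist_add_dist_of_mem_segment hzseg
  have h2 : Metric.infDist x (frontier G) ≤ dist x z := infDist_le_dist_of_mem hz
  have := dist_nonneg (x := z) (y := p)
  linarith

/-- Detour through the frontier. -/
lemma detour_frontier {G : Set F} (hG : IsOpen G) {x p : F} (y : F)
    (hx : x ∈ G) (hp : p ∉ G) :
    ∃ z ∈ frontier G, dist x z + dist z y ≤ dist x p + dist p y := by
  obtain ⟨z, hz, hzseg⟩ := segment_meets_frontier hG hx hp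
  have h1 : dist x z + dist z p = dist x p := dist_add_dist_of_mem_segment hzseg
  have h2 : dist z y ≤ dist z p + dist p y := dist_triangle _ _ _
  exact ⟨z, hz, by linarith⟩

/-- Supporting hyperplane with unit normal. -/
lemma exists_unit_support {G : Set F} [CompleteSpace F] (hGconv : Convex ℝ G)
    (hGopen : IsOpen G) {x z : F} (hx : x ∈ G) (hz : z ∈ frontier G) :
    ∃ e : F, ‖e‖ = 1 ∧ ∀ a ∈ G, ⟪e, a⟫ < ⟪e, z⟫ := by
  have hzG : z ∉ G := fun hmem => hz.2 (by rwa [hGopen.interior_eq])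
  obtain ⟨f, hf⟩ := geometric_hahn_banach_open_point hGconv hGopen hzG
  set v := (InnerProductSpace.toDual ℝ F).symm f with hv
  have hvapp : ∀ u : F, ⟪v, u⟫ = f u := fun u => InnerProductSpace.toDual_symm_apply
  have hvne : v ≠ 0 := by
    intro h0
    have : f x < f x := by
      have h1 := hf x hx
      have h2 : f x = 0 := by rw [← hvapp x, h0, inner_zero_left]
      have h3 : f z = 0 := by rw [← hvapp z, h0, inner_zero_left]
      rw [h2, h3] at h1; exact absurd h1 (lt_irrefl 0)
    exact absurd this (lt_irrefl _)
  refine ⟨‖v‖⁻¹ • v, ?_, ?_⟩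
  · rw [norm_smul, norm_inv, norm_norm, inv_mul_cancel₀ (norm_ne_zero_iff.mpr hvne)]
  · intro a ha
    have h1 : f a < f z := hf a ha
    have hpos : (0:ℝ) < ‖v‖⁻¹ := inv_pos.mpr (norm_pos_iff.mpr hvne)
    rw [real_inner_smul_left, real_inner_smul_left, hvapp, hvapp]
    exact (mul_lt_mul_iff_right₀ hpos).mpr h1

/-- Reflection across the hyperplane `⟪e,·⟫ = r` preserves the norm. -/
lemma refl_norm {e : F} (he : ‖e‖ = 1) {u : F} {r : ℝ} (h : ⟪e, u⟫ = r) :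
    ‖u - (2*r) • e‖ = ‖u‖ := by
  have h2 : ‖u - (2*r) • e‖ ^ 2 = ‖u‖ ^ 2 := by
    rw [norm_sub_sq_real, real_inner_smul_right, real_inner_comm, h, norm_smul]
    simp only [Real.norm_eq_abs, he, mul_one]
    rw [sq_abs]
    ring
  have h3 := norm_nonneg (u - (2*r) • e)
  have h4 := norm_nonneg u
  nlinarith

/-- Every boundary point gives the lower bound `√(d² + 4 d_G(x) d_G(y))`. -/
lemma key_lower {G : Set F} [CompleteSpace F] (hGconv : Convex ℝ G) (hGopen : IsOpen G)
    {x y z : F} (hx : x ∈ G) (hy : y ∈ G) (hz : z ∈ frontier G) :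
    Real.sqrt (dist x y ^ 2 + 4 * dG G x * dG G y) ≤ dist x z + dist z y := by
  obtain ⟨e, he, hsupp⟩ := exists_unit_support hGconv hGopen hx hz
  set c := ⟪e, z⟫ with hc
  set a := c - ⟪e, x⟫ with ha
  set b := c - ⟪e, y⟫ with hb
  have hapos : 0 < a := sub_pos.mpr (hsupp x hx)
  have hbpos : 0 < b := sub_pos.mpr (hsupp y hy)
  have hesq : ⟪e, e⟫ = 1 := by
    rw [real_inner_self_eq_norm_sq, he]; norm_num
  -- dG G x ≤ a
  have hqx : dG G x ≤ a := by
    have hq : x + a • e ∉ G := by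
      intro hmem
      have := hsupp _ hmem
      rw [inner_add_right, real_inner_smul_right, hesq] at this
      simp only [mul_one] at this
      rw [ha] at this; linarith
    have := infDist_frontier_le hGopen hx hq
    rw [dist_eq_norm] at this
    have heq : ‖x - (x + a • e)‖ = a := by
      have : x - (x + a • e) = -(a • e) := by abel
      rw [this, norm_neg, norm_smul, he, mul_one, Real.norm_eq_abs, abs_of_pos hapos]
    rw [heq] at this
    exact this
  have hqy : dG G y ≤ b := by
    have hq : y + b • e ∉ G := by
      intro hmem
      have := hsupp _ hmem
      rw [inner_add_right, real_inner_smul_right, hesq] at this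
      simp only [mul_one] at this
      rw [hb] at this; linarith
    have := infDist_frontier_le hGopen hy hq
    rw [dist_eq_norm] at this
    have heq : ‖y - (y + b • e)‖ = b := by
      have : y - (y + b • e) = -(b • e) := by abel
      rw [this, norm_neg, norm_smul, he, mul_one, Real.norm_eq_abs, abs_of_pos hbpos]
    rw [heq] at this
    exact this
  -- reflected point y' = y + (2b) e
  set y' := y + (2*b) • e with hy'
  have hrefl : dist z y' = dist z y := by
    have hdiff : z - y' = (z - y) - (2*b) • e := by rw [hy']; abel
    have hinner : ⟪e, z - y⟫ = b := by
      rw [inner_sub_right]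
      all_goals rw [hb, hc]
      all_goals ring
    rw [dist_eq_norm, dist_eq_norm, hdiff, refl_norm he hinner]
  have hxy' : dist x y' ^ 2 = dist x y ^ 2 + 4 * a * b := by
    have hdiff : y' - x = (y - x) + (2*b) • e := by rw [hy']; abel
    rw [dist_eq_norm', dist_eq_norm', hdiff, norm_add_sq_real, real_inner_smul_right]
    have hinner : ⟪y - x, e⟫ = a - b := by
      rw [real_inner_comm, inner_sub_right, ha, hb]; ring
    rw [hinner, norm_smul, Real.norm_eq_abs, he, mul_one, sq_abs]
    ring
  have htri : dist x y' ≤ dist x z + dist z y := by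
    calc dist x y' ≤ dist x z + dist z y' := dist_triangle _ _ _
    _ = dist x z + dist z y := by rw [hrefl]
  refine le_trans ?_ htri
  have h1 : dist x y ^ 2 + 4 * dG G x * dG G y ≤ dist x y' ^ 2 := by
    rw [hxy']
    have h0x : 0 ≤ dG G x := infDist_nonneg
    have h0y : 0 ≤ dG G y := infDist_nonneg
    nlinarith
  calc Real.sqrt (dist x y ^ 2 + 4 * dG G x * dG G y)
      ≤ Real.sqrt (dist x y' ^ 2) := Real.sqrt_le_sqrt h1
    _ = dist x y' := Real.sqrt_sq dist_nonneg

/-- The triangular-ratio infimum is bounded by the distance to any point of `X̃`. -/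
lemma key_upper {G : Set F} [CompleteSpace F] (hGconv : Convex ℝ G) (hGopen : IsOpen G)
    (hfr : (frontier G).Nonempty) {x y x' : F} (hx : x ∈ G) (hy : y ∈ G)
    (hx' : x' ∈ Xt G x) :
    (⨅ z : frontier G, (dist x (z:F) + dist (z:F) y)) ≤ dist y x' := by
  obtain ⟨hdist, hmid⟩ := hx'
  set z := (2⁻¹ : ℝ) • (x + x') with hzdef
  set D := dG G x with hD
  have hDpos : 0 < D :=
    (isClosed_frontier.notMem_iff_infDist_pos hfr).mp
      (fun hf => hf.2 (by rwa [hGopen.interior_eq]))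
  have hzx : z - x = (2⁻¹ : ℝ) • (x' - x) := by
    rw [hzdef]; module
  have hzxnorm : ‖z - x‖ = D := by
    rw [hzx, norm_smul]
    rw [dist_eq_norm'] at hdist
    simp only [Real.norm_eq_abs]
    rw [hdist]
    rw [abs_of_pos (by norm_num : (0:ℝ) < 2⁻¹)]
    ring
  obtain ⟨e, he, hsupp⟩ := exists_unit_support hGconv hGopen hx hmid
  have hesq : ⟪e, e⟫ = 1 := by
    rw [real_inner_self_eq_norm_sq, he]; norm_num
  set c := ⟪e, z⟫ with hc
  set a := c - ⟪e, x⟫ with ha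
  have hapos : 0 < a := sub_pos.mpr (hsupp x hx)
  -- a ≤ D by Cauchy-Schwarz, D ≤ a by separation; hence a = D
  have haD1 : a ≤ D := by
    have h1 : ⟪e, z - x⟫ = a := by
      rw [inner_sub_right]
      all_goals rw [ha, hc]
      all_goals ring
    have h2 := real_inner_le_norm e (z - x)
    rw [h1, he, one_mul, hzxnorm] at h2
    exact h2
  have haD2 : D ≤ a := by
    have hq : x + a • e ∉ G := by
      intro hmem
      have := hsupp _ hmem
      rw [inner_add_right, real_inner_smul_right, hesq] at this
      simp only [mul_one] at this
      rw [ha] at this; linarith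
    have := infDist_frontier_le hGopen hx hq
    rw [dist_eq_norm] at this
    have heq : ‖x - (x + a • e)‖ = a := by
      have : x - (x + a • e) = -(a • e) := by abel
      rw [this, norm_neg, norm_smul, he, mul_one, Real.norm_eq_abs]
      all_goals exact abs_of_pos hapos
    rw [hD]; rw [heq] at this; exact this
  have haD : a = D := le_antisymm haD1 haD2
  -- z - x = D • e  (foot of perpendicular)
  have hfoot : z - x = D • e := by
    have h1 : ⟪e, z - x⟫ = D := by
      rw [inner_sub_right, ← hc, ← ha, haD]
      all_goals ring
    have h2 : ‖(z - x) - D • e‖ ^ 2 = 0 := by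
      rw [norm_sub_sq_real, real_inner_smul_right, real_inner_comm, h1, norm_smul,
        Real.norm_eq_abs, he, mul_one, sq_abs, hzxnorm]
      ring
    have h3 : ‖(z - x) - D • e‖ = 0 := by
      have := norm_nonneg ((z - x) - D • e)
      nlinarith
    exact sub_eq_zero.mp (norm_eq_zero.mp h3)
  have hx'eq : x' = x + (2*D) • e := by
    have h4 : x' - x = (2:ℝ) • (z - x) := by rw [hzx]; module
    rw [hfoot] at h4
    have h5 : x' - x = (2*D) • e := by rw [h4, smul_smul]
    have := sub_eq_iff_eq_add'.mp h5
    rw [this]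
  set b := c - ⟪e, y⟫ with hb
  have hbpos : 0 < b := sub_pos.mpr (hsupp y hy)
  have hbD : 0 < b + D := by linarith
  set t := b / (b + D) with ht
  have ht0 : 0 ≤ t := le_of_lt (div_pos hbpos hbD)
  have ht1 : t ≤ 1 := by
    rw [ht, div_le_one hbD]; linarith
  set z' := y + t • (x' - y) with hz'
  have hz'seg : z' ∈ segment ℝ y x' := by
    rw [segment_eq_image']
    exact ⟨t, ⟨ht0, ht1⟩, rfl⟩
  have hsplit : dist y z' + dist z' x' = dist y x' := dist_add_dist_of_mem_segment hz'seg
  have hex : ⟪e, x⟫ = c - D := by rw [← haD, ha]; ring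
  have hex' : ⟪e, x'⟫ = c + D := by
    rw [hx'eq, inner_add_right, real_inner_smul_right, hesq, hex]; ring
  have hz'inner : ⟪e, z'⟫ = c := by
    rw [hz', inner_add_right, real_inner_smul_right, inner_sub_right, hex']
    have hey : ⟪e, y⟫ = c - b := by rw [hb]; ring
    rw [hey, ht]
    field_simp
    ring
  have hz'G : z' ∉ G := by
    intro hmem
    have := hsupp _ hmem
    rw [hz'inner] at this
    exact absurd this (lt_irrefl c)
  have hreflx : dist z' x' = dist z' x := by
    have hinner : ⟪e, x - z'⟫ = -D := by
      rw [inner_sub_right, hex, hz'inner]; ring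
    have hdiff : x' - z' = (x - z') - (2*(-D)) • e := by
      rw [hx'eq]
      have : (2*(-D)) • e = -((2*D) • e) := by rw [← neg_smul]; ring_nf
      rw [this]
      abel
    rw [dist_eq_norm', dist_eq_norm', hdiff, refl_norm he hinner]
  obtain ⟨w, hw, hwle⟩ := detour_frontier hGopen y hx hz'G
  have hbdd : BddBelow (Set.range fun z : frontier G => dist x (z:F) + dist (z:F) y) := by
    refine ⟨0, ?_⟩
    rintro r ⟨w', rfl⟩
    positivity
  calc (⨅ z : frontier G, (dist x (z:F) + dist (z:F) y))
      ≤ dist x w + dist w y := ciInf_le hbdd (⟨w, hw⟩ : frontier G)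
    _ ≤ dist x z' + dist z' y := hwle
    _ = dist z' x' + dist y z' := by rw [dist_comm x z', dist_comm z' y, hreflx]
    _ = dist y x' := by linarith [hsplit]

end Aux

/-- For any convex domain `G ⊊ ℝⁿ` and all `x, y ∈ G`,
`w_G(x,y) ≤ s_G(x,y) ≤ √2 · w_G(x,y)`. -/
theorem w_le_s_le_sqrt_two_w_convex (n : ℕ) (G : Set (EuclideanSpace ℝ (Fin n)))
    (hGopen : IsOpen G) (hGconv : Convex ℝ G) (hGnonempty : G.Nonempty)
    (hGne : G ≠ Set.univ)
    (x y : EuclideanSpace ℝ (Fin n)) (hx : x ∈ G) (hy : y ∈ G) :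
    wG G x y ≤ sG G x y ∧ sG G x y ≤ Real.sqrt 2 * wG G x y := by
  by_cases hxy : x = y
  · subst hxy
    constructor <;> simp [wG, sG, dist_self]
  -- main case
  have hfr : (frontier G).Nonempty := nonempty_frontier_iff.mpr ⟨hGnonempty, hGne⟩
  haveI hfrne : Nonempty ↥(frontier G) := hfr.to_subtype
  set d := dist x y with hd
  have hdpos : 0 < d := dist_pos.mpr hxy
  set Dx := dG G x with hDx
  set Dy := dG G y with hDy
  have hxnotfr : x ∉ frontier G := fun hf => hf.2 (by rwa [hGopen.interior_eq])
  have hynotfr : y ∉ frontier G := fun hf => hf.2 (by rwa [hGopen.interior_eq])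
  have hDxpos : 0 < Dx := (isClosed_frontier.notMem_iff_infDist_pos hfr).mp hxnotfr
  have hDypos : 0 < Dy := (isClosed_frontier.notMem_iff_infDist_pos hfr).mp hynotfr
  set m := min Dx Dy with hm
  have hmpos : 0 < m := lt_min hDxpos hDypos
  have hmDx : m ≤ Dx := min_le_left _ _
  have hmDy : m ≤ Dy := min_le_right _ _
  set S := ⨅ z : frontier G, (dist x (z : EuclideanSpace ℝ (Fin n)) + dist (z : EuclideanSpace ℝ (Fin n)) y) with hS
  have hSlb : Real.sqrt (d^2 + 4*Dx*Dy) ≤ S :=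
    le_ciInf fun z => key_lower hGconv hGopen hx hy z.2
  have hsqrt2 : (0:ℝ) < Real.sqrt 2 := Real.sqrt_pos.mpr (by norm_num)
  have hsqrt_lb : (d + 2*m)/Real.sqrt 2 ≤ Real.sqrt (d^2 + 4*Dx*Dy) := by
    have h2 : ((d + 2*m)/Real.sqrt 2)^2 ≤ d^2 + 4*Dx*Dy := by
      rw [div_pow, Real.sq_sqrt (by norm_num : (0:ℝ) ≤ 2), div_le_iff₀ (by norm_num : (0:ℝ) < 2)]
      nlinarith [sq_nonneg (d - 2*m), mul_le_mul hmDx hmDy (le_of_lt hmpos) (le_of_lt hDxpos)]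
    exact (Real.le_sqrt (by positivity) (by positivity)).mpr h2
  have hSpos : 0 < S :=
    lt_of_lt_of_le (by positivity) (le_trans hsqrt_lb hSlb)
  -- the sets Xt are nonempty and closed, and don't contain the other point
  have hXtne : ∀ u : EuclideanSpace ℝ (Fin n), (Xt G u).Nonempty := by
    intro u
    obtain ⟨z₀, hz₀, hz₀d⟩ := isClosed_frontier.exists_infDist_eq_dist hfr u
    refine ⟨(2:ℝ) • z₀ - u, ?_, ?_⟩
    · have h1 : u - ((2:ℝ) • z₀ - u) = (2:ℝ) • (u - z₀) := by module
      rw [dist_eq_norm, h1, norm_smul]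
      simp only [Real.norm_eq_abs]
      rw [abs_of_pos (by norm_num : (0:ℝ) < 2), ← dist_eq_norm, ← hz₀d]
      rfl
    · have h2 : (2⁻¹ : ℝ) • (u + ((2:ℝ) • z₀ - u)) = z₀ := by module
      rwa [h2]
  have hXtclosed : ∀ u : EuclideanSpace ℝ (Fin n), IsClosed (Xt G u) := by
    intro u
    have heq : Xt G u = (fun x' => dist u x') ⁻¹' {2 * dG G u} ∩
        (fun x' => (2⁻¹:ℝ) • (u + x')) ⁻¹' (frontier G) := rfl
    rw [heq]
    exact (isClosed_singleton.preimage (Continuous.dist continuous_const continuous_id)).inter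
      (isClosed_frontier.preimage ((continuous_const.add continuous_id).const_smul (2⁻¹:ℝ)))
  have hmidG : ∀ u v : EuclideanSpace ℝ (Fin n), u ∈ G → v ∈ G → v ∉ Xt G u := by
    intro u v hu hv hmem
    have h1 : (2⁻¹:ℝ) • (u + v) = (2⁻¹:ℝ) • u + (2⁻¹:ℝ) • v := smul_add _ _ _
    have h2 : (2⁻¹:ℝ) • u + (2⁻¹:ℝ) • v ∈ G :=
      hGconv hu hv (by norm_num) (by norm_num) (by norm_num)
    have h3 : (2⁻¹:ℝ) • (u + v) ∈ frontier G := hmem.2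
    rw [h1] at h3
    exact h3.2 (by rwa [hGopen.interior_eq])
  set A := Metric.infDist x (Xt G y) with hA
  set B := Metric.infDist y (Xt G x) with hB
  have hApos : 0 < A := ((hXtclosed y).notMem_iff_infDist_pos (hXtne y)).mp (hmidG y x hy hx)
  have hBpos : 0 < B := ((hXtclosed x).notMem_iff_infDist_pos (hXtne x)).mp (hmidG x y hx hy)
  set W := min A B with hW
  have hWpos : 0 < W := lt_min hApos hBpos
  have hBle : B ≤ d + 2*Dx := by
    obtain ⟨x'₀, hmem⟩ := hXtne x
    calc B ≤ dist y x'₀ := infDist_le_dist_of_mem hmem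
      _ ≤ dist y x + dist x x'₀ := dist_triangle _ _ _
      _ = d + 2*Dx := by
          rw [dist_comm y x, hmem.1]
          all_goals ring
  have hAle : A ≤ d + 2*Dy := by
    obtain ⟨y'₀, hmem⟩ := hXtne y
    calc A ≤ dist x y'₀ := infDist_le_dist_of_mem hmem
      _ ≤ dist x y + dist y y'₀ := dist_triangle _ _ _
      _ = d + 2*Dy := by
          rw [hmem.1]
          all_goals ring
  have hWle : W ≤ d + 2*m := by
    rcases le_total Dx Dy with h | h
    · calc W ≤ B := min_le_right _ _
        _ ≤ d + 2*Dx := hBle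
        _ = d + 2*m := by rw [hm, min_eq_left h]
    · calc W ≤ A := min_le_left _ _
        _ ≤ d + 2*Dy := hAle
        _ = d + 2*m := by rw [hm, min_eq_right h]
  have hSsymm : S = ⨅ z : frontier G, (dist y (z : EuclideanSpace ℝ (Fin n)) + dist (z : EuclideanSpace ℝ (Fin n)) x) := by
    apply iInf_congr
    intro z
    rw [dist_comm x (z : EuclideanSpace ℝ (Fin n)), dist_comm (z : EuclideanSpace ℝ (Fin n)) y]
    ring
  have hSW : S ≤ W := by
    apply le_min
    · -- S ≤ A
      haveI : Nonempty ↥(Xt G y) := (hXtne y).to_subtype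
      rw [hA, infDist_eq_iInf]
      apply le_ciInf
      intro y'
      rw [hSsymm]
      exact key_upper hGconv hGopen hfr hy hx y'.2
    · -- S ≤ B
      haveI : Nonempty ↥(Xt G x) := (hXtne x).to_subtype
      rw [hB, infDist_eq_iInf]
      apply le_ciInf
      intro x'
      exact key_upper hGconv hGopen hfr hx hy x'.2
  have hwG : wG G x y = d / W := rfl
  have hsG : sG G x y = d / S := rfl
  constructor
  · rw [hwG, hsG]
    gcongr
  · rw [hsG, hwG]
    have hdm : 0 < d + 2*m := by linarith
    calc d / S ≤ d / ((d + 2*m)/Real.sqrt 2) :=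
          div_le_div_of_nonneg_left dist_nonneg (by positivity) (le_trans hsqrt_lb hSlb)
      _ = Real.sqrt 2 * d / (d + 2*m) := by
          rw [div_div_eq_mul_div]; ring
      _ ≤ Real.sqrt 2 * d / W :=
          div_le_div_of_nonneg_left (by positivity) hWpos hWle
      _ = Real.sqrt 2 * (d / W) := mul_div_assoc _ _ _
end
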